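/- arXiv:1810.04210 — 10 statements merged into one kernel-verified Lean document; each statement's English description precedes it below -/
import Mathlib

section
/- Assume that μ is a finite measure and that f is bijective and bi-Lipschitz with respect to μ, i.e., there exist constants c₂ > c₁ > 0 such that c₁·μ(B) ≤ μ(f(B)) ≤ c₂·μ(B) for every B ∈ 𝓑. Then the composition operator T_f on L^p(X,𝓑,μ) is Li-Yorke chaotic if and only if its inverse T_f^{-1} = T_{f^{-1}} is Li-Yorke chaotic. -/
set_option linter.unusedSectionVars false
set_option maxHeartbeats 1000000

open MeasureTheory Filter Set Topology
open scoped ENNReal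

noncomputable section

/-- A continuous self-map `g` of a metric space is *Li-Yorke chaotic* if there is an
uncountable set `S` (a scrambled set) such that every pair of distinct points `x, y ∈ S`
satisfies `liminf dist (gⁿ x) (gⁿ y) = 0` and `limsup dist (gⁿ x) (gⁿ y) > 0`. -/
def LiYorkeChaotic {M : Type*} [PseudoMetricSpace M] (g : M → M) : Prop :=
  ∃ S : Set M, ¬ S.Countable ∧ ∀ x ∈ S, ∀ y ∈ S, x ≠ y →
    (∀ ε > 0, ∃ᶠ n in atTop, dist (g^[n] x) (g^[n] y) < ε) ∧
    (∃ ε > 0, ∃ᶠ n in atTop, ε < dist (g^[n] x) (g^[n] y))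

namespace LiYorkeAux

open Function

variable {X : Type*} [MeasurableSpace X] {μ : Measure X}
variable {f g : X → X} {a b : ℝ≥0∞}

lemma preimage_eq_image_of_inv (hgf : LeftInverse g f) (hfg : RightInverse g f) (A : Set X) :
    f ⁻¹' A = g '' A := by
  ext x
  constructor
  · intro hx
    exact ⟨f x, hx, hgf x⟩
  · rintro ⟨y, hy, rfl⟩
    simpa [hfg y] using hy

lemma iter_image_add (f : X → X) (n m : ℕ) (A : Set X) :
    f^[n + m] '' A = f^[n] '' (f^[m] '' A) := by
  rw [Function.iterate_add f n m, Set.image_comp]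

lemma iter_cancel_image (hgf : LeftInverse g f) (n : ℕ) (A : Set X) :
    g^[n] '' (f^[n] '' A) = A :=
  (hgf.iterate n).image_image A

lemma iter_mixed_cancel_g (hgf : LeftInverse g f) {s n : ℕ} (hsn : s ≤ n) (A : Set X) :
    g^[n] '' (f^[s] '' A) = g^[n - s] '' A := by
  have h : n = (n - s) + s := (Nat.sub_add_cancel hsn).symm
  rw [h, Function.iterate_add g (n-s) s, Set.image_comp, iter_cancel_image hgf]
  simp

lemma iter_mixed_cancel_f (hfg : RightInverse g f) {s n : ℕ} (hsn : s ≤ n) (A : Set X) :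
    f^[n] '' (g^[s] '' A) = f^[n - s] '' A := by
  have h : n = (n - s) + s := (Nat.sub_add_cancel hsn).symm
  rw [h, Function.iterate_add f (n-s) s, Set.image_comp,
    iter_cancel_image (g := f) (f := g) hfg]
  simp

lemma iter_mixed_cancel_f' (hfg : RightInverse g f) {s n : ℕ} (hsn : n ≤ s) (A : Set X) :
    f^[n] '' (g^[s] '' A) = g^[s - n] '' A := by
  have h : s = n + (s - n) := by omega
  rw [h, Function.iterate_add g n (s-n), Set.image_comp]
  rw [iter_cancel_image (g := f) (f := g) hfg]
  simp

lemma iter_preimage_eq_image (hgf : LeftInverse g f) (hfg : RightInverse g f) (n : ℕ)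
    (A : Set X) : (f^[n]) ⁻¹' A = g^[n] '' A :=
  preimage_eq_image_of_inv (hgf.iterate n) (hfg.iterate n) A

lemma iter_preimage_eq_image' (hgf : LeftInverse g f) (hfg : RightInverse g f) (n : ℕ)
    (A : Set X) : (g^[n]) ⁻¹' A = f^[n] '' A :=
  preimage_eq_image_of_inv (f := g^[n]) (g := f^[n]) (hfg.iterate n) (hgf.iterate n) A

section Meas

lemma meas_g_img (hf : Measurable f) (hgf : LeftInverse g f) (hfg : RightInverse g f)
    {A : Set X} (hA : MeasurableSet A) : MeasurableSet (g '' A) := by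
  rw [← preimage_eq_image_of_inv hgf hfg]; exact hf hA

lemma meas_f_iter (hfim : ∀ B : Set X, MeasurableSet B → MeasurableSet (f '' B)) (n : ℕ)
    {A : Set X} (hA : MeasurableSet A) : MeasurableSet (f^[n] '' A) := by
  induction n with
  | zero => simpa using hA
  | succ n ih =>
      rw [Function.iterate_succ', Set.image_comp]
      exact hfim _ ih

lemma meas_g_iter (hf : Measurable f) (hgf : LeftInverse g f) (hfg : RightInverse g f)
    (n : ℕ) {A : Set X} (hA : MeasurableSet A) : MeasurableSet (g^[n] '' A) := by
  rw [← iter_preimage_eq_image hgf hfg]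
  exact hf.iterate n hA

end Meas

section Bounds

variable (hf : Measurable f) (hgf : LeftInverse g f) (hfg : RightInverse g f)
variable (hfim : ∀ B : Set X, MeasurableSet B → MeasurableSet (f '' B))
variable (hbl : ∀ B : Set X, MeasurableSet B → a * μ B ≤ μ (f '' B))
variable (hbu : ∀ B : Set X, MeasurableSet B → μ (f '' B) ≤ b * μ B)

include hf hgf hfg in
lemma g_upper (hbl : ∀ B : Set X, MeasurableSet B → a * μ B ≤ μ (f '' B))
    {A : Set X} (hA : MeasurableSet A) : a * μ (g '' A) ≤ μ A := by
  have h1 := hbl _ (meas_g_img hf hgf hfg hA)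
  rwa [(hfg.image_image A : f '' (g '' A) = A)] at h1

include hf hgf hfg in
lemma g_lower (hbu : ∀ B : Set X, MeasurableSet B → μ (f '' B) ≤ b * μ B)
    {A : Set X} (hA : MeasurableSet A) : μ A ≤ b * μ (g '' A) := by
  have h1 := hbu _ (meas_g_img hf hgf hfg hA)
  rwa [(hfg.image_image A : f '' (g '' A) = A)] at h1

include hfim in
lemma iter_f_lower (hbl : ∀ B : Set X, MeasurableSet B → a * μ B ≤ μ (f '' B))
    (n : ℕ) {A : Set X} (hA : MeasurableSet A) : a ^ n * μ A ≤ μ (f^[n] '' A) := by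
  induction n with
  | zero => simp
  | succ n ih =>
      have h2 : a ^ (n+1) * μ A = a * (a ^ n * μ A) := by ring
      rw [h2, Function.iterate_succ', Set.image_comp]
      calc a * (a ^ n * μ A) ≤ a * μ (f^[n] '' A) := by
            exact mul_le_mul_right ih a
        _ ≤ μ (f '' (f^[n] '' A)) := hbl _ (meas_f_iter hfim n hA)

include hfim in
lemma iter_f_upper (hbu : ∀ B : Set X, MeasurableSet B → μ (f '' B) ≤ b * μ B)
    (n : ℕ) {A : Set X} (hA : MeasurableSet A) : μ (f^[n] '' A) ≤ b ^ n * μ A := by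
  induction n with
  | zero => simp
  | succ n ih =>
      rw [Function.iterate_succ', Set.image_comp]
      calc μ (f '' (f^[n] '' A)) ≤ b * μ (f^[n] '' A) := hbu _ (meas_f_iter hfim n hA)
        _ ≤ b * (b ^ n * μ A) := mul_le_mul_right ih b
        _ = b ^ (n+1) * μ A := by ring

include hf hgf hfg in
lemma iter_g_upper (hbl : ∀ B : Set X, MeasurableSet B → a * μ B ≤ μ (f '' B))
    (n : ℕ) {A : Set X} (hA : MeasurableSet A) : a ^ n * μ (g^[n] '' A) ≤ μ A := by
  induction n generalizing A with
  | zero => simp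
  | succ n ih =>
      have him : g^[n+1] '' A = g^[n] '' (g '' A) := by
        rw [Function.iterate_succ, Set.image_comp]
      rw [him]
      have hgA : MeasurableSet (g '' A) := meas_g_img hf hgf hfg hA
      calc a ^ (n+1) * μ (g^[n] '' (g '' A)) = a * (a ^ n * μ (g^[n] '' (g '' A))) := by ring
        _ ≤ a * μ (g '' A) := mul_le_mul_right (ih hgA) a
        _ ≤ μ A := g_upper hf hgf hfg hbl hA

include hf hgf hfg in
lemma iter_g_lower (hbu : ∀ B : Set X, MeasurableSet B → μ (f '' B) ≤ b * μ B)
    (n : ℕ) {A : Set X} (hA : MeasurableSet A) : μ A ≤ b ^ n * μ (g^[n] '' A) := by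
  induction n generalizing A with
  | zero => simp
  | succ n ih =>
      have him : g^[n+1] '' A = g^[n] '' (g '' A) := by
        rw [Function.iterate_succ, Set.image_comp]
      rw [him]
      have hgA : MeasurableSet (g '' A) := meas_g_img hf hgf hfg hA
      calc μ A ≤ b * μ (g '' A) := g_lower hf hgf hfg hbu hA
        _ ≤ b * (b ^ n * μ (g^[n] '' (g '' A))) := mul_le_mul_right (ih hgA) b
        _ = b ^ (n+1) * μ (g^[n] '' (g '' A)) := by ring

end Bounds


section AE

lemma null_preimage_f (hf : Measurable f) (hgf : LeftInverse g f) (hfg : RightInverse g f)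
    (hbl : ∀ B : Set X, MeasurableSet B → a * μ B ≤ μ (f '' B)) (ha : a ≠ 0)
    {N : Set X} (hN : μ N = 0) : μ (f ⁻¹' N) = 0 := by
  set A := toMeasurable μ N with hA
  have hAm : MeasurableSet A := measurableSet_toMeasurable μ N
  have hA0 : μ A = 0 := by rw [hA, measure_toMeasurable]; exact hN
  have hsub : f ⁻¹' N ⊆ g '' A := by
    rw [← preimage_eq_image_of_inv hgf hfg]
    exact Set.preimage_mono (subset_toMeasurable μ N)
  refine measure_mono_null hsub ?_
  have h1 : a * μ (g '' A) ≤ 0 := by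
    have := g_upper hf hgf hfg hbl hAm
    rw [hA0] at this; exact this
  have := (ENNReal.mul_pos_iff (a := a) (b := μ (g '' A))).mpr
  by_contra hne
  have h2 : 0 < a * μ (g '' A) :=
    ENNReal.mul_pos ha hne
  exact absurd (lt_of_lt_of_le h2 h1) (by simp)

lemma null_preimage_g (hf : Measurable f) (hgf : LeftInverse g f) (hfg : RightInverse g f)
    (hfim : ∀ B : Set X, MeasurableSet B → MeasurableSet (f '' B))
    (hbu : ∀ B : Set X, MeasurableSet B → μ (f '' B) ≤ b * μ B) (hb : b ≠ ∞)
    {N : Set X} (hN : μ N = 0) : μ (g ⁻¹' N) = 0 := by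
  set A := toMeasurable μ N with hA
  have hAm : MeasurableSet A := measurableSet_toMeasurable μ N
  have hA0 : μ A = 0 := by rw [hA, measure_toMeasurable]; exact hN
  have hsub : g ⁻¹' N ⊆ f '' A := by
    rw [← preimage_eq_image_of_inv (f := g) (g := f) hfg hgf]
    exact Set.preimage_mono (subset_toMeasurable μ N)
  refine measure_mono_null hsub ?_
  have h1 : μ (f '' A) ≤ b * μ A := hbu _ hAm
  rw [hA0, mul_zero] at h1
  exact le_antisymm h1 zero_le

lemma null_preimage_iter {h : X → X} (hpre : ∀ N : Set X, μ N = 0 → μ (h ⁻¹' N) = 0)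
    (n : ℕ) {N : Set X} (hN : μ N = 0) : μ ((h^[n]) ⁻¹' N) = 0 := by
  induction n generalizing N with
  | zero => simpa using hN
  | succ n ih =>
      rw [Function.iterate_succ', Set.preimage_comp]
      exact ih (hpre _ hN)

lemma comp_ae_of_null_pre {h : X → X} (hpre : ∀ N : Set X, μ N = 0 → μ (h ⁻¹' N) = 0)
    {u v : X → ℝ} (huv : u =ᵐ[μ] v) : (fun x => u (h x)) =ᵐ[μ] (fun x => v (h x)) := by
  have hN : μ {x | u x ≠ v x} = 0 := by
    rw [Filter.EventuallyEq, ae_iff] at huv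
    exact huv
  have hsub : {x | u (h x) ≠ v (h x)} ⊆ h ⁻¹' {x | u x ≠ v x} := fun x hx => hx
  rw [Filter.EventuallyEq, ae_iff]
  exact measure_mono_null hsub (hpre _ hN)

end AE

section Pow

variable (p : ℝ≥0∞) [Fact (1 ≤ p)] [IsFiniteMeasure μ]

lemma clm_iterate_coe (T : Lp ℝ p μ →L[ℝ] Lp ℝ p μ) (n : ℕ) (z : Lp ℝ p μ) :
    (⇑T)^[n] z = (T ^ n) z := by
  induction n generalizing z with
  | zero => simp
  | succ n ih =>
      rw [Function.iterate_succ_apply, ih (T z), pow_succ]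
      rfl

lemma pow_coeFn_ae {h : X → X} (hpre : ∀ N : Set X, μ N = 0 → μ (h ⁻¹' N) = 0)
    (T : Lp ℝ p μ →L[ℝ] Lp ℝ p μ)
    (hT : ∀ φ : Lp ℝ p μ, ⇑(T φ) =ᵐ[μ] fun x => φ (h x)) (n : ℕ) (φ : Lp ℝ p μ) :
    ⇑((T ^ n) φ) =ᵐ[μ] fun x => φ (h^[n] x) := by
  induction n generalizing φ with
  | zero => simp
  | succ n ih =>
      have h1 : (T ^ (n+1)) φ = (T ^ n) (T φ) := by rw [pow_succ]; rfl
      rw [h1]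
      refine (ih (T φ)).trans ?_
      have h2 : (fun x => (T φ) (h^[n] x)) =ᵐ[μ] fun x => φ (h (h^[n] x)) :=
        comp_ae_of_null_pre (fun N hN => null_preimage_iter hpre n hN) (hT φ)
      refine h2.trans ?_
      have h3 : (fun x => φ (h (h^[n] x))) = fun x => φ (h^[n+1] x) := by
        funext x
        rw [Function.iterate_succ_apply' h n x]
      rw [h3]

end Pow


def LYC {M : Type*} [PseudoMetricSpace M] (g : M → M) : Prop :=
  ∃ S : Set M, ¬ S.Countable ∧ ∀ x ∈ S, ∀ y ∈ S, x ≠ y →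
    (∀ ε > 0, ∃ᶠ n in atTop, dist (g^[n] x) (g^[n] y) < ε) ∧
    (∃ ε > 0, ∃ᶠ n in atTop, ε < dist (g^[n] x) (g^[n] y))

section Thin

variable (p : ℝ≥0∞) [Fact (1 ≤ p)] [IsFiniteMeasure μ]

lemma p_ne_zero : p ≠ 0 := by
  have h1 : (1 : ℝ≥0∞) ≤ p := Fact.out
  intro h; rw [h] at h1; simp at h1

lemma q_pos (hp : p ≠ ∞) : 0 < p.toReal := ENNReal.toReal_pos (p_ne_zero p) hp

lemma exists_thin_set (hp : p ≠ ∞)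
    (hf : Measurable f) (hgf : LeftInverse g f) (hfg : RightInverse g f)
    (hbl : ∀ B : Set X, MeasurableSet B → a * μ B ≤ μ (f '' B)) (ha : a ≠ 0)
    (T : Lp ℝ p μ →L[ℝ] Lp ℝ p μ)
    (hT : ∀ φ : Lp ℝ p μ, ⇑(T φ) =ᵐ[μ] fun x => φ (f x))
    (hLY : LYC (⇑T)) :
    ∃ B : Set X, MeasurableSet B ∧ 0 < μ B ∧
      ∀ ε : ℝ≥0∞, 0 < ε → ∀ N : ℕ, ∃ n ≥ N, μ (g^[n] '' B) < ε := by
  classical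
  obtain ⟨S₀, hS₀c, hS₀⟩ := hLY
  have hnt : S₀.Nontrivial := Set.not_subsingleton_iff.mp (fun hs => hS₀c hs.countable)
  obtain ⟨x, hx, y, hy, hxy⟩ := hnt
  obtain ⟨hdips, hspike⟩ := hS₀ x hx y hy hxy
  set u : Lp ℝ p μ := x - y with hu_def
  have hpre : ∀ N : Set X, μ N = 0 → μ (f ⁻¹' N) = 0 :=
    fun N hN => null_preimage_f hf hgf hfg hbl ha hN
  have key : ∀ n : ℕ, dist ((⇑T)^[n] x) ((⇑T)^[n] y) = ‖(T ^ n) u‖ := by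
    intro n
    rw [clm_iterate_coe, clm_iterate_coe, dist_eq_norm, ← map_sub]
  have hu_ne : u ≠ 0 := by
    intro h0
    obtain ⟨ε₀, hε₀, hfreq⟩ := hspike
    obtain ⟨n, hn⟩ := hfreq.exists
    rw [key n, h0] at hn
    simp at hn
    exact absurd hn (not_lt.mpr hε₀.le)
  set uu : X → ℝ := (Lp.aestronglyMeasurable u).mk _ with huu_def
  have huum : Measurable uu := (Lp.aestronglyMeasurable u).stronglyMeasurable_mk.measurable
  have hu_ae : ⇑u =ᵐ[μ] uu := (Lp.aestronglyMeasurable u).ae_eq_mk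
  -- find a level set of positive measure
  have hlevel : ∃ t : ℝ, 0 < t ∧ μ {z | t ≤ |uu z|} ≠ 0 := by
    by_contra hcon
    push_neg at hcon
    have hnull : ∀ k : ℕ, μ {z | ((k : ℝ) + 1)⁻¹ ≤ |uu z|} = 0 := by
      intro k
      exact hcon (((k : ℝ) + 1)⁻¹) (by positivity)
    have hsub : {z | uu z ≠ 0} ⊆ ⋃ k : ℕ, {z | ((k : ℝ) + 1)⁻¹ ≤ |uu z|} := by
      intro z hz
      have habs : 0 < |uu z| := abs_pos.mpr hz
      obtain ⟨k, hk⟩ := exists_nat_gt (|uu z|)⁻¹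
      refine Set.mem_iUnion.mpr ⟨k, ?_⟩
      have h1 : (|uu z|)⁻¹ < (k : ℝ) + 1 := hk.trans (by linarith)
      have h3 : ((k : ℝ) + 1)⁻¹ < |uu z| := (inv_lt_comm₀ habs (by positivity)).mp h1
      exact h3.le
    have h0 : μ {z | uu z ≠ 0} = 0 :=
      measure_mono_null hsub (by
        rw [measure_iUnion_null_iff]
        exact hnull)
    have : ⇑u =ᵐ[μ] 0 := by
      refine hu_ae.trans ?_
      rw [Filter.EventuallyEq, ae_iff]
      simpa using h0
    exact hu_ne (Lp.eq_zero_iff_ae_eq_zero.mpr this)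
  obtain ⟨t, ht, hBpos⟩ := hlevel
  set B : Set X := {z | t ≤ |uu z|} with hB_def
  have hBm : MeasurableSet B := measurableSet_le measurable_const huum.abs
  refine ⟨B, hBm, pos_iff_ne_zero.mpr hBpos, ?_⟩
  -- main estimate
  set q : ℝ := p.toReal with hq_def
  have hq0 : 0 < q := q_pos p hp
  set tq : ℝ≥0∞ := (ENNReal.ofReal t) ^ q with htq_def
  have htq0 : tq ≠ 0 := by
    have : 0 < ENNReal.ofReal t := ENNReal.ofReal_pos.mpr ht
    exact (ENNReal.rpow_pos this ENNReal.ofReal_ne_top).ne'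
  have htqtop : tq ≠ ∞ := by
    exact ENNReal.rpow_ne_top_of_nonneg hq0.le ENNReal.ofReal_ne_top
  have hest : ∀ n : ℕ, tq * μ (g^[n] '' B) ≤ (eLpNorm (⇑((T ^ n) u)) p μ) ^ q := by
    intro n
    have hchain : ⇑((T ^ n) u) =ᵐ[μ] fun z => uu (f^[n] z) :=
      (pow_coeFn_ae p hpre T hT n u).trans
        (comp_ae_of_null_pre (fun N hN => null_preimage_iter hpre n hN) hu_ae)
    rw [eLpNorm_congr_ae hchain,
      eLpNorm_eq_lintegral_rpow_enorm_toReal (p_ne_zero p) hp, ← hq_def, one_div,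
      ENNReal.rpow_inv_rpow hq0.ne']
    have hpt : ((f^[n]) ⁻¹' B).indicator (fun _ => tq) ≤
        fun z => (‖uu (f^[n] z)‖₊ : ℝ≥0∞) ^ q := by
      intro z
      by_cases hz : z ∈ (f^[n]) ⁻¹' B
      · rw [Set.indicator_of_mem hz]
        have hz' : t ≤ |uu (f^[n] z)| := hz
        refine ENNReal.rpow_le_rpow ?_ hq0.le
        rw [show ((‖uu (f^[n] z)‖₊ : ℝ≥0∞)) = ENNReal.ofReal |uu (f^[n] z)| from Real.enorm_eq_ofReal_abs _]
        exact ENNReal.ofReal_le_ofReal hz'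
      · rw [Set.indicator_of_notMem hz]
        exact zero_le
    calc tq * μ (g^[n] '' B) = tq * μ ((f^[n]) ⁻¹' B) := by
          rw [iter_preimage_eq_image hgf hfg]
      _ = ∫⁻ z, ((f^[n]) ⁻¹' B).indicator (fun _ => tq) z ∂μ := by
          rw [lintegral_indicator_const ((hf.iterate n) hBm)]
      _ ≤ ∫⁻ z, (‖uu (f^[n] z)‖₊ : ℝ≥0∞) ^ q ∂μ := lintegral_mono hpt
  -- conclude
  intro ε hε N
  set ε' : ℝ≥0∞ := min ε 1 with hε'_def
  have hε'0 : ε' ≠ 0 := (lt_min hε one_pos).ne'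
  have hε'top : ε' ≠ ∞ := ne_top_of_le_ne_top ENNReal.one_ne_top (min_le_right _ _)
  set E : ℝ≥0∞ := tq * ε' with hE_def
  have hE0 : E ≠ 0 := by
    simp [hE_def, htq0, hε'0]
  have hEtop : E ≠ ∞ := ENNReal.mul_ne_top htqtop hε'top
  set δ : ℝ := (E ^ (1/q)).toReal with hδ_def
  have hδ0 : 0 < δ := by
    refine ENNReal.toReal_pos ?_ ?_
    · exact (ENNReal.rpow_pos (pos_iff_ne_zero.mpr hE0) hEtop).ne'
    · exact ENNReal.rpow_ne_top_of_nonneg (by positivity) hEtop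
  have hfreq := (hdips δ hδ0)
  rw [frequently_atTop] at hfreq
  obtain ⟨n, hnN, hn⟩ := hfreq N
  refine ⟨n, hnN, ?_⟩
  rw [key n, Lp.norm_def] at hn
  have hfin : eLpNorm (⇑((T ^ n) u)) p μ ≠ ∞ := Lp.eLpNorm_ne_top _
  have hlt : eLpNorm (⇑((T ^ n) u)) p μ < E ^ (1/q) := by
    rw [← ENNReal.toReal_lt_toReal hfin
      (ENNReal.rpow_ne_top_of_nonneg (by positivity) hEtop)] at *
    exact hn
  have hltq : (eLpNorm (⇑((T ^ n) u)) p μ) ^ q < E := by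
    have h1 := ENNReal.rpow_lt_rpow hlt hq0
    rwa [one_div, ENNReal.rpow_inv_rpow hq0.ne'] at h1
  have hfinal : tq * μ (g^[n] '' B) < tq * ε' := lt_of_le_of_lt (hest n) hltq
  have := (ENNReal.mul_lt_mul_iff_right htq0 htqtop).mp hfinal
  exact lt_of_lt_of_le this (min_le_left _ _)

end Thin


section Bithin

lemma ennreal_le_inv_mul {c x y : ℝ≥0∞} (hc0 : c ≠ 0) (hctop : c ≠ ∞) (h : c * x ≤ y) :
    x ≤ c⁻¹ * y := by
  calc x = c⁻¹ * (c * x) := by rw [← mul_assoc, ENNReal.inv_mul_cancel hc0 hctop, one_mul]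
    _ ≤ c⁻¹ * y := mul_le_mul_right h _

variable [IsFiniteMeasure μ]

lemma exists_bithin
    (hf : Measurable f) (hgf : LeftInverse g f) (hfg : RightInverse g f)
    (hfim : ∀ B : Set X, MeasurableSet B → MeasurableSet (f '' B))
    (hbl : ∀ B : Set X, MeasurableSet B → a * μ B ≤ μ (f '' B))
    (hbu : ∀ B : Set X, MeasurableSet B → μ (f '' B) ≤ b * μ B)
    (ha : a ≠ 0) (ha1 : a ≤ 1) (hb1 : 1 ≤ b) (hb : b ≠ ∞)
    {B : Set X} (hBm : MeasurableSet B) (hB : 0 < μ B)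
    (hBdip : ∀ ε : ℝ≥0∞, 0 < ε → ∀ N : ℕ, ∃ n ≥ N, μ (g^[n] '' B) < ε) :
    ∃ C : Set X, MeasurableSet C ∧ 0 < μ C ∧
      (∀ ε : ℝ≥0∞, 0 < ε → ∀ N : ℕ, ∃ n ≥ N, μ (f^[n] '' C) < ε) ∧
      (∀ ε : ℝ≥0∞, 0 < ε → ∀ N : ℕ, ∃ n ≥ N, μ (g^[n] '' C) < ε) := by
  classical
  have hatop : a ≠ ∞ := ne_top_of_le_ne_top ENNReal.one_ne_top ha1
  have hginj : Function.Injective g := hfg.injective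
  -- window sets
  set W : ℕ → Set X := fun L =>
    (⋃ s ∈ Finset.range (L+1), f^[s] '' B) ∪ (⋃ s ∈ Finset.range (L+1), g^[s] '' B) with hW_def
  have hWm : ∀ L, MeasurableSet (W L) := by
    intro L
    refine MeasurableSet.union ?_ ?_
    · exact Finset.measurableSet_biUnion _ (fun s _ => meas_f_iter hfim s hBm)
    · exact Finset.measurableSet_biUnion _ (fun s _ => meas_g_iter hf hgf hfg s hBm)
  have hBW : ∀ L, B ⊆ W L := by
    intro L x hx
    exact Set.mem_union_left _ (Set.mem_biUnion (Finset.mem_range.mpr (Nat.succ_pos L))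
      (by simpa using hx))
  have hWmono : Monotone W := by
    intro L L' hLL'
    refine Set.union_subset_union ?_ ?_ <;>
      exact Set.biUnion_subset_biUnion_left (Finset.range_subset_range.mpr (by omega))
  -- hull
  set Hf : Set X := ⋃ s : ℕ, f^[s] '' B with hHf_def
  set Hg : Set X := ⋃ s : ℕ, g^[s] '' B with hHg_def
  set H : Set X := Hf ∪ Hg with hH_def
  have hHm : MeasurableSet H :=
    (MeasurableSet.iUnion (fun s => meas_f_iter hfim s hBm)).union
      (MeasurableSet.iUnion (fun s => meas_g_iter hf hgf hfg s hBm))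
  have hWH : ∀ L, W L ⊆ H := by
    intro L
    refine Set.union_subset_union ?_ ?_ <;>
      exact Set.iUnion₂_subset (fun s _ => Set.subset_iUnion_of_subset s subset_rfl)
  have hBH : B ⊆ H := (hBW 0).trans (hWH 0)
  have hHW : ∀ x ∈ H, ∃ L, x ∈ W L := by
    intro x hx
    rcases hx with hx | hx
    · obtain ⟨s, hs⟩ := Set.mem_iUnion.mp hx
      exact ⟨s, Set.mem_union_left _ (Set.mem_biUnion (Finset.mem_range.mpr (by omega)) hs)⟩
    · obtain ⟨s, hs⟩ := Set.mem_iUnion.mp hx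
      exact ⟨s, Set.mem_union_right _ (Set.mem_biUnion (Finset.mem_range.mpr (by omega)) hs)⟩
  -- invariance of the hull under g
  have hgf_img : ∀ s : ℕ, 1 ≤ s → g '' (f^[s] '' B) = f^[s-1] '' B := by
    intro s hs
    have h1 : f^[s] '' B = f '' (f^[s-1] '' B) := by
      conv_lhs => rw [show s = (s-1) + 1 by omega]
      rw [Function.iterate_succ' f (s-1), Set.image_comp]
    rw [h1, hgf.image_image]
  have hgH : g '' H = H := by
    apply Set.Subset.antisymm
    · rintro x ⟨y, hy, rfl⟩
      rcases hy with hy | hy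
      · obtain ⟨s, hs⟩ := Set.mem_iUnion.mp hy
        rcases Nat.eq_zero_or_pos s with rfl | hspos
        · simp only [Function.iterate_zero, Set.image_id] at hs
          exact Set.mem_union_right _ (Set.mem_iUnion.mpr ⟨1, by
            simpa using Set.mem_image_of_mem g hs⟩)
        · refine Set.mem_union_left _ (Set.mem_iUnion.mpr ⟨s-1, ?_⟩)
          rw [← hgf_img s hspos]
          exact Set.mem_image_of_mem g hs
      · obtain ⟨s, hs⟩ := Set.mem_iUnion.mp hy
        refine Set.mem_union_right _ (Set.mem_iUnion.mpr ⟨s+1, ?_⟩)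
        rw [Function.iterate_succ' g s, Set.image_comp]
        exact Set.mem_image_of_mem g hs
    · rintro x (hx | hx)
      · obtain ⟨s, hs⟩ := Set.mem_iUnion.mp hx
        have heq : f^[s] '' B = g '' (f^[s+1] '' B) := by
          rw [hgf_img (s+1) (by omega)]
          simp
        rw [heq] at hs
        obtain ⟨y, hy, rfl⟩ := hs
        exact Set.mem_image_of_mem g (Set.mem_union_left _ (Set.mem_iUnion.mpr ⟨s+1, hy⟩))
      · obtain ⟨s, hs⟩ := Set.mem_iUnion.mp hx
        rcases Nat.eq_zero_or_pos s with rfl | hspos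
        · simp only [Function.iterate_zero, Set.image_id] at hs
          have hxg : x = g (f x) := (hgf x).symm
          rw [hxg]
          refine Set.mem_image_of_mem g (Set.mem_union_left _ (Set.mem_iUnion.mpr ⟨1, ?_⟩))
          simpa using Set.mem_image_of_mem f hs
        · have h1 : g^[s] '' B = g '' (g^[s-1] '' B) := by
            conv_lhs => rw [show s = (s-1) + 1 by omega]
            rw [Function.iterate_succ' g (s-1), Set.image_comp]
          rw [h1] at hs
          obtain ⟨y, hy, rfl⟩ := hs
          exact Set.mem_image_of_mem g
            (Set.mem_union_right _ (Set.mem_iUnion.mpr ⟨s-1, hy⟩))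
  have hgHiter : ∀ n : ℕ, g^[n] '' H = H := by
    intro n
    induction n with
    | zero => simp
    | succ n ih => rw [Function.iterate_succ' g n, Set.image_comp, ih, hgH]
  -- window image bound
  set e : ℝ≥0∞ := b + a⁻¹ with he_def
  have he1 : (1 : ℝ≥0∞) ≤ e := le_trans hb1 le_self_add
  have hetop : e ≠ ∞ := by
    refine ENNReal.add_ne_top.mpr ⟨hb, ?_⟩
    simp [ha]
  set K : ℕ → ℝ≥0∞ := fun L => ((2 * (L+1) : ℕ) : ℝ≥0∞) * e ^ L with hK_def
  have hK0 : ∀ L, K L ≠ 0 := by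
    intro L
    refine mul_ne_zero (by positivity) ?_
    exact pow_ne_zero L (by intro h; rw [h] at he1; simp at he1)
  have hKtop : ∀ L, K L ≠ ∞ := by
    intro L
    exact ENNReal.mul_ne_top (ENNReal.natCast_ne_top _) (ENNReal.pow_ne_top hetop)
  have hwin : ∀ L n : ℕ, L ≤ n → μ (g^[n] '' (W L)) ≤ K L * μ (g^[n] '' B) := by
    intro L n hLn
    set r : ℝ≥0∞ := μ (g^[n] '' B) with hr_def
    have hpiece1 : ∀ s, s ≤ L → μ (g^[n] '' (f^[s] '' B)) ≤ e ^ L * r := by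
      intro s hsL
      rw [iter_mixed_cancel_g hgf (hsL.trans hLn)]
      have h1 : μ (g^[n-s] '' B) ≤ b ^ s * μ (g^[s] '' (g^[n-s] '' B)) :=
        iter_g_lower hf hgf hfg hbu s (meas_g_iter hf hgf hfg (n-s) hBm)
      rw [← iter_image_add g s (n-s), show s + (n - s) = n by omega] at h1
      calc μ (g^[n-s] '' B) ≤ b ^ s * r := h1
        _ ≤ e ^ L * r := by
            refine mul_le_mul_left ?_ r
            exact (pow_le_pow_left' le_self_add s).trans (pow_le_pow_right' he1 hsL)
    have hpiece2 : ∀ s, s ≤ L → μ (g^[n] '' (g^[s] '' B)) ≤ e ^ L * r := by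
      intro s hsL
      rw [← iter_image_add g n s]
      have h1 : a ^ s * μ (g^[s] '' (g^[n] '' B)) ≤ r :=
        iter_g_upper hf hgf hfg hbl s (meas_g_iter hf hgf hfg n hBm)
      rw [← iter_image_add g s n, show s + n = n + s by omega] at h1
      have h2 : μ (g^[n+s] '' B) ≤ (a ^ s)⁻¹ * r :=
        ennreal_le_inv_mul (pow_ne_zero s ha) (ENNReal.pow_ne_top hatop) h1
      calc μ (g^[n+s] '' B) ≤ (a ^ s)⁻¹ * r := h2
        _ ≤ e ^ L * r := by
            refine mul_le_mul_left ?_ r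
            rw [ENNReal.inv_pow]
            exact (pow_le_pow_left' le_add_self s).trans (pow_le_pow_right' he1 hsL)
    have hsplit : g^[n] '' (W L) ⊆
        (⋃ s ∈ Finset.range (L+1), g^[n] '' (f^[s] '' B)) ∪
        (⋃ s ∈ Finset.range (L+1), g^[n] '' (g^[s] '' B)) := by
      rintro x ⟨y, hy, rfl⟩
      rcases hy with hy | hy
      · obtain ⟨s, hs, hys⟩ := Set.mem_iUnion₂.mp hy
        exact Set.mem_union_left _
          (Set.mem_biUnion hs (Set.mem_image_of_mem _ hys))
      · obtain ⟨s, hs, hys⟩ := Set.mem_iUnion₂.mp hy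
        exact Set.mem_union_right _
          (Set.mem_biUnion hs (Set.mem_image_of_mem _ hys))
    have hcard : ∀ (A : ℕ → Set X), (∀ s, s ≤ L → μ (g^[n] '' (A s)) ≤ e ^ L * r) →
        μ (⋃ s ∈ Finset.range (L+1), g^[n] '' (A s)) ≤ ((L+1 : ℕ) : ℝ≥0∞) * (e ^ L * r) := by
      intro A hA
      calc μ (⋃ s ∈ Finset.range (L+1), g^[n] '' (A s))
          ≤ ∑ s ∈ Finset.range (L+1), μ (g^[n] '' (A s)) :=
            measure_biUnion_finset_le _ _
        _ ≤ (Finset.range (L+1)).card • (e ^ L * r) :=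
            Finset.sum_le_card_nsmul _ _ _
              (fun s hs => hA s (by simpa using Nat.lt_succ_iff.mp (Finset.mem_range.mp hs)))
        _ = ((L+1 : ℕ) : ℝ≥0∞) * (e ^ L * r) := by
            rw [Finset.card_range, nsmul_eq_mul]
    calc μ (g^[n] '' (W L))
        ≤ μ ((⋃ s ∈ Finset.range (L+1), g^[n] '' (f^[s] '' B)) ∪
            (⋃ s ∈ Finset.range (L+1), g^[n] '' (g^[s] '' B))) := measure_mono hsplit
      _ ≤ μ (⋃ s ∈ Finset.range (L+1), g^[n] '' (f^[s] '' B)) +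
            μ (⋃ s ∈ Finset.range (L+1), g^[n] '' (g^[s] '' B)) := measure_union_le _ _
      _ ≤ ((L+1 : ℕ) : ℝ≥0∞) * (e ^ L * r) + ((L+1 : ℕ) : ℝ≥0∞) * (e ^ L * r) := by
          exact add_le_add (hcard _ hpiece1) (hcard _ hpiece2)
      _ = K L * r := by
          rw [hK_def]
          push_cast
          ring
  -- choose the times
  set m : ℝ≥0∞ := (min (μ B) 1) / 2 with hm_def
  have hmin0 : min (μ B) 1 ≠ 0 := (lt_min hB one_pos).ne'
  have hmintop : min (μ B) 1 ≠ ∞ := ne_top_of_le_ne_top ENNReal.one_ne_top (min_le_right _ _)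
  have hm0 : m ≠ 0 := (ENNReal.div_pos hmin0 ENNReal.ofNat_ne_top).ne'
  have hmlt : m < μ B := lt_of_lt_of_le (ENNReal.half_lt_self hmin0 hmintop) (min_le_left _ _)
  set tgt : ℕ → ℝ≥0∞ := fun k => (K k)⁻¹ * ((2⁻¹ : ℝ≥0∞) ^ (k+1) * m) with htgt_def
  have htgt0 : ∀ k, 0 < tgt k := by
    intro k
    refine ENNReal.mul_pos (ENNReal.inv_ne_zero.mpr (hKtop k)) ?_
    exact mul_ne_zero (pow_ne_zero _ (by simp)) hm0
  set nseq : ℕ → ℕ := fun k => Classical.choose (hBdip (tgt k) (htgt0 k) k) with hnseq_def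
  have hnseq_spec : ∀ k, nseq k ≥ k ∧ μ (g^[nseq k] '' B) < tgt k := by
    intro k
    obtain ⟨h1, h2⟩ := Classical.choose_spec (hBdip (tgt k) (htgt0 k) k)
    exact ⟨h1, h2⟩
  have hbound : ∀ k, μ (g^[nseq k] '' (W k)) ≤ (2⁻¹ : ℝ≥0∞) ^ (k+1) * m := by
    intro k
    calc μ (g^[nseq k] '' (W k)) ≤ K k * μ (g^[nseq k] '' B) :=
          hwin k (nseq k) (hnseq_spec k).1
      _ ≤ K k * tgt k := mul_le_mul_right (hnseq_spec k).2.le _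
      _ = (2⁻¹ : ℝ≥0∞) ^ (k+1) * m := by
          rw [htgt_def, ← mul_assoc, ENNReal.mul_inv_cancel (hK0 k) (hKtop k), one_mul]
  -- the set C
  set P : ℕ → Set X := fun k => g^[nseq k] '' (H \ W k) with hP_def
  set C : Set X := B ∩ ⋂ k, P k with hC_def
  have hPm : ∀ k, MeasurableSet (P k) :=
    fun k => meas_g_iter hf hgf hfg _ (hHm.diff (hWm k))
  have hCm : MeasurableSet C := hBm.inter (MeasurableSet.iInter hPm)
  have hPdiff : ∀ k, P k = H \ g^[nseq k] '' (W k) := by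
    intro k
    show g^[nseq k] '' (H \ W k) = H \ g^[nseq k] '' (W k)
    rw [Set.image_diff (hginj.iterate (nseq k)), hgHiter]
  have hHP : ∀ k, H \ P k ⊆ g^[nseq k] '' (W k) := by
    intro k x hx
    rw [hPdiff k] at hx
    obtain ⟨hxH, hxP⟩ := hx
    by_contra hxg
    exact hxP ⟨hxH, hxg⟩
  have hBdiff : μ (B \ ⋂ k, P k) ≤ m := by
    have hsub : B \ ⋂ k, P k ⊆ ⋃ k, (H \ P k) := by
      intro x hx
      obtain ⟨hxB, hxP⟩ := hx
      rw [Set.mem_iInter] at hxP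
      push_neg at hxP
      obtain ⟨k, hk⟩ := hxP
      exact Set.mem_iUnion.mpr ⟨k, ⟨hBH hxB, hk⟩⟩
    calc μ (B \ ⋂ k, P k) ≤ μ (⋃ k, (H \ P k)) := measure_mono hsub
      _ ≤ ∑' k, μ (H \ P k) := measure_iUnion_le _
      _ ≤ ∑' k, (2⁻¹ : ℝ≥0∞) ^ (k+1) * m := by
          refine ENNReal.tsum_le_tsum (fun k => ?_)
          exact (measure_mono (hHP k)).trans (hbound k)
      _ = (∑' k, (2⁻¹ : ℝ≥0∞) ^ (k+1)) * m := ENNReal.tsum_mul_right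
      _ = m := by
          rw [show (∑' k, (2⁻¹ : ℝ≥0∞) ^ (k+1)) = ∑' k, (2⁻¹ : ℝ≥0∞) ^ k * 2⁻¹ by
              congr 1; funext k; rw [pow_succ]]
          rw [ENNReal.tsum_mul_right, ENNReal.tsum_geometric, ENNReal.one_sub_inv_two,
            inv_inv, ENNReal.mul_inv_cancel two_ne_zero ENNReal.ofNat_ne_top, one_mul]
  -- positivity of C
  have hC : 0 < μ C := by
    by_contra h0
    push_neg at h0
    have hC0 : μ C = 0 := le_antisymm h0 zero_le
    have hsplit : μ B ≤ μ (B \ ⋂ k, P k) + μ C := by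
      calc μ B = μ ((B \ ⋂ k, P k) ∪ (B ∩ ⋂ k, P k)) := by
            rw [Set.diff_union_inter]
        _ ≤ μ (B \ ⋂ k, P k) + μ (B ∩ ⋂ k, P k) := measure_union_le _ _
    rw [hC_def] at hC0
    rw [hC0, add_zero] at hsplit
    exact absurd (hsplit.trans hBdiff) (not_le.mpr hmlt)
  -- decay of the window complements
  have hDanti : Antitone (fun k => H \ W k) :=
    fun i j hij => Set.diff_subset_diff_right (hWmono hij)
  have hDempty : (⋂ k, (H \ W k)) = ∅ := by
    ext x
    simp only [Set.mem_iInter, Set.mem_empty_iff_false, iff_false]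
    intro hx
    obtain ⟨L, hL⟩ := hHW x (hx 0).1
    exact (hx L).2 hL
  have htend : Tendsto (fun k => μ (H \ W k)) atTop (𝓝 0) := by
    have h := tendsto_measure_iInter_atTop (μ := μ)
      (fun k => (hHm.diff (hWm k)).nullMeasurableSet) hDanti ⟨0, measure_ne_top μ _⟩
    rw [hDempty] at h
    simpa [Function.comp_def] using h
  have hdelta : ∀ ε : ℝ≥0∞, 0 < ε → ∃ K₀ : ℕ, ∀ k ≥ K₀, μ (H \ W k) < ε := by
    intro ε hε
    set ε' : ℝ≥0∞ := min ε 1 with hε'_def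
    have hε'0 : ε' ≠ 0 := (lt_min hε one_pos).ne'
    have hε'top : ε' ≠ ∞ := ne_top_of_le_ne_top ENNReal.one_ne_top (min_le_right _ _)
    obtain ⟨K₀, hK₀⟩ := (ENNReal.tendsto_atTop_zero.mp htend) (ε'/2)
      (ENNReal.div_pos hε'0 ENNReal.ofNat_ne_top)
    refine ⟨K₀, fun k hk => ?_⟩
    calc μ (H \ W k) ≤ ε'/2 := hK₀ k hk
      _ < ε' := ENNReal.half_lt_self hε'0 hε'top
      _ ≤ ε := min_le_left _ _
  refine ⟨C, hCm, hC, ?_, ?_⟩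
  · -- forward dips
    intro ε hε N
    obtain ⟨K₀, hK₀⟩ := hdelta ε hε
    set k := max K₀ N with hk_def
    refine ⟨nseq k, le_trans (le_max_right _ _) (hnseq_spec k).1, ?_⟩
    have h1 : C ⊆ P k := fun x hx => (Set.mem_iInter.mp hx.2) k
    have h2 : f^[nseq k] '' (P k) = H \ W k := by
      show f^[nseq k] '' (g^[nseq k] '' (H \ W k)) = H \ W k
      exact iter_cancel_image (f := g) (g := f) hfg (nseq k) (H \ W k)
    have hsubC : f^[nseq k] '' C ⊆ H \ W k := h2 ▸ Set.image_mono h1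
    exact lt_of_le_of_lt (measure_mono hsubC) (hK₀ k (le_max_left _ _))
  · -- backward dips
    intro ε hε N
    obtain ⟨n, hn, hlt⟩ := hBdip ε hε N
    refine ⟨n, hn, lt_of_le_of_lt ?_ hlt⟩
    exact measure_mono (Set.image_mono Set.inter_subset_left)

end Bithin


section Construct

variable (p : ℝ≥0∞) [Fact (1 ≤ p)] [IsFiniteMeasure μ]

lemma lyc_of_bithin (hp : p ≠ ∞)
    (hf : Measurable f) (hg : Measurable g)
    (hgf : LeftInverse g f) (hfg : RightInverse g f)
    (hfim : ∀ B : Set X, MeasurableSet B → MeasurableSet (f '' B))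
    (hbl : ∀ B : Set X, MeasurableSet B → a * μ B ≤ μ (f '' B))
    (hbu : ∀ B : Set X, MeasurableSet B → μ (f '' B) ≤ b * μ B)
    (ha : a ≠ 0) (ha1 : a ≤ 1) (hb1 : 1 ≤ b) (hb : b ≠ ∞)
    (S : Lp ℝ p μ →L[ℝ] Lp ℝ p μ)
    (hS : ∀ φ : Lp ℝ p μ, ⇑(S φ) =ᵐ[μ] fun x => φ (g x))
    {C : Set X} (hCm : MeasurableSet C) (hC : 0 < μ C)
    (hCf : ∀ ε : ℝ≥0∞, 0 < ε → ∀ N : ℕ, ∃ n ≥ N, μ (f^[n] '' C) < ε)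
    (hCg : ∀ ε : ℝ≥0∞, 0 < ε → ∀ N : ℕ, ∃ n ≥ N, μ (g^[n] '' C) < ε) :
    LYC (⇑S) := by
  classical
  have hatop : a ≠ ∞ := ne_top_of_le_ne_top ENNReal.one_ne_top ha1
  have hb0 : b ≠ 0 := by intro h; rw [h] at hb1; simp at hb1
  have hαtop : μ C ≠ ∞ := measure_ne_top μ C
  have hpre_g : ∀ N : Set X, μ N = 0 → μ (g ⁻¹' N) = 0 :=
    fun N hN => null_preimage_g hf hgf hfg hfim hbu hb hN
  -- interleaved choice of spike times (pseq) and dip times (mseq)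
  have hstep : ∀ (k prevm : ℕ), ∃ pm : ℕ × ℕ,
      prevm < pm.1 ∧ μ (g^[pm.1] '' C) < (b ^ prevm)⁻¹ * (2⁻¹ : ℝ≥0∞) ^ k ∧
      pm.1 < pm.2 ∧
      μ (f^[pm.2] '' C) < a ^ pm.1 * ((((k : ℝ≥0∞)) + 1)⁻¹ * (2⁻¹ : ℝ≥0∞) ^ k) := by
    intro k prevm
    have hpos1 : 0 < (b ^ prevm)⁻¹ * (2⁻¹ : ℝ≥0∞) ^ k := by
      refine ENNReal.mul_pos ?_ ?_
      · exact ENNReal.inv_ne_zero.mpr (ENNReal.pow_ne_top hb)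
      · exact pow_ne_zero _ (by simp)
    obtain ⟨pp, hp1, hp2⟩ := hCg _ hpos1 (prevm + 1)
    have hpos2 : 0 < a ^ pp * ((((k : ℝ≥0∞)) + 1)⁻¹ * (2⁻¹ : ℝ≥0∞) ^ k) := by
      refine ENNReal.mul_pos (pow_ne_zero _ ha) ?_
      refine mul_ne_zero ?_ (pow_ne_zero _ (by simp))
      exact ENNReal.inv_ne_zero.mpr (by simp)
    obtain ⟨mm, hm1, hm2⟩ := hCf _ hpos2 (pp + 1)
    exact ⟨⟨pp, mm⟩, by omega, hp2, by omega, hm2⟩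
  choose step hstep1 hstep2 hstep3 hstep4 using hstep
  set F : ℕ → ℕ × ℕ := fun k =>
    Nat.rec (step 0 0) (fun k ih => step (k+1) ih.2) k with hF_def
  set pseq : ℕ → ℕ := fun k => (F k).1 with hpseq_def
  set mseq : ℕ → ℕ := fun k => (F k).2 with hmseq_def
  have hF0 : F 0 = step 0 0 := rfl
  have hFs : ∀ k, F (k+1) = step (k+1) (F k).2 := fun k => rfl
  have hpm : ∀ k, pseq k < mseq k := by
    intro k
    cases k with
    | zero => exact hstep3 0 0
    | succ k => exact hstep3 (k+1) (mseq k)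
  have hmp : ∀ k, mseq k < pseq (k+1) := fun k => hstep1 (k+1) (mseq k)
  have hρs : ∀ k, μ (g^[pseq (k+1)] '' C) < (b ^ mseq k)⁻¹ * (2⁻¹ : ℝ≥0∞) ^ (k+1) :=
    fun k => hstep2 (k+1) (mseq k)
  have hρ0 : μ (g^[pseq 0] '' C) < (b ^ 0)⁻¹ * (2⁻¹ : ℝ≥0∞) ^ 0 := hstep2 0 0
  have hκ : ∀ k, μ (f^[mseq k] '' C) <
      a ^ pseq k * ((((k : ℝ≥0∞)) + 1)⁻¹ * (2⁻¹ : ℝ≥0∞) ^ k) := by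
    intro k
    cases k with
    | zero => exact hstep4 0 0
    | succ k => exact hstep4 (k+1) (mseq k)
  have hmmono : StrictMono mseq := strictMono_nat_of_lt_succ
    (fun k => lt_trans (hmp k) (hpm (k+1)))
  have hpmono : StrictMono pseq := strictMono_nat_of_lt_succ
    (fun k => lt_trans (hpm k) (hmp k))
  have hpm_le : ∀ {j k}, j ≤ k → pseq j ≤ mseq k :=
    fun {j k} hjk => le_trans (hpmono.le_iff_le.mpr hjk) (hpm k).le
  -- the union set U and the vector v
  set G : ℕ → Set X := fun j => g^[pseq j] '' C with hG_def
  have hGm : ∀ j, MeasurableSet (G j) := fun j => meas_g_iter hf hgf hfg _ hCm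
  set U : Set X := ⋃ j, G j with hU_def
  have hUm : MeasurableSet U := MeasurableSet.iUnion hGm
  set v : Lp ℝ p μ := indicatorConstLp p hUm (measure_ne_top μ U) (1 : ℝ) with hv_def
  set q : ℝ := p.toReal with hq_def
  have hq0 : 0 < q := q_pos p hp
  -- norm formula
  have hnorm : ∀ n : ℕ, ‖(S ^ n) v‖ = ((μ (f^[n] '' U)) ^ (1/q)).toReal := by
    intro n
    have h1 : ⇑((S ^ n) v) =ᵐ[μ] fun x => v (g^[n] x) := pow_coeFn_ae p hpre_g S hS n v
    have h2 : (fun x => v (g^[n] x)) =ᵐ[μ]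
        fun x => (U.indicator (fun _ => (1:ℝ))) (g^[n] x) :=
      comp_ae_of_null_pre (fun N hN => null_preimage_iter hpre_g n hN) indicatorConstLp_coeFn
    have h3 : (fun x => (U.indicator (fun _ => (1:ℝ))) (g^[n] x)) =
        ((g^[n]) ⁻¹' U).indicator (fun _ => (1:ℝ)) := by
      funext x
      simp [Set.indicator_apply, Set.mem_preimage]
    rw [Lp.norm_def, eLpNorm_congr_ae (h1.trans h2), h3,
      eLpNorm_indicator_const ((hg.iterate n) hUm) (p_ne_zero p) hp,
      iter_preimage_eq_image' hgf hfg]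
    simp [hq_def]
  -- spikes
  have hspike : ∀ k, μ C ≤ μ (f^[pseq k] '' U) := by
    intro k
    have h1 : C ⊆ f^[pseq k] '' U := by
      have h2 : f^[pseq k] '' (G k) = C := by
        show f^[pseq k] '' (g^[pseq k] '' C) = C
        exact iter_cancel_image (f := g) (g := f) hfg _ C
      rw [← h2]
      exact Set.image_mono (Set.subset_iUnion G k)
    exact measure_mono h1
  -- dips
  have hdip : ∀ k, μ (f^[mseq k] '' U) ≤ (2⁻¹ : ℝ≥0∞) ^ k + (2⁻¹ : ℝ≥0∞) ^ k := by
    intro k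
    have himgU : f^[mseq k] '' U = ⋃ j, f^[mseq k] '' (G j) := by
      rw [hU_def, Set.image_iUnion]
    have hsplitU : f^[mseq k] '' U ⊆
        (⋃ j ∈ Finset.range (k+1), f^[mseq k] '' (G j)) ∪
        (⋃ j : ℕ, f^[mseq k] '' (G (j+(k+1)))) := by
      rw [himgU]
      intro x hx
      obtain ⟨j, hj⟩ := Set.mem_iUnion.mp hx
      rcases le_or_gt j k with hjk | hjk
      · exact Set.mem_union_left _
          (Set.mem_biUnion (Finset.mem_range.mpr (by omega)) hj)
      · refine Set.mem_union_right _ (Set.mem_iUnion.mpr ⟨j - (k+1), ?_⟩)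
        rw [show j - (k+1) + (k+1) = j by omega]
        exact hj
    -- dead components
    have hdead : ∀ j, j ≤ k → μ (f^[mseq k] '' (G j)) ≤
        (((k : ℝ≥0∞)) + 1)⁻¹ * (2⁻¹ : ℝ≥0∞) ^ k := by
      intro j hjk
      have hjm : pseq j ≤ mseq k := hpm_le hjk
      have him : f^[mseq k] '' (G j) = f^[mseq k - pseq j] '' C := by
        show f^[mseq k] '' (g^[pseq j] '' C) = f^[mseq k - pseq j] '' C
        exact iter_mixed_cancel_f hfg hjm C
      rw [him]
      have hlow : a ^ pseq j * μ (f^[mseq k - pseq j] '' C) ≤ μ (f^[mseq k] '' C) := by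
        have heq : f^[mseq k] '' C = f^[pseq j] '' (f^[mseq k - pseq j] '' C) := by
          rw [← iter_image_add f (pseq j) (mseq k - pseq j),
            show pseq j + (mseq k - pseq j) = mseq k by omega]
        rw [heq]
        exact iter_f_lower hfim hbl _ (meas_f_iter hfim _ hCm)
      have hstrict : a ^ pseq j * μ (f^[mseq k - pseq j] '' C) <
          a ^ pseq j * ((((k : ℝ≥0∞)) + 1)⁻¹ * (2⁻¹ : ℝ≥0∞) ^ k) := by
        refine lt_of_le_of_lt hlow (lt_of_lt_of_le (hκ k) ?_)
        exact mul_le_mul_left (pow_le_pow_right_of_le_one' ha1 (hpmono.le_iff_le.mpr hjk)) _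
      exact (le_of_lt ((ENNReal.mul_lt_mul_iff_right (pow_ne_zero _ ha)
        (ENNReal.pow_ne_top hatop)).mp hstrict))
    -- alive components
    have halive : ∀ j : ℕ, μ (f^[mseq k] '' (G (j+(k+1)))) ≤ (2⁻¹ : ℝ≥0∞) ^ (j+(k+1)) := by
      intro j
      set j' : ℕ := j + (k+1) with hj'_def
      have hkj' : k + 1 ≤ j' := by omega
      have hmlep : mseq k ≤ pseq j' :=
        le_trans (hmp k).le (hpmono.le_iff_le.mpr (by omega : k + 1 ≤ j'))
      have him : f^[mseq k] '' (G j') = g^[pseq j' - mseq k] '' C := by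
        show f^[mseq k] '' (g^[pseq j'] '' C) = g^[pseq j' - mseq k] '' C
        exact iter_mixed_cancel_f' hfg hmlep C
      rw [him]
      -- μ (g^[pj'-mk] '' C) ≤ b^(mk) * μ (g^[pj'] '' C)
      have hup : μ (g^[pseq j' - mseq k] '' C) ≤ b ^ mseq k * μ (g^[pseq j'] '' C) := by
        have heq : g^[pseq j'] '' C = g^[mseq k] '' (g^[pseq j' - mseq k] '' C) := by
          rw [← iter_image_add g (mseq k) (pseq j' - mseq k),
            show mseq k + (pseq j' - mseq k) = pseq j' by omega]
        rw [heq]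
        exact iter_g_lower hf hgf hfg hbu _ (meas_g_iter hf hgf hfg _ hCm)
      have hj'pos : j' = (j' - 1) + 1 := by omega
      have hρj' : μ (g^[pseq j'] '' C) < (b ^ mseq (j'-1))⁻¹ * (2⁻¹ : ℝ≥0∞) ^ j' := by
        rw [hj'pos]
        exact hρs (j'-1)
      have hble : b ^ mseq k ≤ b ^ mseq (j'-1) :=
        pow_le_pow_right' hb1 (hmmono.le_iff_le.mpr (by omega))
      calc μ (g^[pseq j' - mseq k] '' C) ≤ b ^ mseq k * μ (g^[pseq j'] '' C) := hup
        _ ≤ b ^ mseq (j'-1) * μ (g^[pseq j'] '' C) := mul_le_mul_left hble _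
        _ ≤ b ^ mseq (j'-1) * ((b ^ mseq (j'-1))⁻¹ * (2⁻¹ : ℝ≥0∞) ^ j') :=
            mul_le_mul_right hρj'.le _
        _ = (2⁻¹ : ℝ≥0∞) ^ j' := by
            rw [← mul_assoc, ENNReal.mul_inv_cancel (pow_ne_zero _ hb0) (ENNReal.pow_ne_top hb),
              one_mul]
    calc μ (f^[mseq k] '' U)
        ≤ μ ((⋃ j ∈ Finset.range (k+1), f^[mseq k] '' (G j)) ∪
            (⋃ j : ℕ, f^[mseq k] '' (G (j+(k+1))))) := measure_mono hsplitU
      _ ≤ μ (⋃ j ∈ Finset.range (k+1), f^[mseq k] '' (G j)) +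
          μ (⋃ j : ℕ, f^[mseq k] '' (G (j+(k+1)))) := measure_union_le _ _
      _ ≤ (2⁻¹ : ℝ≥0∞) ^ k + (2⁻¹ : ℝ≥0∞) ^ k := by
          refine add_le_add ?_ ?_
          · calc μ (⋃ j ∈ Finset.range (k+1), f^[mseq k] '' (G j))
                ≤ ∑ j ∈ Finset.range (k+1), μ (f^[mseq k] '' (G j)) :=
                  measure_biUnion_finset_le _ _
              _ ≤ (Finset.range (k+1)).card • ((((k : ℝ≥0∞)) + 1)⁻¹ * (2⁻¹ : ℝ≥0∞) ^ k) :=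
                  Finset.sum_le_card_nsmul _ _ _
                    (fun j hj => hdead j (Nat.lt_succ_iff.mp (Finset.mem_range.mp hj)))
              _ = (2⁻¹ : ℝ≥0∞) ^ k := by
                  rw [Finset.card_range, nsmul_eq_mul, ← mul_assoc]
                  have hcc : ((k+1 : ℕ) : ℝ≥0∞) * (((k : ℝ≥0∞)) + 1)⁻¹ = 1 := by
                    push_cast
                    exact ENNReal.mul_inv_cancel
                      (ne_of_gt (lt_of_lt_of_le one_pos le_add_self)) (by simp)
                  rw [hcc, one_mul]
          · calc μ (⋃ j : ℕ, f^[mseq k] '' (G (j+(k+1))))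
                ≤ ∑' j : ℕ, μ (f^[mseq k] '' (G (j+(k+1)))) := measure_iUnion_le _
              _ ≤ ∑' j : ℕ, (2⁻¹ : ℝ≥0∞) ^ (j+(k+1)) := ENNReal.tsum_le_tsum halive
              _ = (2⁻¹ : ℝ≥0∞) ^ k := by
                  have h1 : ∀ j : ℕ, (2⁻¹ : ℝ≥0∞) ^ (j+(k+1)) =
                      (2⁻¹:ℝ≥0∞)^j * (2⁻¹:ℝ≥0∞)^(k+1) := fun j => pow_add _ j (k+1)
                  rw [tsum_congr h1, ENNReal.tsum_mul_right, ENNReal.tsum_geometric,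
                    ENNReal.one_sub_inv_two, inv_inv, pow_succ,
                    mul_comm ((2⁻¹:ℝ≥0∞)^k) 2⁻¹, ← mul_assoc,
                    ENNReal.mul_inv_cancel two_ne_zero ENNReal.ofNat_ne_top, one_mul]
  -- norms at spikes and dips
  set σ : ℝ := ((μ C) ^ (1/q)).toReal with hσ_def
  have hσ0 : 0 < σ := ENNReal.toReal_pos
    (ENNReal.rpow_pos hC hαtop).ne' (ENNReal.rpow_ne_top_of_nonneg (by positivity) hαtop)
  have hspike_norm : ∀ k, σ ≤ ‖(S ^ (pseq k)) v‖ := by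
    intro k
    rw [hnorm (pseq k), hσ_def]
    refine ENNReal.toReal_mono ?_ ?_
    · exact ENNReal.rpow_ne_top_of_nonneg (by positivity) (measure_ne_top μ _)
    · exact ENNReal.rpow_le_rpow (hspike k) (by positivity)
  have hdip_norm : ∀ δ : ℝ, 0 < δ → ∀ N : ℕ, ∃ n ≥ N, ‖(S ^ n) v‖ < δ := by
    intro δ hδ N
    set x : ℝ≥0∞ := (ENNReal.ofReal δ) ^ q with hx_def
    have hx0 : x ≠ 0 :=
      (ENNReal.rpow_pos (ENNReal.ofReal_pos.mpr hδ) ENNReal.ofReal_ne_top).ne'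
    obtain ⟨k₁, hk₁⟩ :=
      ENNReal.exists_inv_two_pow_lt (ENNReal.div_pos hx0 (ENNReal.ofNat_ne_top (n := 2))).ne'
    set k := max k₁ N with hk_def
    refine ⟨mseq k, le_trans (le_max_right _ _) hmmono.le_apply, ?_⟩
    have hhalf : (2⁻¹:ℝ≥0∞) ^ k < x / 2 := by
      refine lt_of_le_of_lt ?_ hk₁
      exact pow_le_pow_right_of_le_one' (by
        rw [ENNReal.inv_le_one]
        exact one_le_two) (le_max_left _ _)
    have hmeas_lt : μ (f^[mseq k] '' U) < x := by
      calc μ (f^[mseq k] '' U) ≤ (2⁻¹:ℝ≥0∞) ^ k + (2⁻¹:ℝ≥0∞) ^ k := hdip k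
        _ < x / 2 + x / 2 := ENNReal.add_lt_add hhalf hhalf
        _ = x := ENNReal.add_halves x
    rw [hnorm (mseq k)]
    have h2 : (μ (f^[mseq k] '' U)) ^ (1/q) < ENNReal.ofReal δ := by
      rw [one_div]
      have h4 := ENNReal.rpow_lt_rpow hmeas_lt (by positivity : (0:ℝ) < q⁻¹)
      rwa [hx_def, ENNReal.rpow_rpow_inv hq0.ne'] at h4
    exact ENNReal.toReal_lt_of_lt_ofReal h2
  -- v is nonzero
  have hv0 : v ≠ 0 := by
    intro h0
    have hsp := hspike_norm 0
    rw [h0] at hsp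
    simp only [map_zero, norm_zero] at hsp
    exact absurd hsp (not_le.mpr hσ0)
  -- the scrambled set
  refine ⟨Set.range (fun r : ℝ => r • v), ?_, ?_⟩
  · intro hcount
    have hinj : Function.Injective (fun r : ℝ => r • v) := by
      intro r r' hrr'
      by_contra hne
      have h1 : (r - r') • v = 0 := by
        rw [sub_smul]
        simp only at hrr'
        rw [hrr']
        simp
      rcases smul_eq_zero.mp h1 with h2 | h2
      · exact hne (by linarith [sub_eq_zero.mp h2])
      · exact hv0 h2
    have hcu := hcount.preimage hinj
    rw [Set.preimage_range] at hcu
    exact Cardinal.not_countable_real hcu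
  · rintro x ⟨r, rfl⟩ y ⟨r', rfl⟩ hxy
    have hrr' : r ≠ r' := fun h => hxy (by rw [h])
    have habs : 0 < |r - r'| := abs_pos.mpr (sub_ne_zero.mpr hrr')
    have hdist : ∀ n : ℕ,
        dist ((⇑S)^[n] (r • v)) ((⇑S)^[n] (r' • v)) = |r - r'| * ‖(S ^ n) v‖ := by
      intro n
      rw [clm_iterate_coe, clm_iterate_coe, dist_eq_norm, ← map_sub,
        show r • v - r' • v = (r - r') • v by rw [sub_smul], (S ^ n).map_smul,
        norm_smul, Real.norm_eq_abs]
    constructor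
    · intro ε hε
      rw [frequently_atTop]
      intro N
      obtain ⟨n, hn, hlt⟩ := hdip_norm (ε / |r - r'|) (by positivity) N
      refine ⟨n, hn, ?_⟩
      rw [hdist n]
      calc |r - r'| * ‖(S ^ n) v‖ < |r - r'| * (ε / |r - r'|) :=
            mul_lt_mul_of_pos_left hlt habs
        _ = ε := by field_simp
    · refine ⟨|r - r'| * σ / 2, by positivity, ?_⟩
      rw [frequently_atTop]
      intro N
      refine ⟨pseq N, hpmono.le_apply, ?_⟩
      rw [hdist (pseq N)]
      calc |r - r'| * σ / 2 < |r - r'| * σ := by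
            have hh := half_lt_self (mul_pos habs hσ0)
            linarith
        _ ≤ |r - r'| * ‖(S ^ (pseq N)) v‖ :=
            mul_le_mul_of_nonneg_left (hspike_norm N) habs.le

end Construct


section MainImp

variable (p : ℝ≥0∞) [Fact (1 ≤ p)] [IsFiniteMeasure μ]

lemma main_imp (hp : p ≠ ∞)
    (hf : Measurable f) (hg : Measurable g)
    (hgf : LeftInverse g f) (hfg : RightInverse g f)
    (hfim : ∀ B : Set X, MeasurableSet B → MeasurableSet (f '' B))
    (hbl : ∀ B : Set X, MeasurableSet B → a * μ B ≤ μ (f '' B))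
    (hbu : ∀ B : Set X, MeasurableSet B → μ (f '' B) ≤ b * μ B)
    (ha : a ≠ 0) (ha1 : a ≤ 1) (hb1 : 1 ≤ b) (hb : b ≠ ∞)
    (T S : Lp ℝ p μ →L[ℝ] Lp ℝ p μ)
    (hT : ∀ φ : Lp ℝ p μ, ⇑(T φ) =ᵐ[μ] fun x => φ (f x))
    (hS : ∀ φ : Lp ℝ p μ, ⇑(S φ) =ᵐ[μ] fun x => φ (g x))
    (hLY : LYC (⇑T)) : LYC (⇑S) := by
  obtain ⟨B, hBm, hB, hBdip⟩ := exists_thin_set p hp hf hgf hfg hbl ha T hT hLY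
  obtain ⟨C, hCm, hC, hCf, hCg⟩ :=
    exists_bithin hf hgf hfg hfim hbl hbu ha ha1 hb1 hb hBm hB hBdip
  exact lyc_of_bithin p hp hf hg hgf hfg hfim hbl hbu ha ha1 hb1 hb S hS hCm hC hCf hCg

end MainImp

end LiYorkeAux

open LiYorkeAux in
/-- **Corollary 3.** If `μ` is finite and `f` is bijective and bi-Lipschitz with respect
to `μ`, then `T_f` is Li-Yorke chaotic if and only if so is `T_f⁻¹ = T_{f⁻¹}`. -/
theorem liYorke_iff_liYorke_inv
    {X : Type*} [MeasurableSpace X] (μ : Measure X) (hX : μ Set.univ ≠ 0)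
    [IsFiniteMeasure μ]
    (p : ℝ≥0∞) [Fact (1 ≤ p)] (hp : p ≠ ∞)
    (f : X → X) (hf : Measurable f)
    (hfim : ∀ B : Set X, MeasurableSet B → MeasurableSet (f '' B))
    (hbij : Function.Bijective f)
    (c₁ c₂ : ℝ≥0∞) (hc₁ : 0 < c₁) (hc₁₂ : c₁ < c₂) (hc₂ : c₂ < ∞)
    (hbil : ∀ B : Set X, MeasurableSet B →
      c₁ * μ B ≤ μ (f '' B) ∧ μ (f '' B) ≤ c₂ * μ B)
    (g : X → X) (hgf : Function.LeftInverse g f) (hfg : Function.RightInverse g f)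
    (T S : Lp ℝ p μ →L[ℝ] Lp ℝ p μ)
    (hT : ∀ φ : Lp ℝ p μ, ⇑(T φ) =ᵐ[μ] fun x => φ (f x))
    (hS : ∀ φ : Lp ℝ p μ, ⇑(S φ) =ᵐ[μ] fun x => φ (g x)) :
    LiYorkeChaotic (⇑T) ↔ LiYorkeChaotic (⇑S) := by
  have hXtop : μ Set.univ ≠ ∞ := measure_ne_top μ Set.univ
  have hbl : ∀ B : Set X, MeasurableSet B → c₁ * μ B ≤ μ (f '' B) :=
    fun B hB => (hbil B hB).1
  have hbu : ∀ B : Set X, MeasurableSet B → μ (f '' B) ≤ c₂ * μ B :=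
    fun B hB => (hbil B hB).2
  have ha : c₁ ≠ 0 := hc₁.ne'
  have hb : c₂ ≠ ∞ := hc₂.ne
  have hb0 : c₂ ≠ 0 := (hc₁.trans hc₁₂).ne'
  have hatop : c₁ ≠ ∞ := (hc₁₂.trans hc₂).ne
  have hfuniv : f '' Set.univ = Set.univ := by
    rw [Set.image_univ, Set.range_eq_univ]
    exact hbij.surjective
  have ha1 : c₁ ≤ 1 := by
    have h1 := hbl Set.univ MeasurableSet.univ
    rw [hfuniv] at h1
    have h2 : c₁ * μ Set.univ ≤ 1 * μ Set.univ := by rwa [one_mul]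
    exact (ENNReal.mul_le_mul_iff_left hX hXtop).mp h2
  have hb1 : 1 ≤ c₂ := by
    have h1 := hbu Set.univ MeasurableSet.univ
    rw [hfuniv] at h1
    have h2 : 1 * μ Set.univ ≤ c₂ * μ Set.univ := by rwa [one_mul]
    exact (ENNReal.mul_le_mul_iff_left hX hXtop).mp h2
  have hg : Measurable g := by
    intro t ht
    rw [preimage_eq_image_of_inv (f := g) (g := f) hfg hgf t]
    exact hfim t ht
  have hgim : ∀ B : Set X, MeasurableSet B → MeasurableSet (g '' B) :=
    fun B hB => meas_g_img hf hgf hfg hB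
  have hbl' : ∀ B : Set X, MeasurableSet B → c₂⁻¹ * μ B ≤ μ (g '' B) := by
    intro B hB
    have h1 : μ B ≤ c₂ * μ (g '' B) := g_lower hf hgf hfg hbu hB
    calc c₂⁻¹ * μ B ≤ c₂⁻¹ * (c₂ * μ (g '' B)) := mul_le_mul_right h1 _
      _ = μ (g '' B) := by rw [← mul_assoc, ENNReal.inv_mul_cancel hb0 hb, one_mul]
  have hbu' : ∀ B : Set X, MeasurableSet B → μ (g '' B) ≤ c₁⁻¹ * μ B := by
    intro B hB
    exact ennreal_le_inv_mul ha hatop (g_upper hf hgf hfg hbl hB)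
  have ha' : c₂⁻¹ ≠ 0 := ENNReal.inv_ne_zero.mpr hb
  have ha1' : c₂⁻¹ ≤ 1 := by
    rw [ENNReal.inv_le_one]
    exact hb1
  have hb1' : (1 : ℝ≥0∞) ≤ c₁⁻¹ := by
    rw [ENNReal.one_le_inv]
    exact ha1
  have hb' : c₁⁻¹ ≠ ∞ := ENNReal.inv_ne_top.mpr ha
  constructor
  · intro h
    exact main_imp p hp hf hg hgf hfg hfim hbl hbu ha ha1 hb1 hb T S hT hS h
  · intro h
    exact main_imp (f := g) (g := f) p hp hg hf hfg hgf hgim hbl' hbu' ha' ha1' hb1' hb'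
      S T hS hT h
end
end

section
/- Assume that μ is a finite measure. Then the composition operator T_f on L^p(X,𝓑,μ) is not generically Li-Yorke chaotic. -/
open MeasureTheory Filter Set Topology
open scoped ENNReal

noncomputable section

/-- **Proposition 2.** If `μ` is finite, then the composition operator `T_f` is not
generically Li-Yorke chaotic: there is no residual (comeager) uncountable scrambled set
for `T_f`. -/
theorem not_genericallyLiYorke
    {X : Type*} [MeasurableSpace X] (μ : Measure X) (hX : μ Set.univ ≠ 0)
    [IsFiniteMeasure μ]
    (p : ℝ≥0∞) [Fact (1 ≤ p)] (hp : p ≠ ∞)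
    (f : X → X) (hf : Measurable f)
    (hfim : ∀ B : Set X, MeasurableSet B → MeasurableSet (f '' B))
    (c : ℝ≥0∞) (hc : 0 < c)
    (hcf : ∀ B : Set X, MeasurableSet B → c * μ B ≤ μ (f '' B))
    (T : Lp ℝ p μ →L[ℝ] Lp ℝ p μ)
    (hT : ∀ φ : Lp ℝ p μ, ⇑(T φ) =ᵐ[μ] fun x => φ (f x)) :
    ¬ ∃ S : Set (Lp ℝ p μ), S ∈ residual (Lp ℝ p μ) ∧ ¬ S.Countable ∧
      ∀ x ∈ S, ∀ y ∈ S, x ≠ y →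
        (∀ ε > (0 : ℝ), ∃ᶠ n in atTop, dist ((⇑T)^[n] x) ((⇑T)^[n] y) < ε) ∧
        (∃ ε > (0 : ℝ), ∃ᶠ n in atTop, ε < dist ((⇑T)^[n] x) ((⇑T)^[n] y)) := by
  rintro ⟨S, hSres, -, hscr⟩
  -- preimages of null sets under `f` are null
  have hnull : ∀ E : Set X, μ E = 0 → μ (f ⁻¹' E) = 0 := by
    intro E hE
    set E' := toMeasurable μ E with hE'
    have hE'm : MeasurableSet E' := measurableSet_toMeasurable μ E
    have hE'0 : μ E' = 0 := by rw [measure_toMeasurable]; exact hE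
    have h1 : c * μ (f ⁻¹' E') ≤ μ (f '' (f ⁻¹' E')) := hcf _ (hf hE'm)
    have h2 : μ (f '' (f ⁻¹' E')) ≤ μ E' := measure_mono (Set.image_preimage_subset f E')
    have h3 : c * μ (f ⁻¹' E') = 0 := le_antisymm (h1.trans (h2.trans_eq hE'0)) zero_le
    have h4 : μ (f ⁻¹' E') = 0 := by
      rcases mul_eq_zero.mp h3 with h | h
      · exact absurd h hc.ne'
      · exact h
    exact measure_mono_null (Set.preimage_mono (subset_toMeasurable μ E)) h4
  -- the constant function 1
  set u : Lp ℝ p μ := indicatorConstLp p MeasurableSet.univ (measure_ne_top μ Set.univ) (1 : ℝ)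
    with hu
  have hu1 : ⇑u =ᵐ[μ] fun _ => (1 : ℝ) := by
    have h := indicatorConstLp_coeFn
      (p := p) (hs := MeasurableSet.univ) (hμs := measure_ne_top μ Set.univ) (c := (1 : ℝ))
    rwa [Set.indicator_univ] at h
  -- T u = u
  have hTu : T u = u := by
    apply Lp.ext
    have h1 : (fun x => u (f x)) =ᵐ[μ] fun _ => (1 : ℝ) := by
      have : μ {x | ¬ u (f x) = 1} = 0 := by
        refine measure_mono_null (fun x hx => ?_) (hnull {y | ¬ u y = 1} hu1)
        exact hx
      exact this
    exact (hT u).trans (h1.trans hu1.symm)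
  have hTnu : ∀ n : ℕ, (⇑T)^[n] u = u := by
    intro n
    induction n with
    | zero => simp
    | succ n ih => rw [Function.iterate_succ_apply', ih, hTu]
  -- u ≠ 0
  have hune : u ≠ 0 := by
    intro h
    have h0 : ⇑(0 : Lp ℝ p μ) =ᵐ[μ] fun _ => (0 : ℝ) := Lp.coeFn_zero ℝ p μ
    have : (fun _ => (1 : ℝ)) =ᵐ[μ] fun _ => (0 : ℝ) := (h ▸ hu1).symm.trans h0
    rw [Filter.EventuallyEq, ae_iff] at this
    simp only [one_ne_zero, not_false_iff, Set.setOf_true] at this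
    exact hX this
  -- additivity along iterates
  have hadd : ∀ n : ℕ, ∀ x : Lp ℝ p μ, (⇑T)^[n] (x + u) = (⇑T)^[n] x + u := by
    intro n
    induction n with
    | zero => intro x; simp
    | succ n ih =>
      intro x
      rw [Function.iterate_succ_apply, Function.iterate_succ_apply, map_add, hTu, ih]
  -- find x ∈ S with x + u ∈ S
  have hS' : (fun z : Lp ℝ p μ => z + u) ⁻¹' S ∈ residual (Lp ℝ p μ) := by
    have := (Homeomorph.addRight u).symm.residual_map_eq
    have h2 : Tendsto (fun z : Lp ℝ p μ => z + u) (residual _) (residual _) :=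
      tendsto_residual_of_isOpenMap (continuous_id.add continuous_const)
        (Homeomorph.addRight u).isOpenMap
    exact h2 hSres
  have hmem : (S ∩ (fun z : Lp ℝ p μ => z + u) ⁻¹' S).Nonempty := by
    have hres : S ∩ (fun z : Lp ℝ p μ => z + u) ⁻¹' S ∈ residual (Lp ℝ p μ) :=
      inter_mem hSres hS'
    exact (dense_of_mem_residual hres).nonempty
  obtain ⟨x, hxS, hxuS⟩ := hmem
  have hne : x ≠ x + u := by
    intro h
    exact hune (by simpa using (congrArg (fun z => z - x) h).symm)
  obtain ⟨h1, -⟩ := hscr x hxS (x + u) hxuS hne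
  have hnorm : 0 < ‖u‖ := norm_pos_iff.mpr hune
  have := h1 ‖u‖ hnorm
  have hconst : ∀ n : ℕ, dist ((⇑T)^[n] x) ((⇑T)^[n] (x + u)) = ‖u‖ := by
    intro n
    rw [hadd n x, dist_eq_norm]
    simp
  rcases this.exists with ⟨n, hn⟩
  rw [hconst n] at hn
  exact lt_irrefl _ hn

end
end

section
/- If there exists B ∈ 𝓑 such that μ(B) > 0 and liminf_{k→∞} μ(f^k(B)) = 0, then f admits a backward weakly wandering set W ⊆ B with μ(W) > 0. -/
open MeasureTheory Filter Set Topology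
open scoped ENNReal

noncomputable section

/-- `W` is a *backward weakly wandering set* for `f` if there are positive integers
`k₁ < k₂ < ⋯` such that the sets `W, f^{-k₁}(W), f^{-k₂}(W), …` are pairwise disjoint.
(We encode this via an increasing sequence `k` with `k 0 = 0`.) -/
def BackwardWeaklyWandering {X : Type*} (f : X → X) (W : Set X) : Prop :=
  ∃ k : ℕ → ℕ, StrictMono k ∧ k 0 = 0 ∧
    Pairwise fun i j => Disjoint (f^[k i] ⁻¹' W) (f^[k j] ⁻¹' W)

/-- `W` is a *forward weakly wandering set* for `f` if there are positive integers
`k₁ < k₂ < ⋯` such that the sets `W, f^{k₁}(W), f^{k₂}(W), …` are pairwise disjoint.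
(We encode this via an increasing sequence `k` with `k 0 = 0`.) -/
def ForwardWeaklyWandering {X : Type*} (f : X → X) (W : Set X) : Prop :=
  ∃ k : ℕ → ℕ, StrictMono k ∧ k 0 = 0 ∧
    Pairwise fun i j => Disjoint (f^[k i] '' W) (f^[k j] '' W)

/-- **Lemma 1.** If there exists a measurable set `B` with `μ(B) > 0` and
`liminf_{k → ∞} μ(f^k(B)) = 0`, then `f` admits a backward weakly wandering set
`W ⊆ B` of positive measure. -/
theorem exists_backwardWeaklyWandering
    {X : Type*} [MeasurableSpace X] (μ : Measure X) (hX : μ Set.univ ≠ 0)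
    (f : X → X) (hf : Measurable f)
    (hfim : ∀ B : Set X, MeasurableSet B → MeasurableSet (f '' B))
    (c : ℝ≥0∞) (hc : 0 < c)
    (hcf : ∀ B : Set X, MeasurableSet B → c * μ B ≤ μ (f '' B))
    (B : Set X) (hB : MeasurableSet B) (hB0 : 0 < μ B)
    (h : atTop.liminf (fun k : ℕ => μ (f^[k] '' B)) = 0) :
    ∃ W : Set X, W ⊆ B ∧ MeasurableSet W ∧ 0 < μ W ∧
      BackwardWeaklyWandering f W := by
  classical
  set c' : ℝ≥0∞ := min c 1 with hc'def
  have hc'0 : c' ≠ 0 := by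
    simp [hc'def, lt_min_iff, hc, hc.ne', (pos_iff_ne_zero (a := c')).symm, zero_lt_one]
  have hc'1 : c' ≤ 1 := min_le_right _ _
  have hc'top : c' ≠ ⊤ := (hc'1.trans_lt ENNReal.one_lt_top).ne
  -- measurability of iterated images
  have hmeas : ∀ m : ℕ, MeasurableSet (f^[m] '' B) := by
    intro m
    induction m with
    | zero => simpa using hB
    | succ m ih =>
        rw [Function.iterate_succ', Set.image_comp]
        exact hfim _ ih
  -- one-step growth
  have hstep : ∀ m : ℕ, c' * μ (f^[m] '' B) ≤ μ (f^[m + 1] '' B) := by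
    intro m
    calc c' * μ (f^[m] '' B) ≤ c * μ (f^[m] '' B) :=
          mul_le_mul_left (min_le_left _ _) _
      _ ≤ μ (f '' (f^[m] '' B)) := hcf _ (hmeas m)
      _ = μ (f^[m + 1] '' B) := by rw [Function.iterate_succ', Set.image_comp]
  -- chain growth
  have hchain : ∀ (m d : ℕ), c' ^ d * μ (f^[m] '' B) ≤ μ (f^[m + d] '' B) := by
    intro m d
    induction d with
    | zero => simp
    | succ d ih =>
        calc c' ^ (d + 1) * μ (f^[m] '' B) = c' * (c' ^ d * μ (f^[m] '' B)) := by ring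
          _ ≤ c' * μ (f^[m + d] '' B) := mul_le_mul_right ih _
          _ ≤ μ (f^[m + d + 1] '' B) := hstep _
  -- selection of good times
  have hsel : ∀ (N : ℕ) (δ : ℝ≥0∞), δ ≠ 0 → ∃ m, N < m ∧ μ (f^[m] '' B) < δ := by
    intro N δ hδ
    have h1 : atTop.liminf (fun k : ℕ => μ (f^[k] '' B)) < δ := by
      rw [h]; exact pos_iff_ne_zero.mpr hδ
    have h2 := frequently_lt_of_liminf_lt (by isBoundedDefault) h1
    obtain ⟨m, hm, hm'⟩ := (frequently_atTop.mp h2) (N + 1)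
    exact ⟨m, hm, hm'⟩
  set b : ℝ≥0∞ := min (μ B) 1 with hbdef
  have hb0 : b ≠ 0 := by
    simp [hbdef, lt_min_iff, hB0, hB0.ne', (pos_iff_ne_zero (a := b)).symm, zero_lt_one]
  have hbtop : b ≠ ⊤ := ((min_le_right _ _).trans_lt ENNReal.one_lt_top).ne
  have hbB : b ≤ μ B := min_le_left _ _
  -- existence of the recursive choices
  have hex2 : ∀ (j N : ℕ), ∃ m, N < m ∧
      μ (f^[m] '' B) < c' ^ N * b * (2 : ℝ≥0∞)⁻¹ ^ (2 * j + 4) := by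
    intro j N
    refine hsel N _ ?_
    refine mul_ne_zero (mul_ne_zero (pow_ne_zero _ hc'0) hb0) (pow_ne_zero _ ?_)
    simp
  choose g hg1 hg2 using hex2
  set nseq : ℕ → ℕ := fun j => Nat.rec 0 (fun j ih => g j ih) j with hnseqdef
  have hn0 : nseq 0 = 0 := rfl
  have hnlt : ∀ j, nseq j < nseq (j + 1) := fun j => hg1 j (nseq j)
  have hnbound : ∀ j, μ (f^[nseq (j + 1)] '' B) <
      c' ^ (nseq j) * b * (2 : ℝ≥0∞)⁻¹ ^ (2 * j + 4) := fun j => hg2 j (nseq j)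
  have hmono : StrictMono nseq := strictMono_nat_of_lt_succ hnlt
  -- the wandering set
  set R : Set X := ⋃ j, ⋃ i, ⋃ (_ : i < j), f^[nseq j - nseq i] '' B with hRdef
  set W : Set X := B \ R with hWdef
  have hWB : W ⊆ B := Set.diff_subset
  have hWmeas : MeasurableSet W :=
    hB.diff (MeasurableSet.iUnion fun j => MeasurableSet.iUnion fun i =>
      MeasurableSet.iUnion fun _ => hmeas _)
  -- disjointness
  have hdisj : ∀ i j : ℕ, i < j → Disjoint (f^[nseq i] ⁻¹' W) (f^[nseq j] ⁻¹' W) := by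
    intro i j hij
    rw [Set.disjoint_left]
    intro x hxi hxj
    have hle : nseq i ≤ nseq j := (hmono hij).le
    have hxi' : f^[nseq i] x ∈ W := hxi
    have hxj' : f^[nseq j] x ∈ W := hxj
    have heq : f^[nseq j] x = f^[nseq j - nseq i] (f^[nseq i] x) := by
      rw [← Function.iterate_add_apply, Nat.sub_add_cancel hle]
    have hmem : f^[nseq j] x ∈ f^[nseq j - nseq i] '' B :=
      ⟨f^[nseq i] x, hWB hxi', heq.symm⟩
    exact hxj'.2 (Set.mem_iUnion.mpr ⟨j, Set.mem_iUnion.mpr ⟨i, Set.mem_iUnion.mpr ⟨hij, hmem⟩⟩⟩)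
  -- measure bound on each removed piece
  have hbound : ∀ j i : ℕ, i < j + 1 →
      μ (f^[nseq (j + 1) - nseq i] '' B) ≤ b * (2 : ℝ≥0∞)⁻¹ ^ (2 * j + 4) := by
    intro j i hij
    have hle : nseq i ≤ nseq (j + 1) := (hmono.monotone (Nat.le_of_lt_succ hij)).trans (hnlt j).le
    have hle' : nseq i ≤ nseq j := hmono.monotone (Nat.le_of_lt_succ hij)
    have h1 : c' ^ (nseq i) * μ (f^[nseq (j + 1) - nseq i] '' B) ≤ μ (f^[nseq (j + 1)] '' B) := by
      have := hchain (nseq (j + 1) - nseq i) (nseq i)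
      rwa [Nat.sub_add_cancel hle] at this
    have h2 : c' ^ (nseq j) ≤ c' ^ (nseq i) := by
      rw [← Nat.sub_add_cancel hle', pow_add]
      exact mul_le_of_le_one_left' (pow_le_one' hc'1 _)
    have h3 : c' ^ (nseq i) * μ (f^[nseq (j + 1) - nseq i] '' B) ≤
        c' ^ (nseq i) * (b * (2 : ℝ≥0∞)⁻¹ ^ (2 * j + 4)) := by
      refine h1.trans ((hnbound j).le.trans ?_)
      rw [mul_assoc]
      exact mul_le_mul_left h2 _
    exact (ENNReal.mul_le_mul_iff_right (pow_ne_zero _ hc'0) (ENNReal.pow_ne_top hc'top)).mp h3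
  -- measure bound per stage
  have hTj : ∀ j : ℕ, μ (⋃ i, ⋃ (_ : i < j), f^[nseq j - nseq i] '' B) ≤
      b * (2 : ℝ≥0∞)⁻¹ ^ (j + 2) := by
    intro j
    match j with
    | 0 => simp
    | j + 1 =>
      have hunion : (⋃ i, ⋃ (_ : i < j + 1), f^[nseq (j + 1) - nseq i] '' B) =
          ⋃ i ∈ Finset.range (j + 1), f^[nseq (j + 1) - nseq i] '' B := by
        simp [Finset.mem_range]
      rw [hunion]
      calc μ (⋃ i ∈ Finset.range (j + 1), f^[nseq (j + 1) - nseq i] '' B)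
          ≤ ∑ i ∈ Finset.range (j + 1), μ (f^[nseq (j + 1) - nseq i] '' B) :=
            measure_biUnion_finset_le _ _
        _ ≤ ∑ i ∈ Finset.range (j + 1), b * (2 : ℝ≥0∞)⁻¹ ^ (2 * j + 4) :=
            Finset.sum_le_sum fun i hi => hbound j i (Finset.mem_range.mp hi)
        _ = (j + 1 : ℕ) * (b * (2 : ℝ≥0∞)⁻¹ ^ (2 * j + 4)) := by
            rw [Finset.sum_const, Finset.card_range, nsmul_eq_mul]
        _ ≤ (2 : ℝ≥0∞) ^ (j + 1) * (b * (2 : ℝ≥0∞)⁻¹ ^ (2 * j + 4)) := by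
            refine mul_le_mul_left ?_ _
            have : ((j + 1 : ℕ) : ℝ≥0∞) ≤ ((2 ^ (j + 1) : ℕ) : ℝ≥0∞) := by
              exact_mod_cast Nat.le_of_lt Nat.lt_two_pow_self
            simpa using this
        _ = b * ((2 : ℝ≥0∞) ^ (j + 1) * (2 : ℝ≥0∞)⁻¹ ^ (j + 1) * (2 : ℝ≥0∞)⁻¹ ^ (j + 3)) := by
            rw [show 2 * j + 4 = (j + 1) + (j + 3) by ring, pow_add]; ring
        _ = b * (2 : ℝ≥0∞)⁻¹ ^ (j + 1 + 2) := by
            rw [← mul_pow, ENNReal.mul_inv_cancel (by norm_num) (by norm_num), one_pow, one_mul]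
  -- total removed measure
  have hR : μ R ≤ b * 2⁻¹ := by
    calc μ R ≤ ∑' j : ℕ, μ (⋃ i, ⋃ (_ : i < j), f^[nseq j - nseq i] '' B) :=
          measure_iUnion_le _
      _ ≤ ∑' j : ℕ, b * (2 : ℝ≥0∞)⁻¹ ^ (j + 2) := ENNReal.tsum_le_tsum hTj
      _ = b * 2⁻¹ := by
          have h4 : ∑' j : ℕ, (2 : ℝ≥0∞)⁻¹ ^ (j + 2) = 2⁻¹ := by
            simp_rw [pow_add]
            rw [ENNReal.tsum_mul_right, ENNReal.tsum_geometric, ENNReal.one_sub_inv_two, inv_inv,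
              pow_two, ← mul_assoc, ENNReal.mul_inv_cancel two_ne_zero ENNReal.ofNat_ne_top, one_mul]
          rw [ENNReal.tsum_mul_left, h4]
  have hWpos : 0 < μ W := by
    rcases eq_or_ne (μ W) 0 with hW0 | hW0
    · exfalso
      have hsub : B ⊆ W ∪ R := fun x hx => by
        by_cases hxR : x ∈ R
        · exact Or.inr hxR
        · exact Or.inl ⟨hx, hxR⟩
      have : μ B ≤ μ W + μ R := (measure_mono hsub).trans (measure_union_le _ _)
      rw [hW0, zero_add] at this
      have hlt : b * 2⁻¹ < b := by
        have := ENNReal.half_lt_self hb0 hbtop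
        rwa [ENNReal.div_eq_inv_mul, mul_comm] at this
      exact absurd ((this.trans hR).trans_lt hlt) (not_lt.mpr hbB)
    · exact pos_iff_ne_zero.mpr hW0
  refine ⟨W, hWB, hWmeas, hWpos, nseq, hmono, hn0, ?_⟩
  intro i j hij
  rcases hij.lt_or_gt with hlt | hlt
  · exact hdisj i j hlt
  · exact (hdisj j i hlt).symm
end
end

section
/- Assume that f is injective. If there exists B ∈ 𝓑 such that 0 < μ(B) < ∞ and liminf_{k→∞} μ(f^{-k}(B)) = 0, then f admits a forward weakly wandering set W ⊆ B with μ(W) > 0. -/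
open MeasureTheory Filter Set Topology
open scoped ENNReal

noncomputable section

/-- **Lemma 2.** Assume `f` injective. If there exists a measurable set `B` with
`0 < μ(B) < ∞` and `liminf_{k → ∞} μ(f^{-k}(B)) = 0`, then `f` admits a forward weakly
wandering set `W ⊆ B` of positive measure. -/
theorem exists_forwardWeaklyWandering
    {X : Type*} [MeasurableSpace X] (μ : Measure X) (hX : μ Set.univ ≠ 0)
    (f : X → X) (hf : Measurable f)
    (hfim : ∀ B : Set X, MeasurableSet B → MeasurableSet (f '' B))
    (c : ℝ≥0∞) (hc : 0 < c)
    (hcf : ∀ B : Set X, MeasurableSet B → c * μ B ≤ μ (f '' B))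
    (hinj : Function.Injective f)
    (B : Set X) (hB : MeasurableSet B) (hB0 : 0 < μ B) (hBfin : μ B < ∞)
    (h : atTop.liminf (fun k : ℕ => μ (f^[k] ⁻¹' B)) = 0) :
    ∃ W : Set X, W ⊆ B ∧ MeasurableSet W ∧ 0 < μ W ∧
      ForwardWeaklyWandering f W := by
  set c' : ℝ≥0∞ := min c 1 with hc'def
  have hc'0 : c' ≠ 0 := (lt_min hc zero_lt_one).ne'
  have hc'le1 : c' ≤ 1 := min_le_right _ _
  have hc'top : c' ≠ ∞ := ne_top_of_le_ne_top ENNReal.one_ne_top hc'le1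
  have hc'c : c' ≤ c := min_le_left _ _
  -- key measure inequality for preimages
  have key : ∀ (a : ℕ) (A : Set X), MeasurableSet A → c'^a * μ (f^[a] ⁻¹' A) ≤ μ A := by
    intro a
    induction a with
    | zero => intro A hA; simp
    | succ n ih =>
      intro A hA
      have h1 : f^[n+1] ⁻¹' A = f^[n] ⁻¹' (f ⁻¹' A) := by
        rw [Function.iterate_succ']; rfl
      have h2 := ih (f ⁻¹' A) (hf hA)
      have h3 : c * μ (f ⁻¹' A) ≤ μ A :=
        (hcf _ (hf hA)).trans (measure_mono (Set.image_preimage_subset f A))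
      calc c'^(n+1) * μ (f^[n+1] ⁻¹' A)
          = c' * (c'^n * μ (f^[n] ⁻¹' (f ⁻¹' A))) := by rw [h1, pow_succ]; ring
        _ ≤ c' * μ (f ⁻¹' A) := mul_le_mul_right h2 _
        _ ≤ c * μ (f ⁻¹' A) := mul_le_mul_left hc'c _
        _ ≤ μ A := h3
  -- from the liminf hypothesis: small preimages exist
  have hfreq : ∀ ε : ℝ≥0∞, 0 < ε → ∃ m, 1 ≤ m ∧ μ (f^[m] ⁻¹' B) < ε := by
    intro ε hε
    have hlt : atTop.liminf (fun k : ℕ => μ (f^[k] ⁻¹' B)) < ε := h ▸ hε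
    have hfr := Filter.frequently_lt_of_liminf_lt (by isBoundedDefault) hlt
    obtain ⟨m, hm1, hm2⟩ := (Filter.frequently_atTop.mp hfr) 1
    exact ⟨m, hm1, hm2⟩
  have hchoice : ∀ ε : ℝ≥0∞, ∃ m, 1 ≤ m ∧ (0 < ε → μ (f^[m] ⁻¹' B) < ε) := by
    intro ε
    by_cases hε : 0 < ε
    · obtain ⟨m, h1, h2⟩ := hfreq ε hε
      exact ⟨m, h1, fun _ => h2⟩
    · exact ⟨1, le_refl 1, fun hh => absurd hh hε⟩
  choose F hF1 hF2 using hchoice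
  set q : ℝ≥0∞ := 2⁻¹ with hqdef
  -- the sequence k
  let k : ℕ → ℕ := fun n => Nat.rec 0 (fun i ki => ki + F (c'^ki * (μ B * q^(2*i+2)))) n
  have hk0 : k 0 = 0 := rfl
  have hksucc : ∀ i, k (i+1) = k i + F (c'^(k i) * (μ B * q^(2*i+2))) := fun i => rfl
  have hkmono : StrictMono k := by
    apply strictMono_nat_of_lt_succ
    intro i
    rw [hksucc i]
    have := hF1 (c'^(k i) * (μ B * q^(2*i+2)))
    omega
  have hq0 : q ≠ 0 := by simp [hqdef]
  -- the per-pair bound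
  have hpair : ∀ j i, i < j + 1 → μ (f^[k (j+1) - k i] ⁻¹' B) < μ B * q^(2*(j+1)) := by
    intro j i hij
    have hile : k i ≤ k j := hkmono.le_iff_le.mpr (by omega)
    set m := F (c'^(k j) * (μ B * q^(2*j+2))) with hmdef
    have hεpos : 0 < c'^(k j) * (μ B * q^(2*j+2)) := by
      refine ENNReal.mul_pos (pow_ne_zero _ hc'0) ?_
      exact (ENNReal.mul_pos hB0.ne' (pow_ne_zero _ hq0)).ne'
    have hm := hF2 _ hεpos
    set a := k j - k i with hadef
    have hd : k (j+1) - k i = m + a := by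
      rw [hksucc j]; omega
    have hcomp : f^[k (j+1) - k i] ⁻¹' B = f^[a] ⁻¹' (f^[m] ⁻¹' B) := by
      rw [hd, Function.iterate_add]; rfl
    have hkey := key a (f^[m] ⁻¹' B) ((hf.iterate m) hB)
    have hstep : c'^a * μ (f^[k (j+1) - k i] ⁻¹' B) < c'^a * (μ B * q^(2*(j+1))) := by
      rw [hcomp]
      refine lt_of_le_of_lt hkey (lt_of_lt_of_le hm ?_)
      have : c'^(k j) ≤ c'^a := pow_le_pow_of_le_one zero_le hc'le1 (by omega)
      calc c'^(k j) * (μ B * q^(2*j+2)) ≤ c'^a * (μ B * q^(2*j+2)) :=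
            mul_le_mul_left this _
        _ = c'^a * (μ B * q^(2*(j+1))) := by ring_nf
    exact (ENNReal.mul_lt_mul_iff_right (pow_ne_zero _ hc'0) (ENNReal.pow_ne_top hc'top)).mp hstep
  -- the union to remove
  set U : Set X := ⋃ (j : ℕ), ⋃ (i : ℕ), ⋃ (_ : i < j + 1), f^[k (j+1) - k i] ⁻¹' B with hUdef
  have hUmeas : MeasurableSet U := by
    refine MeasurableSet.iUnion fun j => MeasurableSet.iUnion fun i =>
      MeasurableSet.iUnion fun _ => (hf.iterate _) hB
  have hUsmall : μ U ≤ μ B * 2⁻¹ := by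
    have h1 : μ U ≤ ∑' j : ℕ, μ (⋃ (i : ℕ), ⋃ (_ : i < j + 1), f^[k (j+1) - k i] ⁻¹' B) :=
      measure_iUnion_le _
    have h2 : ∀ j : ℕ, μ (⋃ (i : ℕ), ⋃ (_ : i < j + 1), f^[k (j+1) - k i] ⁻¹' B)
        ≤ μ B * q^(j+2) := by
      intro j
      have heq : (⋃ (i : ℕ), ⋃ (_ : i < j + 1), f^[k (j+1) - k i] ⁻¹' B)
          = ⋃ i ∈ Finset.range (j+1), f^[k (j+1) - k i] ⁻¹' B := by
        ext x; simp [Finset.mem_range]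
      rw [heq]
      calc μ (⋃ i ∈ Finset.range (j+1), f^[k (j+1) - k i] ⁻¹' B)
          ≤ ∑ i ∈ Finset.range (j+1), μ (f^[k (j+1) - k i] ⁻¹' B) :=
            measure_biUnion_finset_le _ _
        _ ≤ ∑ i ∈ Finset.range (j+1), μ B * q^(2*(j+1)) :=
            Finset.sum_le_sum fun i hi => (hpair j i (Finset.mem_range.mp hi)).le
        _ = (j+1 : ℕ) * (μ B * q^(2*(j+1))) := by
            rw [Finset.sum_const, Finset.card_range, nsmul_eq_mul]
        _ ≤ μ B * q^(j+2) := by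
            have hcast : ((j+1 : ℕ) : ℝ≥0∞) ≤ 2^j := by
              have : j < 2^j := Nat.lt_two_pow_self
              calc ((j+1 : ℕ) : ℝ≥0∞) ≤ ((2^j : ℕ) : ℝ≥0∞) := by exact_mod_cast this
                _ = 2^j := by push_cast; ring
            calc ((j+1 : ℕ) : ℝ≥0∞) * (μ B * q^(2*(j+1)))
                ≤ 2^j * (μ B * q^(2*(j+1))) := mul_le_mul_left hcast _
              _ = (2^j * q^j) * (μ B * q^(j+2)) := by
                  rw [show 2*(j+1) = j + (j+2) by ring, pow_add]; ring
              _ = μ B * q^(j+2) := by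
                  have : (2:ℝ≥0∞)^j * q^j = 1 := by
                    rw [hqdef, ← mul_pow, ENNReal.mul_inv_cancel two_ne_zero ENNReal.ofNat_ne_top,
                      one_pow]
                  rw [this, one_mul]
    calc μ U ≤ ∑' j : ℕ, μ (⋃ (i : ℕ), ⋃ (_ : i < j + 1), f^[k (j+1) - k i] ⁻¹' B) := h1
      _ ≤ ∑' j : ℕ, μ B * q^(j+2) := ENNReal.tsum_le_tsum h2
      _ = μ B * 2⁻¹ := by
          have : ∀ j : ℕ, μ B * q^(j+2) = (μ B * q^2) * q^j := by
            intro j; rw [pow_add]; ring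
          rw [tsum_congr this, ENNReal.tsum_mul_left, ENNReal.tsum_geometric]
          have h12 : (1 : ℝ≥0∞) - 2⁻¹ = 2⁻¹ := ENNReal.one_sub_inv_two
          rw [hqdef, h12, inv_inv]
          rw [show ((2:ℝ≥0∞)⁻¹)^2 = 2⁻¹ * 2⁻¹ from sq 2⁻¹]
          rw [mul_assoc, mul_assoc, ENNReal.inv_mul_cancel two_ne_zero ENNReal.ofNat_ne_top,
            mul_one]
  refine ⟨B \ U, Set.diff_subset, hB.diff hUmeas, ?_, ?_⟩
  · -- positive measure
    rw [pos_iff_ne_zero]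
    intro h0
    have hle : μ B ≤ μ (B \ U) + μ U :=
      (measure_mono (by intro x hx; by_cases hxU : x ∈ U; exacts [Set.mem_union_right _ hxU,
        Set.mem_union_left _ ⟨hx, hxU⟩])).trans (measure_union_le _ _)
    rw [h0, zero_add] at hle
    have : μ B ≤ μ B * 2⁻¹ := hle.trans hUsmall
    have hhalf : μ B * 2⁻¹ < μ B := by
      calc μ B * 2⁻¹ = μ B / 2 := by rw [div_eq_mul_inv]
        _ < μ B := ENNReal.half_lt_self hB0.ne' hBfin.ne
    exact absurd this hhalf.not_ge
  · -- forward weakly wandering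
    refine ⟨k, hkmono, hk0, ?_⟩
    have hmain : ∀ i j, i < j → Disjoint (f^[k i] '' (B \ U)) (f^[k j] '' (B \ U)) := by
      intro i j hij
      rw [Set.disjoint_left]
      rintro x ⟨a, haW, hax⟩ ⟨b, hbW, hbx⟩
      have hkij : k i ≤ k j := (hkmono hij).le
      have hcomp : f^[k j] b = f^[k i] (f^[k j - k i] b) := by
        rw [← Function.iterate_add_apply, Nat.add_sub_cancel' hkij]
      have hiter_inj : Function.Injective (f^[k i]) := hinj.iterate _
      have hab : f^[k j - k i] b = a := hiter_inj (by rw [← hcomp, hbx, hax])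
      have hbB : b ∈ f^[k j - k i] ⁻¹' B := by
        simp only [Set.mem_preimage]
        rw [hab]; exact haW.1
      have hbU : b ∈ U := by
        obtain ⟨j', rfl⟩ : ∃ j', j = j' + 1 := ⟨j - 1, by omega⟩
        rw [hUdef]
        exact Set.mem_iUnion.mpr ⟨j', Set.mem_iUnion.mpr ⟨i, Set.mem_iUnion.mpr ⟨hij, hbB⟩⟩⟩
      exact hbW.2 hbU
    intro i j hij
    rcases lt_or_gt_of_ne hij with h' | h'
    · exact hmain i j h'
    · exact (hmain j i h').symm
end
end

section
/- Assume that f is injective. If B ∈ 𝓑 satisfies 0 < μ(B) < ∞ and liminf_{k→∞} μ(f^{-k}(B)) = 0, then for every δ > 0 there exists a forward weakly wandering set W ⊆ B for f such that μ(B \ W) < δ. -/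
open MeasureTheory Filter Set Topology
open scoped ENNReal

noncomputable section

/-- **Remark (refinement of Lemma 2).** Assume `f` injective. If `B` is measurable with
`0 < μ(B) < ∞` and `liminf_{k → ∞} μ(f^{-k}(B)) = 0`, then for every `δ > 0` there is a
forward weakly wandering set `W ⊆ B` for `f` with `μ(B \ W) < δ`. -/
theorem exists_forwardWeaklyWandering_diff_lt
    {X : Type*} [MeasurableSpace X] (μ : Measure X) (hX : μ Set.univ ≠ 0)
    (f : X → X) (hf : Measurable f)
    (hfim : ∀ B : Set X, MeasurableSet B → MeasurableSet (f '' B))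
    (c : ℝ≥0∞) (hc : 0 < c)
    (hcf : ∀ B : Set X, MeasurableSet B → c * μ B ≤ μ (f '' B))
    (hinj : Function.Injective f)
    (B : Set X) (hB : MeasurableSet B) (hB0 : 0 < μ B) (hBfin : μ B < ∞)
    (h : atTop.liminf (fun k : ℕ => μ (f^[k] ⁻¹' B)) = 0) :
    ∀ δ : ℝ≥0∞, 0 < δ →
      ∃ W : Set X, W ⊆ B ∧ MeasurableSet W ∧ μ (B \ W) < δ ∧
        ForwardWeaklyWandering f W := by
  intro δ hδ
  -- normalize δ and c
  set δ' : ℝ≥0∞ := min δ 1 with hδ'def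
  have hδ'pos : 0 < δ' := lt_min hδ zero_lt_one
  have hδ'ne0 : δ' ≠ 0 := hδ'pos.ne'
  have hδ'netop : δ' ≠ ∞ := ((min_le_right δ 1).trans_lt ENNReal.one_lt_top).ne
  have hδ'le : δ' ≤ δ := min_le_left _ _
  set c' : ℝ≥0∞ := min c 1 with hc'def
  have hc'ne0 : c' ≠ 0 := (lt_min hc zero_lt_one).ne'
  have hc'le1 : c' ≤ 1 := min_le_right _ _
  have hc'netop : c' ≠ ∞ := (hc'le1.trans_lt ENNReal.one_lt_top).ne
  have hinv1 : (1 : ℝ≥0∞) ≤ c'⁻¹ := ENNReal.one_le_inv.mpr hc'le1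
  -- step lemma
  have hstep : ∀ S : Set X, MeasurableSet S → μ (f ⁻¹' S) ≤ c'⁻¹ * μ S := by
    intro S hS
    have h1 : c' * μ (f ⁻¹' S) ≤ μ S :=
      calc c' * μ (f ⁻¹' S) ≤ c * μ (f ⁻¹' S) := mul_le_mul_left (min_le_left _ _) _
        _ ≤ μ (f '' (f ⁻¹' S)) := hcf _ (hf hS)
        _ ≤ μ S := measure_mono (Set.image_preimage_subset f S)
    calc μ (f ⁻¹' S) = c'⁻¹ * (c' * μ (f ⁻¹' S)) := by
          rw [← mul_assoc, ENNReal.inv_mul_cancel hc'ne0 hc'netop, one_mul]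
      _ ≤ c'⁻¹ * μ S := mul_le_mul_right h1 _
  have hApre : ∀ (a : ℕ) (A : Set X), MeasurableSet A →
      μ (f^[a] ⁻¹' A) ≤ c'⁻¹ ^ a * μ A := by
    intro a
    induction a with
    | zero => intro A _; simp
    | succ n ih =>
      intro A hA
      have h1 : f^[n+1] ⁻¹' A = f^[n] ⁻¹' (f ⁻¹' A) := by
        rw [Function.iterate_succ']; rfl
      calc μ (f^[n+1] ⁻¹' A) = μ (f^[n] ⁻¹' (f ⁻¹' A)) := by rw [h1]
        _ ≤ c'⁻¹ ^ n * μ (f ⁻¹' A) := ih _ (hf hA)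
        _ ≤ c'⁻¹ ^ n * (c'⁻¹ * μ A) := mul_le_mul_right (hstep A hA) _
        _ = c'⁻¹ ^ (n+1) * μ A := by rw [pow_succ, mul_assoc]
  -- frequently small preimage measure
  have hfreq : ∀ ε : ℝ≥0∞, 0 < ε → ∀ N : ℕ, ∃ mm, N ≤ mm ∧ μ (f^[mm] ⁻¹' B) < ε := by
    intro ε hε N
    have hfr : ∃ᶠ mth in atTop, μ (f^[mth] ⁻¹' B) < ε :=
      frequently_lt_of_liminf_lt (by isBoundedDefault) (by rw [h]; exact hε)
    obtain ⟨mm, hmm, h2⟩ := (frequently_atTop.mp hfr) N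
    exact ⟨mm, hmm, h2⟩
  set η : ℕ → ℝ≥0∞ := fun j => δ' * 2⁻¹ ^ (2*j+2) with hηdef
  have hηpos : ∀ j, 0 < η j := by
    intro j
    refine ENNReal.mul_pos hδ'ne0 (pow_ne_zero _ ?_)
    simp
  have hex : ∀ (j K : ℕ), ∃ mm, 1 ≤ mm ∧ μ (f^[mm] ⁻¹' B) < c' ^ K * η j := by
    intro j K
    refine hfreq _ ?_ 1
    exact ENNReal.mul_pos (pow_ne_zero _ hc'ne0) (hηpos j).ne'
  choose m hm1 hm2 using hex
  set K : ℕ → ℕ := fun n => Nat.rec 0 (fun j Kj => Kj + m (j+1) Kj) n with hKdef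
  have hKsucc : ∀ j, K (j+1) = K j + m (j+1) (K j) := fun j => rfl
  have hKmono : StrictMono K := by
    apply strictMono_nat_of_lt_succ
    intro n
    have := hm1 (n+1) (K n)
    rw [hKsucc]
    omega
  -- the pair bound
  have hpair : ∀ i j : ℕ, i < j → μ (f^[K j - K i] ⁻¹' B) ≤ η j := by
    intro i j hij
    rcases j with _ | j'
    · exact absurd hij (Nat.not_lt_zero i)
    have hij' : i ≤ j' := Nat.lt_succ_iff.mp hij
    have hKle : K i ≤ K j' := hKmono.monotone hij'
    have hd : K (j'+1) - K i = m (j'+1) (K j') + (K j' - K i) := by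
      rw [hKsucc]; omega
    have hcomp : f^[K (j'+1) - K i] ⁻¹' B
        = f^[K j' - K i] ⁻¹' (f^[m (j'+1) (K j')] ⁻¹' B) := by
      rw [hd, Function.iterate_add]; rfl
    rw [hcomp]
    calc μ (f^[K j' - K i] ⁻¹' (f^[m (j'+1) (K j')] ⁻¹' B))
        ≤ c'⁻¹ ^ (K j' - K i) * μ (f^[m (j'+1) (K j')] ⁻¹' B) :=
          hApre _ _ ((hf.iterate _) hB)
      _ ≤ c'⁻¹ ^ (K j') * (c' ^ (K j') * η (j'+1)) :=
          mul_le_mul (pow_le_pow_right₀ hinv1 (Nat.sub_le _ _))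
            (hm2 (j'+1) (K j')).le zero_le zero_le
      _ = η (j'+1) := by
          rw [← mul_assoc, ← mul_pow, ENNReal.inv_mul_cancel hc'ne0 hc'netop,
            one_pow, one_mul]
  -- define the bad set and W
  set Bad : Set X := ⋃ j, ⋃ i ∈ Finset.range j, f^[K j - K i] ⁻¹' B with hBaddef
  set W : Set X := B \ Bad with hWdef
  have hBadmeas : MeasurableSet Bad :=
    MeasurableSet.iUnion fun j =>
      MeasurableSet.biUnion (Finset.range j).countable_toSet
        fun i _ => (hf.iterate _) hB
  have hterm : ∀ j : ℕ, (2 : ℝ≥0∞) ^ j * η j = δ' * 2⁻¹ ^ (j+2) := by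
    intro j
    have h2 : (2 : ℝ≥0∞)⁻¹ ^ (2*j+2) = 2⁻¹ ^ j * 2⁻¹ ^ (j+2) := by
      rw [← pow_add]; congr 1; ring
    have h3 : (2 : ℝ≥0∞) ^ j * 2⁻¹ ^ j = 1 := by
      rw [← mul_pow, ENNReal.mul_inv_cancel two_ne_zero ENNReal.ofNat_ne_top, one_pow]
    calc (2 : ℝ≥0∞) ^ j * (δ' * 2⁻¹ ^ (2*j+2))
        = δ' * ((2:ℝ≥0∞) ^ j * 2⁻¹ ^ j * 2⁻¹ ^ (j+2)) := by rw [h2]; ring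
      _ = δ' * 2⁻¹ ^ (j+2) := by rw [h3, one_mul]
  have hsum : ∑' j : ℕ, δ' * 2⁻¹ ^ (j+2) = δ' * 2⁻¹ := by
    calc ∑' j : ℕ, δ' * 2⁻¹ ^ (j+2)
        = ∑' j : ℕ, (2:ℝ≥0∞)⁻¹ ^ j * (δ' * 2⁻¹ ^ 2) :=
          tsum_congr fun j => by rw [pow_add]; ring
      _ = (∑' j : ℕ, (2:ℝ≥0∞)⁻¹ ^ j) * (δ' * 2⁻¹ ^ 2) := ENNReal.tsum_mul_right
      _ = 2 * (δ' * 2⁻¹ ^ 2) := by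
          rw [ENNReal.tsum_geometric, ENNReal.one_sub_inv_two, inv_inv]
      _ = δ' * 2⁻¹ := by
          rw [pow_two, show (2:ℝ≥0∞) * (δ' * (2⁻¹ * 2⁻¹)) = δ' * 2⁻¹ * (2⁻¹ * 2) from
            by ring, ENNReal.inv_mul_cancel two_ne_zero ENNReal.ofNat_ne_top, mul_one]
  have hμBad : μ Bad < δ' := by
    have h1 : μ Bad ≤ ∑' j : ℕ, μ (⋃ i ∈ Finset.range j, f^[K j - K i] ⁻¹' B) :=
      measure_iUnion_le _
    have h2 : ∀ j : ℕ, μ (⋃ i ∈ Finset.range j, f^[K j - K i] ⁻¹' B)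
        ≤ δ' * 2⁻¹ ^ (j+2) := by
      intro j
      calc μ (⋃ i ∈ Finset.range j, f^[K j - K i] ⁻¹' B)
          ≤ ∑ i ∈ Finset.range j, μ (f^[K j - K i] ⁻¹' B) :=
            measure_biUnion_finset_le _ _
        _ ≤ ∑ i ∈ Finset.range j, η j :=
            Finset.sum_le_sum fun i hi => hpair i j (Finset.mem_range.mp hi)
        _ = (j : ℝ≥0∞) * η j := by
            rw [Finset.sum_const, Finset.card_range, nsmul_eq_mul]
        _ ≤ (2 : ℝ≥0∞) ^ j * η j := by
            refine mul_le_mul_left ?_ _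
            calc (j : ℝ≥0∞) ≤ ((2 ^ j : ℕ) : ℝ≥0∞) := by
                  exact_mod_cast Nat.le_of_lt (Nat.lt_two_pow_self (n := j))
              _ = (2 : ℝ≥0∞) ^ j := by push_cast; ring
        _ = δ' * 2⁻¹ ^ (j+2) := hterm j
    calc μ Bad ≤ ∑' j : ℕ, δ' * 2⁻¹ ^ (j+2) := h1.trans (ENNReal.tsum_le_tsum h2)
      _ = δ' * 2⁻¹ := hsum
      _ < δ' := by
          rw [← div_eq_mul_inv]
          exact ENNReal.half_lt_self hδ'ne0 hδ'netop
  refine ⟨W, Set.diff_subset, hB.diff hBadmeas, ?_, K, hKmono, rfl, ?_⟩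
  · calc μ (B \ W) ≤ μ Bad := by
          refine measure_mono ?_
          intro x hx
          simp only [hWdef, Set.mem_diff, not_and, not_not] at hx
          exact hx.2 hx.1
      _ < δ' := hμBad
      _ ≤ δ := hδ'le
  · -- pairwise disjointness
    have key : ∀ i j : ℕ, i < j → Disjoint (f^[K i] '' W) (f^[K j] '' W) := by
      intro i j hij
      have hKij : K i ≤ K j := (hKmono hij).le
      have hiter : f^[K j] = f^[K i] ∘ f^[K j - K i] := by
        have hadd : K i + (K j - K i) = K j := Nat.add_sub_cancel' hKij
        rw [← Function.iterate_add, hadd]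
      have himg : f^[K j] '' W = f^[K i] '' (f^[K j - K i] '' W) := by
        rw [hiter, Set.image_comp]
      rw [himg, Set.disjoint_image_iff (hinj.iterate _)]
      rw [Set.disjoint_right]
      rintro x ⟨w, hwW, rfl⟩ hxW
      have hwB : w ∈ f^[K j - K i] ⁻¹' B := by
        have : f^[K j - K i] w ∈ B := hxW.1
        exact this
      have hwBad : w ∈ Bad := by
        refine Set.mem_iUnion.mpr ⟨j, ?_⟩
        refine Set.mem_biUnion ?_ hwB
        exact Finset.mem_range.mpr hij
      exact hwW.2 hwBad
    intro i j hij
    rcases hij.lt_or_gt with h' | h'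
    · exact key i j h'
    · exact (key j i h').symm
end
end

section
/- For every 1 ≤ p < ∞ there exist a σ-finite measure space (X,𝓑,μ) and a bijective bimeasurable map f : X → X that is bi-Lipschitz with respect to μ (i.e., c₁·μ(B) ≤ μ(f(B)) ≤ c₂·μ(B) for all B ∈ 𝓑 and some constants c₂ > c₁ > 0) such that the composition operator T_f on L^p(X,𝓑,μ) is Li-Yorke chaotic, and yet for every measurable set A with 0 < μ(A) < ∞ one has sup{ μ(f^k(A)) / μ(f^l(A)) : k,l ∈ ℤ, k < l } < ∞ (so no measurable set satisfies condition (ii) of the sufficient criterion for Li-Yorke chaos for injective f). -/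
open MeasureTheory Filter Set Topology
open scoped ENNReal

noncomputable section

/-- For `k : ℤ`, `iterSet f k B` is the set `f^k(B)`: the image of `B` under the `k`-th
iterate of `f` when `k ≥ 0`, and the preimage of `B` under the `|k|`-th iterate of `f`
when `k < 0`. -/
def iterSet {X : Type*} (f : X → X) (k : ℤ) (B : Set X) : Set X :=
  if 0 ≤ k then f^[k.toNat] '' B else f^[(-k).toNat] ⁻¹' B

namespace LYCex


/-- The underlying space: countably many copies of `ℤ`. -/
abbrev Xs : Type := ℕ × ℤ

instance : MeasurableSpace Xs := ⊤

lemma measSet (s : Set Xs) : MeasurableSet s := trivial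

instance : MeasurableSingletonClass Xs := ⟨fun _ => trivial⟩

lemma meas_fun {β : Type*} [MeasurableSpace β] (g : Xs → β) : Measurable g :=
  fun _ _ => trivial

/-- peak-time parameters -/
def a (i : ℕ) : ℕ := 3 ^ (i + 1)

lemma a_pos (i : ℕ) : 0 < a i := by unfold a; positivity

lemma a_mono {i j : ℕ} (h : i ≤ j) : a i ≤ a j :=
  Nat.pow_le_pow_right (by norm_num) (by omega)

lemma lt_a (i : ℕ) : i < a i :=
  lt_of_lt_of_le (Nat.lt_pow_self (n := i) (by norm_num)) (Nat.pow_le_pow_right (by norm_num) (by omega))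

lemma three_mul_a (i : ℕ) : 3 * a i = a (i + 1) := by
  simp [a, pow_succ]; ring

/-- weight exponent of the atom `(i, m)` -/
def ex (i : ℕ) (m : ℤ) : ℤ :=
  if -(a i : ℤ) ≤ m then (if m ≤ 0 then -m else m) else m + 2 * (a i : ℤ)

lemma le_ex (i : ℕ) (m : ℤ) : m ≤ ex i m := by
  have := a_pos i
  unfold ex; split_ifs <;> omega

lemma ex_le (i : ℕ) (m : ℤ) : ex i m ≤ m + 2 * (a i : ℤ) := by
  have := a_pos i
  unfold ex; split_ifs <;> omega

lemma ex_succ_le (i : ℕ) (m : ℤ) : ex i (m + 1) ≤ ex i m + 1 := by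
  have := a_pos i
  unfold ex; split_ifs <;> omega

lemma le_ex_succ (i : ℕ) (m : ℤ) : ex i m - 1 ≤ ex i (m + 1) := by
  have := a_pos i
  unfold ex; split_ifs <;> omega

lemma ex_zero (i : ℕ) : ex i 0 = 0 := by unfold ex; have := a_pos i; split_ifs <;> omega

lemma ex_neg_a (i : ℕ) : ex i (-(a i : ℤ)) = (a i : ℤ) := by
  unfold ex; have := a_pos i; split_ifs <;> omega

/-- the weight of an atom -/
def w (x : Xs) : ℝ≥0∞ := 2 ^ (ex x.1 x.2)

lemma w_ne_zero (x : Xs) : w x ≠ 0 :=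
  (ENNReal.zpow_pos (by norm_num) (by norm_num) _).ne'

lemma w_ne_top (x : Xs) : w x ≠ ∞ :=
  (ENNReal.zpow_lt_top (by norm_num) (by norm_num) _).ne

/-- the measure -/
def μm : Measure Xs := Measure.sum fun x : Xs => w x • Measure.dirac x

lemma μm_apply (s : Set Xs) : μm s = ∑' x : s, w x := by
  rw [μm, Measure.sum_apply _ (measSet s)]
  rw [tsum_subtype]
  congr 1; funext x
  rw [Measure.smul_apply, Measure.dirac_apply]
  by_cases hx : x ∈ s
  · simp [hx, indicator_of_mem, w]
  · simp [hx, indicator_of_notMem]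

lemma μm_singleton (x : Xs) : μm {x} = w x := by
  rw [μm_apply]; simp

lemma μm_eq_zero_iff {s : Set Xs} : μm s = 0 ↔ s = ∅ := by
  constructor
  · intro h
    by_contra hne
    obtain ⟨x, hx⟩ := Set.nonempty_iff_ne_empty.2 hne
    have h1 : w x ≤ μm s := by
      rw [μm_apply]
      exact ENNReal.le_tsum (⟨x, hx⟩ : s)
    rw [h] at h1
    exact w_ne_zero x (le_antisymm h1 zero_le)
  · rintro rfl; simp

lemma ae_all {P : Xs → Prop} (h : ∀ᵐ x ∂μm, P x) : ∀ x, P x := by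
  intro x
  by_contra hx
  have h0 : μm {y | ¬ P y} = 0 := h
  have : ({y | ¬ P y} : Set Xs) = ∅ := μm_eq_zero_iff.1 h0
  rw [Set.eq_empty_iff_forall_notMem] at this
  exact this x hx

lemma lintegral_μm (g : Xs → ℝ≥0∞) : ∫⁻ x, g x ∂μm = ∑' x : Xs, w x * g x := by
  rw [μm, lintegral_sum_measure]
  congr 1; funext x
  rw [lintegral_smul_measure, lintegral_dirac, smul_eq_mul]


/-- the dynamics: shift right in each row -/
def fm : Xs → Xs := fun x => (x.1, x.2 + 1)

def shE (k : ℤ) : Xs ≃ Xs where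
  toFun x := (x.1, x.2 + k)
  invFun x := (x.1, x.2 - k)
  left_inv x := by cases x; simp
  right_inv x := by cases x; simp

lemma fm_bij : Function.Bijective fm := (shE 1).bijective

lemma fm_iterate (n : ℕ) (x : Xs) : fm^[n] x = (x.1, x.2 + n) := by
  induction n with
  | zero => simp
  | succ n ih =>
      rw [Function.iterate_succ_apply', ih, fm]
      simp; ring

lemma μm_shift (s : Set Xs) (k : ℤ) :
    μm ((shE k) '' s) = ∑' x : s, w ((x : Xs).1, (x : Xs).2 + k) := by
  rw [μm_apply]
  rw [← Equiv.tsum_eq (Equiv.Set.image (shE k) s (shE k).injective) (fun y : ((shE k) '' s) => w y)]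
  rfl

lemma fm_image (s : Set Xs) : fm '' s = (shE 1) '' s := rfl

lemma preimage_iterate (s : Set Xs) (n : ℕ) :
    fm^[n] ⁻¹' s = (shE (-(n:ℤ))) '' s := by
  ext x
  simp only [Set.mem_preimage, fm_iterate]
  constructor
  · intro h
    exact ⟨(x.1, x.2 + n), h, by cases x; simp [shE]⟩
  · rintro ⟨y, hy, rfl⟩
    simpa [shE] using hy


lemma two_zpow_ne_zero (k : ℤ) : ((2:ℝ≥0∞) ^ k) ≠ 0 :=
  (ENNReal.zpow_pos (by norm_num) (by norm_num) _).ne'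

lemma two_zpow_ne_top (k : ℤ) : ((2:ℝ≥0∞) ^ k) ≠ ∞ :=
  (ENNReal.zpow_lt_top (by norm_num) (by norm_num) _).ne

lemma two_zpow_add (m n : ℤ) : ((2:ℝ≥0∞) ^ (m + n)) = 2 ^ m * 2 ^ n :=
  ENNReal.zpow_add (by norm_num) (by norm_num) m n

lemma two_zpow_mono {m n : ℤ} (h : m ≤ n) : ((2:ℝ≥0∞) ^ m) ≤ 2 ^ n :=
  ENNReal.zpow_le_of_le (by norm_num) h

lemma iterSet_eq (k : ℤ) (A : Set Xs) : iterSet fm k A = (shE k) '' A := by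
  unfold iterSet
  split_ifs with h
  · have : fm^[k.toNat] = (shE k : Xs → Xs) := by
      funext x
      rw [fm_iterate]
      simp [shE, Int.toNat_of_nonneg h]
    rw [this]
  · rw [preimage_iterate]
    have h2 : (-(((-k).toNat : ℤ))) = k := by omega
    rw [h2]

/-- the upper envelope weight -/
def αw (x : Xs) : ℝ≥0∞ := 2 ^ (x.2 + 2 * (a x.1 : ℤ))
/-- the lower envelope weight -/
def βw (x : Xs) : ℝ≥0∞ := 2 ^ (x.2)

lemma w_shift_le (x : Xs) (k : ℤ) : w (x.1, x.2 + k) ≤ 2 ^ k * αw x := by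
  have h1 : w (x.1, x.2 + k) ≤ 2 ^ (x.2 + k + 2 * (a x.1 : ℤ)) := two_zpow_mono (ex_le _ _)
  refine h1.trans (le_of_eq ?_)
  rw [αw, ← two_zpow_add]
  ring_nf

lemma le_w_shift (x : Xs) (k : ℤ) : 2 ^ k * βw x ≤ w (x.1, x.2 + k) := by
  have h1 : ((2:ℝ≥0∞) ^ (x.2 + k)) ≤ w (x.1, x.2 + k) := two_zpow_mono (le_ex _ _)
  refine le_trans (le_of_eq ?_) h1
  rw [βw, ← two_zpow_add]
  ring_nf

lemma μm_iterSet_le (A : Set Xs) (k : ℤ) :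
    μm (iterSet fm k A) ≤ 2 ^ k * ∑' x : A, αw x := by
  rw [iterSet_eq, μm_shift, ← ENNReal.tsum_mul_left]
  exact ENNReal.tsum_le_tsum fun x => w_shift_le x k

lemma le_μm_iterSet (A : Set Xs) (k : ℤ) :
    2 ^ k * ∑' x : A, βw x ≤ μm (iterSet fm k A) := by
  rw [iterSet_eq, μm_shift, ← ENNReal.tsum_mul_left]
  exact ENNReal.tsum_le_tsum fun x => le_w_shift x k

lemma alpha_sum_ne_top (A : Set Xs) (hAfin : μm A ≠ ∞) :
    (∑' x : A, αw x) ≠ ∞ := by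
  have hw : (∑' x : A, w (x : Xs)) ≠ ∞ := by rw [← μm_apply]; exact hAfin
  -- split according to sign of the exponent
  have hsplit : ∀ x : A, αw (x : Xs) ≤ w (x : Xs) +
      (if 0 ≤ ex (x : Xs).1 (x : Xs).2 then αw (x : Xs) else 0) := by
    intro x
    by_cases hx : 0 ≤ ex (x : Xs).1 (x : Xs).2
    · simp only [hx, if_pos]
      exact le_add_self
    · simp only [hx, if_neg, not_false_iff, add_zero]
      -- in this case the weight equals the envelope
      have hax := a_pos (x : Xs).1
      have : ex (x : Xs).1 (x : Xs).2 = (x : Xs).2 + 2 * (a (x : Xs).1 : ℤ) := by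
        unfold ex at hx ⊢
        split_ifs at hx ⊢ <;> omega
      rw [αw, ← this, w]
  refine ne_top_of_le_ne_top ?_ (ENNReal.tsum_le_tsum hsplit)
  rw [ENNReal.tsum_add]
  refine ENNReal.add_ne_top.2 ⟨hw, ?_⟩
  -- the set of expensive atoms in A is finite
  have hfin : {x : A | (1:ℝ≥0∞) ≤ w (x : Xs)}.Finite := by
    have := ENNReal.finite_const_le_of_tsum_ne_top hw one_ne_zero
    simpa using this
  have hsub : {x : A | 0 ≤ ex (x : Xs).1 (x : Xs).2}.Finite := by
    refine hfin.subset ?_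
    intro x hx
    have : ((2:ℝ≥0∞) ^ (0:ℤ)) ≤ 2 ^ (ex (x : Xs).1 (x : Xs).2) := two_zpow_mono hx
    simpa [w] using this
  classical
  have : (∑' x : A, (if 0 ≤ ex (x : Xs).1 (x : Xs).2 then αw (x : Xs) else 0)) =
      ∑ x ∈ hsub.toFinset, (if 0 ≤ ex (x : Xs).1 (x : Xs).2 then αw (x : Xs) else 0) := by
    refine tsum_eq_sum ?_
    intro x hx
    rw [Set.Finite.mem_toFinset] at hx
    simp only [Set.mem_setOf_eq] at hx
    simp [hx]
  rw [this]
  refine (ENNReal.sum_lt_top.2 fun x _ => ?_).ne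
  split_ifs
  · exact ENNReal.zpow_lt_top (by norm_num) (by norm_num) _
  · exact ENNReal.zero_lt_top

lemma beta_sum_ne_zero (A : Set Xs) (hA0 : μm A ≠ 0) : (∑' x : A, βw x) ≠ 0 := by
  have hne : A.Nonempty := by
    rw [Set.nonempty_iff_ne_empty]
    intro h; exact hA0 (by rw [h]; simp)
  obtain ⟨x, hx⟩ := hne
  intro h0
  have h1 : βw x ≤ ∑' x : A, βw x := ENNReal.le_tsum (⟨x, hx⟩ : A)
  rw [h0] at h1
  exact two_zpow_ne_zero _ (le_antisymm h1 zero_le)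

theorem ratio_bound (A : Set Xs) (hA0 : μm A ≠ 0) (hAfin : μm A ≠ ∞) :
    (⨆ (k : ℤ) (l : ℤ) (_ : k < l),
      μm (iterSet fm k A) / μm (iterSet fm l A)) < ∞ := by
  set A₀ := ∑' x : A, αw x with hA₀
  set B₀ := ∑' x : A, βw x with hB₀
  have hbound : ∀ (k l : ℤ), k < l →
      μm (iterSet fm k A) / μm (iterSet fm l A) ≤ A₀ / B₀ := by
    intro k l hkl
    have h1 : μm (iterSet fm k A) ≤ 2 ^ l * A₀ :=
      (μm_iterSet_le A k).trans (mul_le_mul_left (two_zpow_mono hkl.le) _)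
    have h2 : 2 ^ l * B₀ ≤ μm (iterSet fm l A) := le_μm_iterSet A l
    calc μm (iterSet fm k A) / μm (iterSet fm l A)
        ≤ (2 ^ l * A₀) / (2 ^ l * B₀) := ENNReal.div_le_div h1 h2
      _ = A₀ / B₀ := ENNReal.mul_div_mul_left _ _ (two_zpow_ne_zero l) (two_zpow_ne_top l)
  have hfin : A₀ / B₀ < ∞ :=
    ENNReal.div_lt_top (alpha_sum_ne_top A hAfin) (beta_sum_ne_zero A hA0)
  refine lt_of_le_of_lt ?_ hfin
  exact iSup_le fun k => iSup_le fun l => iSup_le fun hkl => hbound k l hkl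

/-- bi-Lipschitz bounds -/
lemma w_fm_le (x : Xs) : w (fm x) ≤ 2 * w x := by
  have h := two_zpow_mono (ex_succ_le x.1 x.2)
  rw [two_zpow_add] at h
  simpa [fm, w, mul_comm] using h

lemma le_w_fm (x : Xs) : 2⁻¹ * w x ≤ w (fm x) := by
  have h := two_zpow_mono (le_ex_succ x.1 x.2)
  rw [sub_eq_add_neg, two_zpow_add] at h
  have : ((2:ℝ≥0∞) ^ (-1 : ℤ)) = 2⁻¹ := by
    simp [ENNReal.zpow_neg]
  rw [this, mul_comm] at h
  simpa [fm, w, mul_comm] using h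

lemma bilip (B : Set Xs) :
    2⁻¹ * μm B ≤ μm (fm '' B) ∧ μm (fm '' B) ≤ 2 * μm B := by
  have himg : μm (fm '' B) = ∑' x : B, w ((x : Xs).1, (x : Xs).2 + 1) := by
    rw [fm_image, μm_shift]
  rw [himg, μm_apply]
  constructor
  · rw [← ENNReal.tsum_mul_left]
    exact ENNReal.tsum_le_tsum fun x => le_w_fm (x : Xs)
  · rw [← ENNReal.tsum_mul_left]
    exact ENNReal.tsum_le_tsum fun x => w_fm_le (x : Xs)

lemma μm_finite_of_finite {s : Set Xs} (hs : s.Finite) : μm s < ∞ := by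
  rw [μm_apply]
  have := hs.fintype
  rw [tsum_fintype]
  exact ENNReal.sum_lt_top.2 fun x _ => (w_ne_top _).lt_top

instance μm_sigmaFinite : SigmaFinite μm := by
  refine ⟨⟨⟨fun n => (Denumerable.eqv Xs) ⁻¹' (Set.Iio n), fun _ => trivial, ?_, ?_⟩⟩⟩
  · intro n
    exact μm_finite_of_finite ((Set.finite_Iio n).preimage (Equiv.injective _).injOn)
  · ext x
    simp only [Set.mem_iUnion, Set.mem_preimage, Set.mem_Iio, Set.mem_univ, iff_true]
    exact ⟨(Denumerable.eqv Xs) x + 1, by omega⟩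

lemma μm_univ_ne_zero : μm Set.univ ≠ 0 := by
  intro h
  have := μm_eq_zero_iff.1 h
  exact (Set.univ_eq_empty_iff.1 this).false ((0:ℕ), (0:ℤ))


/-! ### The composition operator -/

section Op

variable {p : ℝ≥0∞} [Fact (1 ≤ p)] (hp : p ≠ ∞)

lemma p_ne_zero : p ≠ 0 :=
  (lt_of_lt_of_le zero_lt_one (Fact.out : (1:ℝ≥0∞) ≤ p)).ne'

lemma pt_pos (hp : p ≠ ∞) : 0 < p.toReal := ENNReal.toReal_pos p_ne_zero hp

lemma w_pred_le (x : Xs) : w (x.1, x.2 + (-1)) ≤ 2 * w x := by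
  have h0 := le_ex_succ x.1 (x.2 - 1)
  have h1 : x.2 - 1 + 1 = x.2 := by ring
  rw [h1] at h0
  have h := two_zpow_mono (show ex x.1 (x.2 - 1) ≤ ex x.1 x.2 + 1 by omega)
  rw [two_zpow_add] at h
  have h2 : x.2 + (-1) = x.2 - 1 := by ring
  rw [w, w, h2]
  simpa [mul_comm] using h

lemma lintegral_comp_fm_le (G : Xs → ℝ≥0∞) :
    ∫⁻ x, G (fm x) ∂μm ≤ 2 * ∫⁻ x, G x ∂μm := by
  rw [lintegral_μm, lintegral_μm]
  have hre := Equiv.tsum_eq (shE (-1)) (fun x => w x * G (fm x))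
  rw [← hre, ← ENNReal.tsum_mul_left]
  refine ENNReal.tsum_le_tsum fun y => ?_
  have hfm : fm ((shE (-1)) y) = y := by
    cases y; simp [shE, fm]
  rw [hfm]
  have : w ((shE (-1)) y) ≤ 2 * w y := w_pred_le y
  calc w ((shE (-1)) y) * G y ≤ (2 * w y) * G y := mul_le_mul_left this _
    _ = 2 * (w y * G y) := by ring

lemma eLpNorm_comp_le (hp : p ≠ ∞) (φ : Xs → ℝ) :
    eLpNorm (fun x => φ (fm x)) p μm ≤ 2 ^ (1 / p.toReal) * eLpNorm φ p μm := by
  rw [eLpNorm_eq_lintegral_rpow_enorm_toReal p_ne_zero hp,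
    eLpNorm_eq_lintegral_rpow_enorm_toReal p_ne_zero hp]
  simp only [enorm_eq_nnnorm]
  have h := lintegral_comp_fm_le (fun x => (‖φ x‖₊ : ℝ≥0∞) ^ p.toReal)
  have h2 : ((∫⁻ x, (‖φ (fm x)‖₊ : ℝ≥0∞) ^ p.toReal ∂μm) ^ (1 / p.toReal)) ≤
      ((2 * ∫⁻ x, (‖φ x‖₊ : ℝ≥0∞) ^ p.toReal ∂μm) ^ (1 / p.toReal)) :=
    ENNReal.rpow_le_rpow h (by positivity)
  refine h2.trans (le_of_eq ?_)
  rw [ENNReal.mul_rpow_of_nonneg _ _ (by positivity)]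

lemma comp_memLp (hp : p ≠ ∞) {φ : Xs → ℝ} (hφ : MemLp φ p μm) :
    MemLp (fun x => φ (fm x)) p μm := by
  refine ⟨((meas_fun _).stronglyMeasurable).aestronglyMeasurable, ?_⟩
  refine lt_of_le_of_lt (eLpNorm_comp_le hp φ) ?_
  exact ENNReal.mul_lt_top
    (ENNReal.rpow_lt_top_of_nonneg (by positivity) (by norm_num)) hφ.2

/-- The composition operator as a linear map. -/
def Tlin (hp : p ≠ ∞) : Lp ℝ p μm →ₗ[ℝ] Lp ℝ p μm where
  toFun φ := (comp_memLp hp (Lp.memLp φ)).toLp _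
  map_add' φ ψ := by
    have hadd : ∀ x, (⇑(φ + ψ) : Xs → ℝ) x = (⇑φ + ⇑ψ) x := ae_all (Lp.coeFn_add φ ψ)
    rw [← MemLp.toLp_add]
    refine MemLp.toLp_congr _ _ ?_
    refine Filter.Eventually.of_forall fun x => ?_
    show (⇑(φ + ψ) : Xs → ℝ) (fm x) = ((fun x => φ (fm x)) + fun x => ψ (fm x)) x
    rw [hadd (fm x)]
    simp
  map_smul' c φ := by
    have hsmul : ∀ x, (⇑(c • φ) : Xs → ℝ) x = (c • ⇑φ) x := ae_all (Lp.coeFn_smul c φ)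
    simp only [RingHom.id_apply]
    rw [← MemLp.toLp_const_smul]
    refine MemLp.toLp_congr _ _ ?_
    refine Filter.Eventually.of_forall fun x => ?_
    show (⇑(c • φ) : Xs → ℝ) (fm x) = (c • fun x => φ (fm x)) x
    rw [hsmul (fm x)]
    simp

/-- The composition operator. -/
def Top (hp : p ≠ ∞) : Lp ℝ p μm →L[ℝ] Lp ℝ p μm :=
  LinearMap.mkContinuous (Tlin hp) (((2:ℝ≥0∞) ^ (1 / p.toReal)).toReal) (by
    intro φ
    have hC : ((2:ℝ≥0∞) ^ (1 / p.toReal)) ≠ ∞ :=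
      (ENNReal.rpow_lt_top_of_nonneg (by positivity) (by norm_num)).ne
    show ‖(comp_memLp hp (Lp.memLp φ)).toLp _‖ ≤ _
    rw [Lp.norm_toLp]
    have h1 := eLpNorm_comp_le hp (⇑φ)
    have h2 : (eLpNorm (fun x => φ (fm x)) p μm).toReal ≤
        ((2:ℝ≥0∞) ^ (1 / p.toReal) * eLpNorm (⇑φ) p μm).toReal := by
      refine ENNReal.toReal_mono ?_ h1
      exact ENNReal.mul_ne_top hC (Lp.eLpNorm_ne_top φ)
    refine h2.trans (le_of_eq ?_)
    rw [ENNReal.toReal_mul, Lp.norm_def])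

lemma Top_apply (φ : Lp ℝ p μm) : ∀ x, (Top hp φ) x = φ (fm x) :=
  ae_all ((comp_memLp hp (Lp.memLp φ)).coeFn_toLp)

lemma Top_iterate (n : ℕ) (φ : Lp ℝ p μm) :
    ∀ x, ((⇑(Top hp))^[n] φ) x = φ (fm^[n] x) := by
  induction n with
  | zero => intro x; simp
  | succ n ih =>
      intro x
      rw [Function.iterate_succ_apply', Top_apply hp, ih (fm x),
        ← Function.iterate_succ_apply]


end Op

/-! ### The chaotic vector -/

lemma a_ge (j : ℕ) : 2 * j + 2 ≤ a j := by
  have h1 : j < 3 ^ j := Nat.lt_pow_self (n := j) (by norm_num : (1:ℕ) < 3)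
  have h2 : 3 ^ (j + 1) = 3 * 3 ^ j := by
    rw [pow_succ]; ring
  unfold a
  omega

lemma zpow_neg_nat (i : ℕ) : ((2:ℝ≥0∞) ^ (-(i:ℤ))) = (2⁻¹) ^ i := by
  rw [ENNReal.zpow_neg, zpow_natCast, ← ENNReal.inv_pow]

lemma tsum_two_inv_pow : (∑' i : ℕ, ((2:ℝ≥0∞)⁻¹) ^ i) = 2 := by
  rw [ENNReal.tsum_geometric, ENNReal.one_sub_inv_two, inv_inv]

/-- the ℓ^p-weights of the chaotic vector -/
def qv (i : ℕ) : ℝ≥0∞ := 2 ^ (-(a i : ℤ))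

lemma qv_ne_zero (i : ℕ) : qv i ≠ 0 := two_zpow_ne_zero _
lemma qv_ne_top (i : ℕ) : qv i ≠ ∞ := two_zpow_ne_top _

lemma tsum_qv_le : (∑' i : ℕ, qv i) ≤ 2 := by
  rw [← tsum_two_inv_pow]
  refine ENNReal.tsum_le_tsum fun i => ?_
  rw [← zpow_neg_nat]
  exact two_zpow_mono (by have := lt_a i; omega)

/-- the scalar orbit sums -/
def Sv (n : ℕ) : ℝ≥0∞ := ∑' i : ℕ, w (i, -(n:ℤ)) * qv i

lemma Sv_ne_top (n : ℕ) : Sv n ≠ ∞ := by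
  have hb : ∀ i : ℕ, w (i, -(n:ℤ)) * qv i ≤ 2 ^ (n:ℤ) * qv i := by
    intro i
    refine mul_le_mul_left ?_ _
    have hex : ex i (-(n:ℤ)) ≤ (n:ℤ) := by
      have := a_pos i
      unfold ex; split_ifs <;> omega
    exact two_zpow_mono hex
  refine ne_top_of_le_ne_top ?_ (ENNReal.tsum_le_tsum hb)
  rw [ENNReal.tsum_mul_left]
  exact ENNReal.mul_ne_top (two_zpow_ne_top _)
    (ne_top_of_le_ne_top (by norm_num) tsum_qv_le)

lemma Sv_lower (j : ℕ) : (1:ℝ≥0∞) ≤ Sv (a j) := by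
  have hterm : w (j, -(a j : ℤ)) * qv j = 1 := by
    rw [w]
    show (2:ℝ≥0∞) ^ (ex j (-(a j:ℤ))) * qv j = 1
    rw [ex_neg_a, qv, ← two_zpow_add]
    simp
  calc (1:ℝ≥0∞) = w (j, -(a j : ℤ)) * qv j := hterm.symm
    _ ≤ Sv (a j) := ENNReal.le_tsum j

lemma key_exp (i j : ℕ) : ex i (-(2 * (a j : ℤ))) - (a i : ℤ) ≤ -(1 + i + j : ℤ) := by
  rcases le_or_gt i j with h | h
  · have h1 : a i ≤ a j := a_mono h
    have h2 : 2 * j + 2 ≤ a j := a_ge j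
    have h3 : 0 < a j := a_pos j
    have h4 : 0 < a i := a_pos i
    unfold ex; split_ifs <;> omega
  · have h1 : 3 * a j = a (j+1) := three_mul_a j
    have h2 : a (j+1) ≤ a i := a_mono (by omega)
    have h4 : a j ≤ a (i-1) := a_mono (by omega)
    have h5 : 2*(i-1) + 2 ≤ a (i-1) := a_ge (i-1)
    have h6 : 3 * a (i - 1) = a (i - 1 + 1) := three_mul_a (i-1)
    have h7 : i - 1 + 1 = i := by omega
    rw [h7] at h6
    have h8 : 0 < a j := a_pos j
    unfold ex; split_ifs <;> omega

lemma Sv_upper (j : ℕ) : Sv (2 * a j) ≤ 2 ^ (-(j:ℤ)) := by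
  have hpt : ∀ i : ℕ, w (i, -((2 * a j : ℕ) : ℤ)) * qv i ≤ 2 ^ (-(1 + i + j : ℤ)) := by
    intro i
    rw [w, qv]
    show (2:ℝ≥0∞) ^ (ex i (-((2 * a j : ℕ) : ℤ))) * 2 ^ (-(a i:ℤ)) ≤ _
    rw [← two_zpow_add]
    refine two_zpow_mono ?_
    have := key_exp i j
    push_cast at this ⊢
    omega
  refine le_trans (ENNReal.tsum_le_tsum hpt) (le_of_eq ?_)
  have heq : ∀ i : ℕ, ((2:ℝ≥0∞) ^ (-(1 + i + j : ℤ))) = 2 ^ (-(1+j:ℤ)) * (2⁻¹) ^ i := by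
    intro i
    rw [← zpow_neg_nat, ← two_zpow_add]
    ring_nf
  calc (∑' i : ℕ, (2:ℝ≥0∞) ^ (-(1 + i + j : ℤ)))
      = ∑' i : ℕ, 2 ^ (-(1+j:ℤ)) * (2⁻¹) ^ i := by exact tsum_congr heq
    _ = 2 ^ (-(1+j:ℤ)) * 2 := by rw [ENNReal.tsum_mul_left, tsum_two_inv_pow]
    _ = 2 ^ (-(j:ℤ)) := by
        have h : ((1:ℤ) + -(1+j:ℤ)) = -(j:ℤ) := by ring
        rw [← h, two_zpow_add, zpow_one]
        ring

section Op2

variable {p : ℝ≥0∞} [Fact (1 ≤ p)]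

/-- the chaotic vector, as a function -/
def u0fun (p : ℝ≥0∞) : Xs → ℝ :=
  fun x => if x.2 = 0 then ((qv x.1) ^ (1 / p.toReal)).toReal else 0

lemma enorm_u0 (hp : p ≠ ∞) (i : ℕ) :
    ((‖u0fun p (i, 0)‖₊ : ℝ≥0∞)) ^ p.toReal = qv i := by
  have hpt := pt_pos (p := p) hp
  have h1 : u0fun p (i, 0) = ((qv i) ^ (1 / p.toReal)).toReal := by simp [u0fun]
  have hne : (qv i) ^ (1 / p.toReal) ≠ ∞ :=
    ENNReal.rpow_ne_top_of_nonneg (by positivity) (qv_ne_top i)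
  rw [h1]
  have h2 : ((‖((qv i) ^ (1 / p.toReal)).toReal‖₊ : ℝ≥0∞)) = (qv i) ^ (1 / p.toReal) := by
    rw [← enorm_eq_nnnorm, Real.enorm_eq_ofReal ENNReal.toReal_nonneg, ENNReal.ofReal_toReal hne]
  rw [h2, ← ENNReal.rpow_mul, one_div, inv_mul_cancel₀ hpt.ne', ENNReal.rpow_one]

lemma Ln_eq (hp : p ≠ ∞) (n : ℕ) :
    ∫⁻ x, ((‖u0fun p (fm^[n] x)‖₊ : ℝ≥0∞)) ^ p.toReal ∂μm = Sv n := by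
  have hpt := pt_pos (p := p) hp
  rw [lintegral_μm, ENNReal.tsum_prod', Sv]
  congr 1; funext i
  rw [tsum_eq_single (-(n:ℤ)) ?_]
  · rw [fm_iterate]
    have h0 : ((i, -(n:ℤ)).1, (i, -(n:ℤ)).2 + (n:ℤ)) = (i, (0:ℤ)) := by simp
    rw [h0, enorm_u0 hp i]
  · intro m hm
    rw [fm_iterate]
    have h0 : u0fun p ((i, m).1, (i, m).2 + (n:ℤ)) = 0 := by
      simp only [u0fun]
      rw [if_neg (show ¬((i, m).2 + (n:ℤ) = 0) by simp only []; omega)]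
    rw [h0]
    simp [ENNReal.zero_rpow_of_pos hpt]

lemma u0_memLp (hp : p ≠ ∞) : MemLp (u0fun p) p μm := by
  refine ⟨((meas_fun _).stronglyMeasurable).aestronglyMeasurable, ?_⟩
  rw [eLpNorm_eq_lintegral_rpow_enorm_toReal p_ne_zero hp]
  simp only [enorm_eq_nnnorm]
  have h0 : ∫⁻ x, ((‖u0fun p x‖₊ : ℝ≥0∞)) ^ p.toReal ∂μm = Sv 0 := by
    have h := Ln_eq (p := p) hp 0
    simpa using h
  rw [h0]
  exact ENNReal.rpow_lt_top_of_nonneg (by positivity) (Sv_ne_top 0)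

/-- the chaotic vector, as an element of Lp -/
def u0L (hp : p ≠ ∞) : Lp ℝ p μm := (u0_memLp hp).toLp _

lemma u0L_apply (hp : p ≠ ∞) : ∀ x, (u0L hp) x = u0fun p x :=
  ae_all (MemLp.coeFn_toLp _)

lemma dist_iterate (hp : p ≠ ∞) (t s : ℝ) (n : ℕ) :
    dist ((⇑(Top hp))^[n] (t • u0L hp)) ((⇑(Top hp))^[n] (s • u0L hp))
      = |t - s| * ((Sv n) ^ (1 / p.toReal)).toReal := by
  set A := (⇑(Top hp))^[n] (t • u0L hp) with hA
  set B := (⇑(Top hp))^[n] (s • u0L hp) with hB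
  have hAx : ∀ x, A x = t * u0fun p (fm^[n] x) := by
    intro x
    rw [hA, Top_iterate hp n _ x]
    have h1 : ∀ y, (⇑(t • u0L hp) : Xs → ℝ) y = (t • ⇑(u0L hp)) y :=
      ae_all (Lp.coeFn_smul t (u0L hp))
    rw [h1]
    simp [u0L_apply hp]
  have hBx : ∀ x, B x = s * u0fun p (fm^[n] x) := by
    intro x
    rw [hB, Top_iterate hp n _ x]
    have h1 : ∀ y, (⇑(s • u0L hp) : Xs → ℝ) y = (s • ⇑(u0L hp)) y :=
      ae_all (Lp.coeFn_smul s (u0L hp))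
    rw [h1]
    simp [u0L_apply hp]
  rw [dist_eq_norm, Lp.norm_def]
  have hsub : ∀ x, (⇑(A - B) : Xs → ℝ) x = (⇑A - ⇑B) x := ae_all (Lp.coeFn_sub A B)
  have hcongr : eLpNorm (⇑(A - B)) p μm
      = eLpNorm ((t - s) • fun x => u0fun p (fm^[n] x)) p μm := by
    refine eLpNorm_congr_ae (Filter.Eventually.of_forall fun x => ?_)
    rw [hsub x]
    simp only [Pi.sub_apply, Pi.smul_apply, smul_eq_mul]
    rw [hAx x, hBx x]
    ring
  rw [hcongr, eLpNorm_const_smul]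
  rw [eLpNorm_eq_lintegral_rpow_enorm_toReal p_ne_zero hp]
  simp only [enorm_eq_nnnorm]
  rw [Ln_eq hp n]
  rw [ENNReal.toReal_mul]
  congr 1

theorem Top_liYorke (hp : p ≠ ∞) : LiYorkeChaotic (⇑(Top hp)) := by
  have hpt := pt_pos (p := p) hp
  have hu0 : u0L hp ≠ 0 := by
    intro h0
    have h1 : ∀ x, (u0L hp) x = u0fun p x := u0L_apply hp
    have h2 : ∀ x, ((0 : Lp ℝ p μm) : Xs → ℝ) x = 0 := ae_all (Lp.coeFn_zero ℝ p μm)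
    have h3 : u0fun p ((0:ℕ), (0:ℤ)) = 0 := by rw [← h1 ((0:ℕ),(0:ℤ)), h0, h2]
    have h4 : 0 < u0fun p ((0:ℕ), (0:ℤ)) := by
      simp only [u0fun, if_pos rfl]
      refine ENNReal.toReal_pos ?_ ?_
      · exact (ENNReal.rpow_pos (ENNReal.zpow_pos (by norm_num) (by norm_num) _)
          (qv_ne_top 0)).ne'
      · exact ENNReal.rpow_ne_top_of_nonneg (by positivity) (qv_ne_top 0)
    exact h4.ne' h3
  have hinj : Function.Injective (fun t : ℝ => t • u0L hp) := by
    intro t s h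
    simp only at h
    have h' : (t - s) • u0L hp = 0 := by rw [sub_smul, h, sub_self]
    rcases smul_eq_zero.1 h' with h1 | h1
    · exact sub_eq_zero.1 h1
    · exact absurd h1 hu0
  refine ⟨Set.range (fun t : ℝ => t • u0L hp), ?_, ?_⟩
  · intro hc
    have hcp := hc.preimage hinj
    rw [Set.preimage_range] at hcp
    exact Cardinal.not_countable_real hcp
  · rintro x ⟨t, rfl⟩ y ⟨s, rfl⟩ hxy
    have hts : t ≠ s := fun h => hxy (by rw [h])
    have hΔ : 0 < |t - s| := abs_pos.2 (sub_ne_zero.2 hts)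
    constructor
    · intro ε hε
      rw [frequently_atTop]
      intro N
      have hc0 : (0:ℝ≥0∞) < (ENNReal.ofReal (ε / |t - s|)) ^ p.toReal :=
        ENNReal.rpow_pos (ENNReal.ofReal_pos.2 (div_pos hε hΔ)) ENNReal.ofReal_ne_top
      have htend : Tendsto (fun j : ℕ => ((2:ℝ≥0∞)⁻¹) ^ j) atTop (𝓝 0) :=
        ENNReal.tendsto_pow_atTop_nhds_zero_of_lt_one (by norm_num : (2:ℝ≥0∞)⁻¹ < 1)
      have hev : ∀ᶠ j : ℕ in atTop,
          ((2:ℝ≥0∞)⁻¹) ^ j < (ENNReal.ofReal (ε / |t - s|)) ^ p.toReal :=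
        htend.eventually_lt_const hc0
      obtain ⟨j, hjN, hjlt⟩ := ((eventually_ge_atTop N).and hev).exists
      refine ⟨2 * a j, by have := lt_a j; omega, ?_⟩
      rw [dist_iterate hp t s (2 * a j)]
      have h1 : Sv (2 * a j) < (ENNReal.ofReal (ε / |t - s|)) ^ p.toReal := by
        refine lt_of_le_of_lt (Sv_upper j) ?_
        rw [zpow_neg_nat]; exact hjlt
      have h2 : (Sv (2 * a j)) ^ (1 / p.toReal) < ENNReal.ofReal (ε / |t - s|) := by
        have h3 := ENNReal.rpow_lt_rpow h1 (by positivity : (0:ℝ) < 1 / p.toReal)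
        rwa [← ENNReal.rpow_mul, mul_one_div, div_self hpt.ne', ENNReal.rpow_one] at h3
      have h4 : ((Sv (2 * a j)) ^ (1 / p.toReal)).toReal < ε / |t - s| :=
        ENNReal.toReal_lt_of_lt_ofReal h2
      calc |t - s| * ((Sv (2 * a j)) ^ (1 / p.toReal)).toReal
          < |t - s| * (ε / |t - s|) := mul_lt_mul_of_pos_left h4 hΔ
        _ = ε := by field_simp
    · refine ⟨|t - s| / 2, by positivity, ?_⟩
      rw [frequently_atTop]
      intro N
      refine ⟨a N, (lt_a N).le, ?_⟩
      rw [dist_iterate hp t s (a N)]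
      have h1 : (1:ℝ≥0∞) ≤ (Sv (a N)) ^ (1 / p.toReal) := by
        calc (1:ℝ≥0∞) = 1 ^ (1 / p.toReal) := (ENNReal.one_rpow _).symm
          _ ≤ _ := ENNReal.rpow_le_rpow (Sv_lower N) (by positivity)
      have h2 : (Sv (a N)) ^ (1 / p.toReal) ≠ ∞ :=
        ENNReal.rpow_ne_top_of_nonneg (by positivity) (Sv_ne_top _)
      have h3 : (1:ℝ) ≤ ((Sv (a N)) ^ (1 / p.toReal)).toReal := by
        have h5 := ENNReal.toReal_mono h2 h1
        simpa using h5
      calc |t - s| / 2 < |t - s| * 1 := by linarith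
        _ ≤ |t - s| * ((Sv (a N)) ^ (1 / p.toReal)).toReal :=
            mul_le_mul_of_nonneg_left h3 (abs_nonneg _)

end Op2

end LYCex

/-- **Example (the converse of Corollary 1 fails).** For every `1 ≤ p < ∞` there exist a
σ-finite measure space `(X, 𝓑, μ)` and a bijective bimeasurable map `f : X → X` which is
bi-Lipschitz with respect to `μ` such that the composition operator `T_f` on `L^p` is
Li-Yorke chaotic, and yet for every measurable `A` with `0 < μ(A) < ∞` one has
`sup { μ(f^k(A)) / μ(f^l(A)) : k, l ∈ ℤ, k < l } < ∞`. -/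
theorem exists_liYorke_with_bounded_ratios
    (p : ℝ≥0∞) [Fact (1 ≤ p)] (hp : p ≠ ∞) :
    ∃ (X : Type) (_ : MeasurableSpace X) (μ : Measure X) (f : X → X) (c₁ c₂ : ℝ≥0∞),
      SigmaFinite μ ∧ μ Set.univ ≠ 0 ∧
      Function.Bijective f ∧ Measurable f ∧
      (∀ B : Set X, MeasurableSet B → MeasurableSet (f '' B)) ∧
      0 < c₁ ∧ c₁ < c₂ ∧ c₂ < ∞ ∧
      (∀ B : Set X, MeasurableSet B →
        c₁ * μ B ≤ μ (f '' B) ∧ μ (f '' B) ≤ c₂ * μ B) ∧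
      (∃ T : Lp ℝ p μ →L[ℝ] Lp ℝ p μ,
        (∀ φ : Lp ℝ p μ, ⇑(T φ) =ᵐ[μ] fun x => φ (f x)) ∧
        LiYorkeChaotic (⇑T)) ∧
      (∀ A : Set X, MeasurableSet A → 0 < μ A → μ A < ∞ →
        (⨆ (k : ℤ) (l : ℤ) (_ : k < l),
          μ (iterSet f k A) / μ (iterSet f l A)) < ∞) := by
  classical
  refine ⟨LYCex.Xs, inferInstance, LYCex.μm, LYCex.fm, 2⁻¹, 2, LYCex.μm_sigmaFinite,
    LYCex.μm_univ_ne_zero, LYCex.fm_bij, LYCex.meas_fun _, fun B _ => trivial, ?_, ?_, ?_,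
    fun B _ => LYCex.bilip B,
    ⟨LYCex.Top hp, fun φ => Filter.Eventually.of_forall (LYCex.Top_apply hp φ),
      LYCex.Top_liYorke hp⟩, ?_⟩
  · norm_num
  · exact lt_trans (by norm_num : (2:ℝ≥0∞)⁻¹ < 1) ENNReal.one_lt_two
  · exact ENNReal.ofNat_lt_top
  · intro A _ h0 hfin
    exact LYCex.ratio_bound A h0.ne' hfin.ne
end
end

section
/- If there exists B ∈ 𝓑 with 0 < μ(B) < ∞ such that liminf_{n→∞} μ(f^{-n}(B)) = 0 and limsup_{n→∞} μ(f^{-n}(B)) > 0, then the characteristic function χ_B ∈ L^p(X,𝓑,μ) satisfies ‖T_f^n χ_B‖^p = μ(f^{-n}(B)) for all n, is a semi-irregular vector for T_f, and consequently T_f is Li-Yorke chaotic. -/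
open MeasureTheory Filter Set Topology
open scoped ENNReal

noncomputable section

/-- **(LY6) ⇒ (LY7) ⇒ (LY1).** If there is a measurable `B` with `0 < μ(B) < ∞`,
`liminf μ(f^{-n}(B)) = 0` and `limsup μ(f^{-n}(B)) > 0`, then the characteristic function
`χ_B ∈ L^p` satisfies `‖T_f^n χ_B‖^p = μ(f^{-n}(B))` for all `n`, is a semi-irregular
vector for `T_f`, and consequently `T_f` is Li-Yorke chaotic. -/
theorem indicator_semiIrregular_of_liminf_limsup
    {X : Type*} [MeasurableSpace X] (μ : Measure X) (hX : μ Set.univ ≠ 0)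
    (p : ℝ≥0∞) [Fact (1 ≤ p)] (hp : p ≠ ∞)
    (f : X → X) (hf : Measurable f)
    (hfim : ∀ B : Set X, MeasurableSet B → MeasurableSet (f '' B))
    (c : ℝ≥0∞) (hc : 0 < c)
    (hcf : ∀ B : Set X, MeasurableSet B → c * μ B ≤ μ (f '' B))
    (T : Lp ℝ p μ →L[ℝ] Lp ℝ p μ)
    (hT : ∀ φ : Lp ℝ p μ, ⇑(T φ) =ᵐ[μ] fun x => φ (f x))
    (B : Set X) (hB : MeasurableSet B) (hB0 : 0 < μ B) (hBfin : μ B ≠ ∞)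
    (hlinf : atTop.liminf (fun n : ℕ => μ (f^[n] ⁻¹' B)) = 0)
    (hlsup : 0 < atTop.limsup (fun n : ℕ => μ (f^[n] ⁻¹' B))) :
    (∀ n : ℕ, ‖(T ^ n) (indicatorConstLp p hB hBfin (1 : ℝ))‖ ^ p.toReal
        = (μ (f^[n] ⁻¹' B)).toReal) ∧
    ((∀ ε > (0 : ℝ), ∃ᶠ n in atTop,
        ‖(T ^ n) (indicatorConstLp p hB hBfin (1 : ℝ))‖ < ε) ∧
      (∃ ε > (0 : ℝ), ∃ᶠ n in atTop,
        ε < ‖(T ^ n) (indicatorConstLp p hB hBfin (1 : ℝ))‖)) ∧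
    LiYorkeChaotic (⇑T) := by
  have hp0 : p ≠ 0 := by
    have h1 : (1 : ℝ≥0∞) ≤ p := Fact.out
    intro h; rw [h] at h1; simp at h1
  have hq : 0 < p.toReal := ENNReal.toReal_pos hp0 hp
  set q := p.toReal with hqdef
  set y := indicatorConstLp p hB hBfin (1 : ℝ) with hy
  -- preimages of null sets are null
  have hnull : ∀ N : Set X, μ N = 0 → μ (f ⁻¹' N) = 0 := by
    intro N hN
    obtain ⟨N', hNN', hN'meas, hN'0⟩ := exists_measurable_superset_of_null hN
    have h1 : μ (f ⁻¹' N') = 0 := by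
      have h2 := hcf (f ⁻¹' N') (hf hN'meas)
      have h3 : μ (f '' (f ⁻¹' N')) ≤ μ N' :=
        measure_mono (Set.image_preimage_subset f N')
      have : c * μ (f ⁻¹' N') = 0 :=
        le_antisymm (h2.trans (h3.trans_eq hN'0)) bot_le
      rcases mul_eq_zero.mp this with h | h
      · exact absurd h hc.ne'
      · exact h
    exact measure_mono_null (Set.preimage_mono hNN') h1
  have hcomp : ∀ g h : X → ℝ, g =ᵐ[μ] h → (fun x => g (f x)) =ᵐ[μ] fun x => h (f x) := by
    intro g h hgh
    have : {x | ¬ g (f x) = h (f x)} ⊆ f ⁻¹' {x | ¬ g x = h x} := fun x hx => hx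
    exact measure_mono_null this (hnull _ hgh)
  -- a.e. identification of T^n y
  have hmeasA : ∀ n : ℕ, MeasurableSet (f^[n] ⁻¹' B) := fun n => (hf.iterate n) hB
  have hcoe : ∀ n : ℕ,
      ⇑((T ^ n) y) =ᵐ[μ] (f^[n] ⁻¹' B).indicator fun _ => (1 : ℝ) := by
    intro n
    induction n with
    | zero =>
      simpa using (indicatorConstLp_coeFn : ⇑y =ᵐ[μ] B.indicator fun _ => (1 : ℝ))
    | succ n ih =>
      have h1 : (T ^ (n + 1)) y = T ((T ^ n) y) := by
        rw [pow_succ']; rfl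
      have h2 : ⇑(T ((T ^ n) y)) =ᵐ[μ] fun x => ((T ^ n) y) (f x) := hT _
      have h3 : (fun x => ((T ^ n) y) (f x)) =ᵐ[μ]
          fun x => (f^[n] ⁻¹' B).indicator (fun _ => (1 : ℝ)) (f x) := hcomp _ _ ih
      have h4 : (fun x => (f^[n] ⁻¹' B).indicator (fun _ => (1 : ℝ)) (f x))
          = (f^[n + 1] ⁻¹' B).indicator fun _ => (1 : ℝ) := by
        funext x
        by_cases hx : f x ∈ f^[n] ⁻¹' B
        · rw [Set.indicator_of_mem hx,
            Set.indicator_of_mem (show x ∈ f^[n + 1] ⁻¹' B from hx)]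
        · rw [Set.indicator_of_notMem hx,
            Set.indicator_of_notMem (show x ∉ f^[n + 1] ⁻¹' B from hx)]
      rw [h1]
      exact h2.trans (h4 ▸ h3)
  have hfin : ∀ n : ℕ, μ (f^[n] ⁻¹' B) ≠ ∞ := by
    intro n
    have h1 : eLpNorm (⇑((T ^ n) y)) p μ < ∞ := Lp.eLpNorm_lt_top _
    rw [eLpNorm_congr_ae (hcoe n), eLpNorm_indicator_const (hmeasA n) hp0 hp] at h1
    simp only [enorm_one, nnnorm_one, ENNReal.coe_one, one_mul] at h1
    intro h
    rw [h, ENNReal.top_rpow_of_pos (by positivity)] at h1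
    exact (lt_irrefl _ h1).elim
  have hnorm : ∀ n : ℕ, ‖(T ^ n) y‖ = (μ (f^[n] ⁻¹' B)).toReal ^ (1 / q) := by
    intro n
    rw [Lp.norm_def, eLpNorm_congr_ae (hcoe n), eLpNorm_indicator_const (hmeasA n) hp0 hp]
    simp only [enorm_one, nnnorm_one, ENNReal.coe_one, one_mul]
    rw [← ENNReal.toReal_rpow]
  have hpow : ∀ n : ℕ, ‖(T ^ n) y‖ ^ q = (μ (f^[n] ⁻¹' B)).toReal := by
    intro n
    rw [hnorm n, ← Real.rpow_mul ENNReal.toReal_nonneg,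
      one_div_mul_cancel hq.ne', Real.rpow_one]
  -- frequently small
  have hsmall : ∀ ε > (0 : ℝ), ∃ᶠ n in atTop, ‖(T ^ n) y‖ < ε := by
    intro ε hε
    have hb : (0 : ℝ≥0∞) < ENNReal.ofReal (ε ^ q) := by
      rw [ENNReal.ofReal_pos]; positivity
    have hfreq : ∃ᶠ n in atTop, μ (f^[n] ⁻¹' B) < ENNReal.ofReal (ε ^ q) := by
      exact frequently_lt_of_liminf_lt (by isBoundedDefault) (hlinf.trans_lt hb)
    refine hfreq.mono fun n hn => ?_
    have h1 : (μ (f^[n] ⁻¹' B)).toReal < ε ^ q :=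
      ENNReal.toReal_lt_of_lt_ofReal hn
    calc ‖(T ^ n) y‖ = (μ (f^[n] ⁻¹' B)).toReal ^ (1 / q) := hnorm n
      _ < (ε ^ q) ^ (1 / q) := by
          apply Real.rpow_lt_rpow ENNReal.toReal_nonneg h1 (by positivity)
      _ = ε := by
          rw [← Real.rpow_mul hε.le, mul_one_div_cancel hq.ne', Real.rpow_one]
  -- frequently big
  have hbig : ∃ ε > (0 : ℝ), ∃ᶠ n in atTop, ε < ‖(T ^ n) y‖ := by
    obtain ⟨a, ha0, haL⟩ := exists_between hlsup
    set a' := min a 1 with ha'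
    have ha'0 : 0 < a' := lt_min ha0 one_pos
    have ha'top : a' ≠ ∞ := ne_of_lt (lt_of_le_of_lt (min_le_right _ _) (by norm_num))
    have hfreq : ∃ᶠ n in atTop, a' < μ (f^[n] ⁻¹' B) := by
      exact frequently_lt_of_lt_limsup (by isBoundedDefault)
        ((min_le_left _ _).trans_lt haL)
    refine ⟨a'.toReal ^ (1 / q), by
      have := ENNReal.toReal_pos ha'0.ne' ha'top
      positivity, ?_⟩
    refine hfreq.mono fun n hn => ?_
    have h1 : a'.toReal < (μ (f^[n] ⁻¹' B)).toReal :=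
      ENNReal.toReal_lt_toReal ha'top (hfin n) |>.mpr hn
    rw [hnorm n]
    exact Real.rpow_lt_rpow ENNReal.toReal_nonneg h1 (by positivity)
  refine ⟨hpow, ⟨hsmall, hbig⟩, ?_⟩
  -- Li-Yorke chaos
  have hy0 : y ≠ 0 := by
    intro h
    have h1 := hpow 0
    simp only [pow_zero, ContinuousLinearMap.one_apply, h, norm_zero,
      Function.iterate_zero, Set.preimage_id] at h1
    have h2 : 0 < (μ B).toReal := ENNReal.toReal_pos hB0.ne' hBfin
    rw [← h1] at h2
    rw [Real.zero_rpow hq.ne'] at h2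
    exact lt_irrefl _ h2
  refine ⟨Set.range (fun t : ℝ => t • y), ?_, ?_⟩
  · intro hS
    have hinj : Function.Injective (fun t : ℝ => t • y) := smul_left_injective ℝ hy0
    have := hS.preimage hinj
    rw [Set.preimage_range] at this
    exact Cardinal.not_countable_real this
  · rintro x ⟨t, rfl⟩ z ⟨s, rfl⟩ hxz
    have hts : t ≠ s := fun h => hxz (by rw [h])
    have hts0 : 0 < |t - s| := abs_pos.mpr (sub_ne_zero.mpr hts)
    have hdist : ∀ n : ℕ, dist ((⇑T)^[n] (t • y)) ((⇑T)^[n] (s • y))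
        = |t - s| * ‖(T ^ n) y‖ := by
      intro n
      have hiter : ∀ z : Lp ℝ p μ, (⇑T)^[n] z = (T ^ n) z := by
        intro z; rw [FunLike.coe_pow_eq_iterate]
      rw [hiter, hiter, dist_eq_norm, ← map_sub, ← sub_smul, _root_.map_smul, norm_smul,
        Real.norm_eq_abs]
    constructor
    · intro ε hε
      have := hsmall (ε / |t - s|) (by positivity)
      refine this.mono fun n hn => ?_
      rw [hdist n]
      calc |t - s| * ‖(T ^ n) y‖ < |t - s| * (ε / |t - s|) := by
            exact mul_lt_mul_of_pos_left hn hts0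
        _ = ε := by field_simp
    · obtain ⟨ε0, hε00, hε0⟩ := hbig
      refine ⟨|t - s| * ε0, by positivity, ?_⟩
      refine hε0.mono fun n hn => ?_
      rw [hdist n]
      exact mul_lt_mul_of_pos_left hn hts0
end
end

section
/- There exists a nonzero φ ∈ L^p(X,𝓑,μ) with liminf_{n→∞} ‖T_f^n φ‖ = 0 if and only if there exists a measurable set B with 0 < μ(B) < ∞ and liminf_{n→∞} μ(f^{-n}(B)) = 0. -/
open MeasureTheory Filter Set Topology
open scoped ENNReal

noncomputable section

/-- **(LY2) ⇔ (LY3).** There exists a nonzero `φ ∈ L^p(X, 𝓑, μ)` with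
`liminf ‖T_f^n φ‖ = 0` if and only if there exists a measurable set `B` with
`0 < μ(B) < ∞` and `liminf μ(f^{-n}(B)) = 0`. -/
theorem exists_semiNullOrbit_iff_exists_set
    {X : Type*} [MeasurableSpace X] (μ : Measure X) (hX : μ Set.univ ≠ 0)
    (p : ℝ≥0∞) [Fact (1 ≤ p)] (hp : p ≠ ∞)
    (f : X → X) (hf : Measurable f)
    (hfim : ∀ B : Set X, MeasurableSet B → MeasurableSet (f '' B))
    (c : ℝ≥0∞) (hc : 0 < c)
    (hcf : ∀ B : Set X, MeasurableSet B → c * μ B ≤ μ (f '' B))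
    (T : Lp ℝ p μ →L[ℝ] Lp ℝ p μ)
    (hT : ∀ φ : Lp ℝ p μ, ⇑(T φ) =ᵐ[μ] fun x => φ (f x)) :
    (∃ φ : Lp ℝ p μ, φ ≠ 0 ∧ ∀ ε > (0 : ℝ), ∃ᶠ n in atTop, ‖(T ^ n) φ‖ < ε) ↔
    (∃ B : Set X, MeasurableSet B ∧ 0 < μ B ∧ μ B < ∞ ∧
      atTop.liminf (fun n : ℕ => μ (f^[n] ⁻¹' B)) = 0) := by
  have hp1 : (1 : ℝ≥0∞) ≤ p := Fact.out
  have hp0 : p ≠ 0 := fun h => by simp [h] at hp1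
  set pt : ℝ := p.toReal with hptdef
  have hpt : 0 < pt := ENNReal.toReal_pos hp0 hp
  -- pulling back null sets once
  have hnull : ∀ N : Set X, MeasurableSet N → μ N = 0 → μ (f ⁻¹' N) = 0 := by
    intro N hNm hN0
    have h1 : c * μ (f ⁻¹' N) ≤ μ (f '' (f ⁻¹' N)) := hcf _ (hf hNm)
    have h2 : μ (f '' (f ⁻¹' N)) ≤ μ N := measure_mono (Set.image_preimage_subset f N)
    have : c * μ (f ⁻¹' N) = 0 := le_antisymm (h1.trans (h2.trans_eq hN0)) (zero_le)
    rcases mul_eq_zero.mp this with h | h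
    · exact absurd h hc.ne'
    · exact h
  -- pulling back null sets through iterates
  have hnull_iter : ∀ (n : ℕ) (N : Set X), MeasurableSet N → μ N = 0 →
      μ (f^[n] ⁻¹' N) = 0 := by
    intro n
    induction n with
    | zero => intro N _ hN0; simpa using hN0
    | succ n ih =>
      intro N hNm hN0
      have : f^[n + 1] ⁻¹' N = f ⁻¹' (f^[n] ⁻¹' N) := by
        ext x; simp [Function.iterate_succ_apply', Set.mem_preimage,
          Function.iterate_succ_apply]
      rw [this]
      exact hnull _ ((hf.iterate n) hNm) (ih N hNm hN0)
  -- a.e. equality pulls back through iterates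
  have hae : ∀ (n : ℕ) (g h : X → ℝ), g =ᵐ[μ] h →
      (fun x => g (f^[n] x)) =ᵐ[μ] fun x => h (f^[n] x) := by
    intro n g h hgh
    have h0 : μ {x | ¬ g x = h x} = 0 := by
      rw [← ae_iff]; exact hgh
    obtain ⟨N, hEN, hNm, hN0⟩ := exists_measurable_superset_of_null h0
    rw [Filter.EventuallyEq, ae_iff]
    refine measure_mono_null (fun x hx => ?_) (hnull_iter n N hNm hN0)
    exact hEN hx
  -- iterates of T act by composition with iterates of f
  have hTn : ∀ (φ : Lp ℝ p μ) (n : ℕ), ⇑((T ^ n) φ) =ᵐ[μ] fun x => φ (f^[n] x) := by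
    intro φ n
    induction n with
    | zero => simp
    | succ n ih =>
      have h1 : (T ^ (n + 1)) φ = T ((T ^ n) φ) := by
        rw [pow_succ']; rfl
      have h2 : ⇑(T ((T ^ n) φ)) =ᵐ[μ] fun x => ((T ^ n) φ) (f x) := hT _
      have h3 : (fun x => ((T ^ n) φ) (f x)) =ᵐ[μ] fun x => φ (f^[n] (f x)) := by
        have := hae 1 (⇑((T ^ n) φ)) (fun x => φ (f^[n] x)) ih
        simpa using this
      rw [h1]
      refine h2.trans (h3.trans ?_)
      filter_upwards with x
      rw [← Function.iterate_succ_apply]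
  constructor
  · -- forward direction
    rintro ⟨φ, hφ0, hφ⟩
    set g : X → ℝ := (Lp.aestronglyMeasurable φ).mk ⇑φ with hgdef
    have hg : StronglyMeasurable g := (Lp.aestronglyMeasurable φ).stronglyMeasurable_mk
    have hge : ⇑φ =ᵐ[μ] g := (Lp.aestronglyMeasurable φ).ae_eq_mk
    have hgm : Measurable g := hg.measurable
    -- find a level set of positive measure
    have hBex : ∃ m : ℕ, 0 < μ {x | ((m : ℝ≥0∞))⁻¹ ≤ (‖g x‖₊ : ℝ≥0∞)} := by
      by_contra h
      push_neg at h
      have hsub : {x | g x ≠ 0} ⊆ ⋃ m : ℕ, {x | ((m : ℝ≥0∞))⁻¹ ≤ (‖g x‖₊ : ℝ≥0∞)} := by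
        intro x hx
        have h0 : (‖g x‖₊ : ℝ≥0∞) ≠ 0 := by
          simp only [ne_eq, ENNReal.coe_eq_zero, nnnorm_eq_zero]
          exact hx
        obtain ⟨m, hm⟩ := ENNReal.exists_inv_nat_lt h0
        exact Set.mem_iUnion.2 ⟨m, hm.le⟩
      have hz : μ {x | g x ≠ 0} = 0 :=
        measure_mono_null hsub
          (measure_iUnion_null fun m => nonpos_iff_eq_zero.mp (h m))
      have hgz : g =ᵐ[μ] 0 := by
        rw [Filter.EventuallyEq, ae_iff]
        simpa using hz
      exact hφ0 (Lp.eq_zero_iff_ae_eq_zero.mpr (hge.trans hgz))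
    obtain ⟨m, hm⟩ := hBex
    set α : ℝ≥0∞ := ((m : ℝ≥0∞))⁻¹ with hαdef
    have hα0 : α ≠ 0 := ENNReal.inv_ne_zero.2 (ENNReal.natCast_ne_top m)
    set B : Set X := {x | α ≤ (‖g x‖₊ : ℝ≥0∞)} with hBdef
    have hBmeas : MeasurableSet B :=
      measurableSet_le measurable_const hgm.nnnorm.coe_nnreal_ennreal
    have hm0 : m ≠ 0 := by
      intro h
      rcases (nonempty_of_measure_ne_zero hm.ne') with ⟨x, hx⟩
      have hx' : ((m : ℝ≥0∞))⁻¹ ≤ (‖g x‖₊ : ℝ≥0∞) := hx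
      rw [h] at hx'
      simp at hx'
    have hαinv : α⁻¹ = (m : ℝ≥0∞) := by rw [hαdef, inv_inv]
    set K : ℝ≥0∞ := α⁻¹ ^ pt with hKdef
    have hK0 : K ≠ 0 := by
      rw [hKdef, hαinv]
      exact (ENNReal.rpow_pos (by exact_mod_cast Nat.pos_of_ne_zero hm0)
        (ENNReal.natCast_ne_top m)).ne'
    have hKtop : K ≠ ∞ := by
      rw [hKdef, hαinv]
      exact ENNReal.rpow_ne_top_of_nonneg hpt.le (ENNReal.natCast_ne_top m)
    -- the key Chebyshev estimate
    have key : ∀ n : ℕ, μ (f^[n] ⁻¹' B) ≤ K * eLpNorm (⇑((T ^ n) φ)) p μ ^ pt := by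
      intro n
      have hcomp : AEStronglyMeasurable (fun x => g (f^[n] x)) μ :=
        (hg.comp_measurable (hf.iterate n)).aestronglyMeasurable
      have hcheb := meas_ge_le_mul_pow_eLpNorm_enorm (μ := μ) hp0 hp hcomp hα0 (fun _ => by simp)
      have hset : {x | α ≤ ‖g (f^[n] x)‖ₑ} = f^[n] ⁻¹' B := rfl
      have hel : eLpNorm (fun x => g (f^[n] x)) p μ = eLpNorm (⇑((T ^ n) φ)) p μ :=
        eLpNorm_congr_ae ((hae n _ _ hge).symm.trans (hTn φ n).symm)
      rw [hset, hel] at hcheb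
      exact hcheb
    refine ⟨B, hBmeas, hm, ?_, ?_⟩
    · -- finiteness of μ B
      have hcheb := meas_ge_le_mul_pow_eLpNorm_enorm (μ := μ) hp0 hp hg.aestronglyMeasurable hα0 (fun _ => by simp)
      have hlt : eLpNorm g p μ < ∞ := by
        rw [eLpNorm_congr_ae hge.symm]
        exact Lp.eLpNorm_lt_top φ
      refine lt_of_le_of_lt hcheb ?_
      exact ENNReal.mul_lt_top
        (by rw [hαinv]; exact ENNReal.rpow_lt_top_of_nonneg hpt.le (ENNReal.natCast_ne_top m))
        (ENNReal.rpow_lt_top_of_nonneg hpt.le hlt.ne)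
    · -- liminf is zero
      refine le_antisymm ?_ (zero_le)
      refine ENNReal.le_of_forall_pos_le_add fun δ hδ _ => ?_
      rw [zero_add]
      have hδ0 : (δ : ℝ≥0∞) ≠ 0 := by exact_mod_cast hδ.ne'
      have hδtop : (δ : ℝ≥0∞) ≠ ∞ := ENNReal.coe_ne_top
      -- choose a suitable real ε
      obtain ⟨εr, hεr, hεrδ⟩ : ∃ εr : ℝ, 0 < εr ∧ K * (ENNReal.ofReal εr) ^ pt ≤ δ := by
        set r : ℝ≥0∞ := min (((δ : ℝ≥0∞) / K) ^ (1 / pt)) 1 with hrdef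
        have hdK0 : (δ : ℝ≥0∞) / K ≠ 0 := by
          simp [ENNReal.div_eq_zero_iff, hδ0, hKtop]
        have hdKtop : (δ : ℝ≥0∞) / K ≠ ∞ := by
          simp [ENNReal.div_eq_top, hδtop, hK0]
        have hr0 : 0 < r :=
          lt_min (ENNReal.rpow_pos (pos_iff_ne_zero.2 hdK0) hdKtop) zero_lt_one
        have hrtop : r ≠ ∞ := (lt_of_le_of_lt (min_le_right _ _) ENNReal.one_lt_top).ne
        refine ⟨r.toReal, ENNReal.toReal_pos hr0.ne' hrtop, ?_⟩
        rw [ENNReal.ofReal_toReal hrtop]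
        calc K * r ^ pt ≤ K * ((((δ : ℝ≥0∞) / K) ^ (1 / pt)) ^ pt) :=
              mul_le_mul_right (ENNReal.rpow_le_rpow (min_le_left _ _) hpt.le) _
          _ = K * ((δ : ℝ≥0∞) / K) := by
              rw [one_div, ENNReal.rpow_inv_rpow hpt.ne']
          _ = δ := ENNReal.mul_div_cancel hK0 hKtop
      have hfreq := hφ εr hεr
      refine liminf_le_of_frequently_le' (hfreq.mono fun n hn => ?_)
      have hE : eLpNorm (⇑((T ^ n) φ)) p μ < ENNReal.ofReal εr := by
        rw [ENNReal.lt_ofReal_iff_toReal_lt (Lp.eLpNorm_ne_top _)]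
        rw [← Lp.norm_def]
        exact hn
      calc μ (f^[n] ⁻¹' B) ≤ K * eLpNorm (⇑((T ^ n) φ)) p μ ^ pt := key n
        _ ≤ K * (ENNReal.ofReal εr) ^ pt :=
            mul_le_mul_right (ENNReal.rpow_le_rpow hE.le hpt.le) _
        _ ≤ δ := hεrδ
  · -- reverse direction
    rintro ⟨B, hBm, hB0, hBtop, hBlim⟩
    set φ : Lp ℝ p μ := indicatorConstLp p hBm hBtop.ne (1 : ℝ) with hφdef
    have hφind : ⇑φ =ᵐ[μ] B.indicator fun _ => (1 : ℝ) := indicatorConstLp_coeFn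
    have hφ0 : φ ≠ 0 := by
      intro h
      have h1 : B.indicator (fun _ => (1 : ℝ)) =ᵐ[μ] 0 := by
        refine (hφind.symm.trans ?_)
        rw [h]
        exact Lp.coeFn_zero ℝ p μ
      have h2 : μ B = 0 := by
        have := (Filter.EventuallyEq.symm h1)
        rw [Filter.EventuallyEq, ae_iff] at h1
        refine measure_mono_null (fun x hx => ?_) h1
        simp only [Set.mem_setOf_eq, Pi.zero_apply]
        rw [Set.indicator_of_mem hx]
        exact one_ne_zero
      exact hB0.ne' h2
    have hnorm : ∀ n : ℕ, ‖(T ^ n) φ‖ = (μ (f^[n] ⁻¹' B) ^ (1 / pt)).toReal := by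
      intro n
      have h1 : ⇑((T ^ n) φ) =ᵐ[μ] fun x => B.indicator (fun _ => (1 : ℝ)) (f^[n] x) :=
        (hTn φ n).trans (hae n _ _ hφind)
      have h2 : (fun x => B.indicator (fun _ => (1 : ℝ)) (f^[n] x)) =
          (f^[n] ⁻¹' B).indicator (fun _ => (1 : ℝ)) := by
        ext x
        by_cases hx : f^[n] x ∈ B <;> simp [Set.indicator_apply, hx]
      have h3 : eLpNorm (⇑((T ^ n) φ)) p μ = μ (f^[n] ⁻¹' B) ^ (1 / pt) := by
        rw [eLpNorm_congr_ae h1, h2,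
          eLpNorm_indicator_const ((hf.iterate n) hBm) hp0 hp]
        simp [hptdef]
      rw [Lp.norm_def, h3]
    refine ⟨φ, hφ0, fun ε hε => ?_⟩
    set δ : ℝ≥0∞ := (ENNReal.ofReal ε) ^ pt with hδdef
    have hδ0 : 0 < δ :=
      ENNReal.rpow_pos (ENNReal.ofReal_pos.2 hε) ENNReal.ofReal_ne_top
    have hfreq : ∃ᶠ n in atTop, μ (f^[n] ⁻¹' B) < δ := by
      refine frequently_lt_of_liminf_lt (by isBoundedDefault) ?_
      rw [hBlim]
      exact hδ0
    refine hfreq.mono fun n hn => ?_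
    rw [hnorm n]
    have h4 : μ (f^[n] ⁻¹' B) ^ (1 / pt) < ENNReal.ofReal ε := by
      have := ENNReal.rpow_lt_rpow hn (by positivity : (0:ℝ) < 1 / pt)
      rw [hδdef, one_div, ENNReal.rpow_rpow_inv hpt.ne'] at this
      rwa [one_div]
    exact ENNReal.toReal_lt_of_lt_ofReal h4
end
end

section
/- Assume that f is injective. If there exists B ∈ 𝓑 with 0 < μ(B) < ∞ such that liminf_{n→∞} μ(f^{-n}(B)) = 0 and liminf_{n→∞} μ(f^n(B)) = 0, then there exists a measurable set A with μ(A) > 0 such that liminf_{n→∞} μ(f^{-n}(A)) = 0 and limsup_{n→∞} μ(f^{-n}(A)) > 0. -/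
open MeasureTheory Filter Set Topology
open scoped ENNReal

noncomputable section

/-- **(LY5) ⇒ (LY6) (measure-theoretic form).** Assume `f` injective. If there is a
measurable `B` with `0 < μ(B) < ∞`, `liminf μ(f^{-n}(B)) = 0` and
`liminf μ(f^n(B)) = 0`, then there is a measurable set `A` with `μ(A) > 0`,
`liminf μ(f^{-n}(A)) = 0` and `limsup μ(f^{-n}(A)) > 0`. -/
theorem exists_set_liminf_zero_limsup_pos
    {X : Type*} [MeasurableSpace X] (μ : Measure X) (hX : μ Set.univ ≠ 0)
    (f : X → X) (hf : Measurable f)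
    (hfim : ∀ B : Set X, MeasurableSet B → MeasurableSet (f '' B))
    (c : ℝ≥0∞) (hc : 0 < c)
    (hcf : ∀ B : Set X, MeasurableSet B → c * μ B ≤ μ (f '' B))
    (hinj : Function.Injective f)
    (B : Set X) (hB : MeasurableSet B) (hB0 : 0 < μ B) (hBfin : μ B < ∞)
    (h₁ : atTop.liminf (fun n : ℕ => μ (f^[n] ⁻¹' B)) = 0)
    (h₂ : atTop.liminf (fun n : ℕ => μ (f^[n] '' B)) = 0) :
    ∃ A : Set X, MeasurableSet A ∧ 0 < μ A ∧
      atTop.liminf (fun n : ℕ => μ (f^[n] ⁻¹' A)) = 0 ∧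
      0 < atTop.limsup (fun n : ℕ => μ (f^[n] ⁻¹' A)) := by
  by_cases hls : 0 < atTop.limsup (fun n : ℕ => μ (f^[n] ⁻¹' B))
  · exact ⟨B, hB, hB0, h₁, hls⟩
  have hls0 : atTop.limsup (fun n : ℕ => μ (f^[n] ⁻¹' B)) = 0 := by
    simpa [pos_iff_ne_zero] using hls
  -- replace c by d = min c 1
  set d : ℝ≥0∞ := min c 1 with hd_def
  have hd0 : d ≠ 0 := (lt_min hc zero_lt_one).ne'
  have hd1 : d ≤ 1 := min_le_right _ _
  have hdtop : d ≠ ∞ := (lt_of_le_of_lt hd1 ENNReal.one_lt_top).ne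
  have hdf : ∀ S : Set X, MeasurableSet S → d * μ S ≤ μ (f '' S) := fun S hS =>
    le_trans (mul_le_mul_left (min_le_left c 1) (μ S)) (hcf S hS)
  -- iterated image measurability
  have hitim : ∀ (n : ℕ) (S : Set X), MeasurableSet S → MeasurableSet (f^[n] '' S) := by
    intro n
    induction n with
    | zero => intro S hS; simpa using hS
    | succ n ih =>
      intro S hS
      rw [Function.iterate_succ', Set.image_comp]
      exact hfim _ (ih S hS)
  -- growth under images
  have hgrow : ∀ (n : ℕ) (S : Set X), MeasurableSet S → d ^ n * μ S ≤ μ (f^[n] '' S) := by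
    intro n
    induction n with
    | zero => intro S hS; simp
    | succ n ih =>
      intro S hS
      rw [Function.iterate_succ', Set.image_comp, pow_succ, mul_comm (d ^ n) d, mul_assoc]
      exact le_trans (mul_le_mul_right (ih S hS) d) (hdf _ (hitim n S hS))
  -- key set identities
  have hpre_le : ∀ n m : ℕ, n ≤ m → f^[n] ⁻¹' (f^[m] '' B) = f^[m - n] '' B := by
    intro n m h
    have : f^[m] '' B = f^[n] '' (f^[m - n] '' B) := by
      rw [← Set.image_comp, ← Function.iterate_add, Nat.add_sub_cancel' h]
    rw [this, Set.preimage_image_eq _ (hinj.iterate n)]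
  have hpre_ge : ∀ n m : ℕ, m ≤ n → f^[n] ⁻¹' (f^[m] '' B) = f^[n - m] ⁻¹' B := by
    intro n m h
    have h1 : (f^[n] ⁻¹' (f^[m] '' B)) = f^[n - m] ⁻¹' (f^[m] ⁻¹' (f^[m] '' B)) := by
      rw [← Set.preimage_comp, ← Function.iterate_add, Nat.add_sub_cancel' h]
    rw [h1, Set.preimage_image_eq _ (hinj.iterate m)]
  -- the M function from limsup = 0
  have hM : ∀ j : ℕ, ∃ M : ℕ, ∀ m ≥ M, μ (f^[m] ⁻¹' B) ≤ (2⁻¹ : ℝ≥0∞) ^ (2 * j) := by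
    intro j
    have hpos : (0 : ℝ≥0∞) < 2⁻¹ ^ (2 * j) :=
      pos_iff_ne_zero.mpr (pow_ne_zero _ (by simp))
    have := eventually_lt_of_limsup_lt (by rw [hls0]; exact hpos)
    rw [eventually_atTop] at this
    obtain ⟨M, hM⟩ := this
    exact ⟨M, fun m hm => (hM m hm).le⟩
  choose M hMs using hM
  -- the recursion step
  have hstep : ∀ k t : ℕ, ∃ n, t < n ∧ μ (f^[n] '' B) < (2⁻¹ : ℝ≥0∞) ^ (k + 1) * d ^ t := by
    intro k t
    have hε : (0 : ℝ≥0∞) < 2⁻¹ ^ (k + 1) * d ^ t :=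
      pos_iff_ne_zero.mpr (mul_ne_zero (pow_ne_zero _ (by simp)) (pow_ne_zero _ hd0))
    have := frequently_lt_of_liminf_lt (by isBoundedDefault) (h₂ ▸ hε)
    rw [frequently_atTop] at this
    obtain ⟨n, hn1, hn2⟩ := this (t + 1)
    exact ⟨n, hn1, hn2⟩
  choose step hstep1 hstep2 using hstep
  -- define the times
  let N : ℕ → ℕ := fun k => Nat.rec 0 (fun k nk => step k (nk + M k + 1)) k
  let T : ℕ → ℕ := fun k => N k + M k + 1
  have hN0 : N 0 = 0 := rfl
  have hNsucc : ∀ k, T k < N (k + 1) := fun k => hstep1 k (T k)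
  have hNmeas : ∀ k, μ (f^[N (k + 1)] '' B) < (2⁻¹ : ℝ≥0∞) ^ (k + 1) * d ^ (T k) :=
    fun k => hstep2 k (T k)
  have hNT : ∀ k, N k < T k := fun k => by simp [T]
  have hNmono : StrictMono N :=
    strictMono_nat_of_lt_succ fun k => lt_trans (hNT k) (hNsucc k)
  have hTmono : StrictMono T :=
    strictMono_nat_of_lt_succ fun k => lt_trans (hNsucc k) (hNT (k + 1))
  -- the set A
  refine ⟨⋃ k, f^[N k] '' B, MeasurableSet.iUnion fun k => hitim _ B hB, ?_, ?_, ?_⟩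
  · refine lt_of_lt_of_le hB0 (measure_mono fun x hx => ?_)
    exact Set.mem_iUnion.2 ⟨0, by simpa [hN0] using Set.mem_image_of_mem f^[0] hx⟩
  · -- liminf = 0
    refine le_antisymm ?_ zero_le
    -- key estimate
    have hkey : ∀ j, μ (f^[T j] ⁻¹' ⋃ k, f^[N k] '' B) ≤ 2⁻¹ ^ j + 2⁻¹ ^ j := by
      intro j
      have hsplit : (f^[T j] ⁻¹' ⋃ k, f^[N k] '' B) =
          (⋃ k ∈ Finset.range (j + 1), f^[T j] ⁻¹' (f^[N k] '' B)) ∪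
            ⋃ i, f^[T j] ⁻¹' (f^[N (i + (j + 1))] '' B) := by
        rw [Set.preimage_iUnion]
        ext x
        simp only [Set.mem_iUnion, Set.mem_union, Finset.mem_range]
        constructor
        · rintro ⟨k, hk⟩
          rcases lt_or_ge k (j + 1) with h | h
          · exact Or.inl ⟨k, h, hk⟩
          · exact Or.inr ⟨k - (j + 1), by rwa [Nat.sub_add_cancel h]⟩
        · rintro (⟨k, _, hk⟩ | ⟨i, hi⟩)
          exacts [⟨k, hk⟩, ⟨i + (j + 1), hi⟩]
      rw [hsplit]
      refine le_trans (measure_union_le _ _) (add_le_add ?_ ?_)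
      · -- finite part
        refine le_trans (measure_biUnion_finset_le _ _) ?_
        have hterm : ∀ k ∈ Finset.range (j + 1),
            μ (f^[T j] ⁻¹' (f^[N k] '' B)) ≤ (2⁻¹ : ℝ≥0∞) ^ (2 * j) := by
          intro k hk
          rw [Finset.mem_range] at hk
          have hkj : k ≤ j := Nat.lt_succ_iff.mp hk
          have hNk : N k ≤ T j := le_trans (hNmono.monotone hkj) (hNT j).le
          rw [hpre_ge _ _ hNk]
          refine hMs j _ ?_
          have : M j ≤ T j - N j := by have := hNT j; simp [T] at *; omega
          exact le_trans this (Nat.sub_le_sub_left (hNmono.monotone hkj) _)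
        refine le_trans (Finset.sum_le_sum hterm) ?_
        rw [Finset.sum_const, Finset.card_range, nsmul_eq_mul]
        push_cast
        have h1 : ((j : ℝ≥0∞) + 1) ≤ 2 ^ j := by
          calc ((j : ℝ≥0∞) + 1) = ((j + 1 : ℕ) : ℝ≥0∞) := by push_cast; ring
          _ ≤ ((2 ^ j : ℕ) : ℝ≥0∞) := by exact_mod_cast Nat.lt_two_pow_self (n := j)
          _ = 2 ^ j := by push_cast; ring
        calc ((j : ℝ≥0∞) + 1) * 2⁻¹ ^ (2 * j) ≤ 2 ^ j * 2⁻¹ ^ (2 * j) := by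
              push_cast
              exact mul_le_mul_left h1 _
        _ = 2⁻¹ ^ j := by
              rw [two_mul, pow_add, ← mul_assoc, ← mul_pow,
                ENNReal.mul_inv_cancel two_ne_zero ENNReal.ofNat_ne_top, one_pow, one_mul]
      · -- tail part
        refine le_trans (measure_iUnion_le _) ?_
        have hterm : ∀ i : ℕ,
            μ (f^[T j] ⁻¹' (f^[N (i + (j + 1))] '' B)) ≤ (2⁻¹ : ℝ≥0∞) ^ (i + (j + 1)) := by
          intro i
          set k := i + (j + 1) with hk_def
          have hTk : T j ≤ N k := by
            have h1 : j + 1 ≤ k := by omega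
            exact le_trans (hNsucc j).le (hNmono.monotone h1)
          rw [hpre_le _ _ hTk]
          -- cancel d ^ (T j)
          have hcomp : f^[T j] '' (f^[N k - T j] '' B) = f^[N k] '' B := by
            rw [← Set.image_comp, ← Function.iterate_add, Nat.add_sub_cancel' hTk]
          have h2 : d ^ (T j) * μ (f^[N k - T j] '' B) ≤ μ (f^[N k] '' B) := by
            rw [← hcomp]
            exact hgrow _ _ (hitim _ B hB)
          have h3 : μ (f^[N k] '' B) ≤ (2⁻¹ : ℝ≥0∞) ^ k * d ^ (T j) := by
            have hk1 : k = (i + j) + 1 := by omega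
            have := (hNmeas (i + j)).le
            rw [← hk1] at this
            refine le_trans this (mul_le_mul_right ?_ _)
            exact pow_le_pow_of_le_one zero_le hd1 (hTmono.monotone (by omega))
          have h4 : d ^ (T j) * μ (f^[N k - T j] '' B) ≤ d ^ (T j) * (2⁻¹ : ℝ≥0∞) ^ k :=
            le_trans h2 (by rw [mul_comm]; exact h3)
          exact (ENNReal.mul_le_mul_iff_right (pow_ne_zero _ hd0) (ENNReal.pow_ne_top hdtop)).mp h4
        refine le_trans (ENNReal.tsum_le_tsum hterm) ?_
        rw [show ∑' i : ℕ, (2⁻¹ : ℝ≥0∞) ^ (i + (j + 1)) = 2⁻¹ ^ j from ?_]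
        · simp_rw [pow_add]
          rw [ENNReal.tsum_mul_right, ENNReal.tsum_geometric, pow_succ]
          norm_num
          rw [mul_left_comm, ENNReal.mul_inv_cancel two_ne_zero ENNReal.ofNat_ne_top, mul_one]
    -- conclude liminf ≤ 0
    refine ENNReal.le_of_forall_pos_le_add fun ε hε _ => ?_
    rw [zero_add]
    obtain ⟨j₁, hj₁⟩ := ENNReal.exists_inv_two_pow_lt (by exact_mod_cast hε.ne' : (ε : ℝ≥0∞) ≠ 0)
    refine liminf_le_of_frequently_le ?_
    rw [frequently_atTop]
    intro m
    refine ⟨T (max m (j₁ + 1)), le_trans (le_max_left m _) (hTmono.le_apply), ?_⟩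
    refine le_trans (hkey _) ?_
    have hmono : (2⁻¹ : ℝ≥0∞) ^ (max m (j₁ + 1)) ≤ 2⁻¹ ^ (j₁ + 1) :=
      pow_le_pow_of_le_one zero_le (by norm_num) (le_max_right m _)
    calc (2⁻¹ : ℝ≥0∞) ^ (max m (j₁ + 1)) + 2⁻¹ ^ (max m (j₁ + 1))
        ≤ 2⁻¹ ^ (j₁ + 1) + 2⁻¹ ^ (j₁ + 1) := add_le_add hmono hmono
      _ = 2⁻¹ ^ j₁ := by
          rw [pow_succ, ← mul_add, mul_comm, ← two_mul,
            ENNReal.mul_inv_cancel two_ne_zero ENNReal.ofNat_ne_top, one_mul]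
      _ ≤ ε := hj₁.le
  · -- limsup > 0
    refine lt_of_lt_of_le hB0 (le_limsup_of_frequently_le ?_)
    rw [frequently_atTop]
    intro m
    refine ⟨N m, hNmono.le_apply, measure_mono ?_⟩
    intro x hx
    exact Set.mem_preimage.mpr (Set.mem_iUnion.2 ⟨m, Set.mem_image_of_mem _ hx⟩)
end
end

section
/- Assume that μ is a finite measure and that f is injective. If there exists B ∈ 𝓑 with μ(B) > 0 and liminf_{n→∞} μ(f^{-n}(B)) = 0, then there exists a measurable set W ⊆ B with μ(W) > 0 and liminf_{n→∞} μ(f^n(W)) = 0. -/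
open MeasureTheory Filter Set Topology
open scoped ENNReal

noncomputable section

/-- **(LY3) ⇒ (LY4) (measure-theoretic form).** Assume `μ` finite and `f` injective.
If there is a measurable `B` with `μ(B) > 0` and `liminf μ(f^{-n}(B)) = 0`, then there is
a measurable `W ⊆ B` with `μ(W) > 0` and `liminf μ(f^n(W)) = 0`. -/
theorem exists_subset_liminf_image_zero
    {X : Type*} [MeasurableSpace X] (μ : Measure X) (hX : μ Set.univ ≠ 0)
    [IsFiniteMeasure μ]
    (f : X → X) (hf : Measurable f)
    (hfim : ∀ B : Set X, MeasurableSet B → MeasurableSet (f '' B))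
    (c : ℝ≥0∞) (hc : 0 < c)
    (hcf : ∀ B : Set X, MeasurableSet B → c * μ B ≤ μ (f '' B))
    (hinj : Function.Injective f)
    (B : Set X) (hB : MeasurableSet B) (hB0 : 0 < μ B)
    (h : atTop.liminf (fun n : ℕ => μ (f^[n] ⁻¹' B)) = 0) :
    ∃ W : Set X, W ⊆ B ∧ MeasurableSet W ∧ 0 < μ W ∧
      atTop.liminf (fun n : ℕ => μ (f^[n] '' W)) = 0 := by
  classical
  have hμB_ne_top : μ B ≠ ⊤ := measure_ne_top μ B
  have hμuniv_ne_top : μ (Set.univ : Set X) ≠ ⊤ := measure_ne_top μ _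
  -- `c ≤ 1`
  have hc_le_one : c ≤ 1 := by
    have h1 : c * μ Set.univ ≤ 1 * μ Set.univ := by
      rw [one_mul]
      exact (hcf Set.univ MeasurableSet.univ).trans (measure_mono (Set.subset_univ _))
    exact (ENNReal.mul_le_mul_iff_left hX hμuniv_ne_top).mp h1
  have hc_ne_top : c ≠ ⊤ := (hc_le_one.trans_lt ENNReal.one_lt_top).ne
  -- measurability of iterated preimages and images
  have hpre_meas : ∀ (n : ℕ) (S : Set X), MeasurableSet S → MeasurableSet (f^[n] ⁻¹' S) :=
    fun n S hS => (hf.iterate n) hS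
  have him : ∀ (n : ℕ) (S : Set X), MeasurableSet S → MeasurableSet (f^[n] '' S) := by
    intro n
    induction n with
    | zero => intro S hS; simpa using hS
    | succ n ih =>
        intro S hS
        rw [Function.iterate_succ', Set.image_comp]
        exact hfim _ (ih S hS)
  -- the basic contraction inequality for preimages
  have hstep1 : ∀ (T : Set X), MeasurableSet T → c * μ (f ⁻¹' T) ≤ μ T := by
    intro T hT
    exact (hcf _ (hf hT)).trans (measure_mono (Set.image_preimage_subset f T))
  have key : ∀ (S : Set X), MeasurableSet S → ∀ (n d : ℕ),
      c ^ d * μ (f^[n + d] ⁻¹' S) ≤ μ (f^[n] ⁻¹' S) := by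
    intro S hS n d
    induction d with
    | zero => simp
    | succ d ih =>
        have hrw : f^[n + (d + 1)] ⁻¹' S = f ⁻¹' (f^[n + d] ⁻¹' S) := by
          rw [show n + (d + 1) = (n + d) + 1 from rfl, Function.iterate_succ]
          rfl
        calc c ^ (d + 1) * μ (f^[n + (d + 1)] ⁻¹' S)
            = c ^ d * (c * μ (f ⁻¹' (f^[n + d] ⁻¹' S))) := by rw [hrw, pow_succ]; ring
          _ ≤ c ^ d * μ (f^[n + d] ⁻¹' S) :=
              mul_le_mul_right (hstep1 _ (hpre_meas (n + d) S hS)) _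
          _ ≤ μ (f^[n] ⁻¹' S) := ih
  -- from the liminf hypothesis: arbitrarily large `n` with small preimage measure
  have exists_good : ∀ (S : Set X), S ⊆ B → ∀ θ : ℝ≥0∞, 0 < θ →
      ∃ n : ℕ, 1 ≤ n ∧ μ (f^[n] ⁻¹' S) < θ := by
    intro S hSB θ hθ
    have hlim : Filter.liminf (fun n : ℕ => μ (f^[n] ⁻¹' S)) Filter.atTop < θ := by
      have hle : Filter.liminf (fun n : ℕ => μ (f^[n] ⁻¹' S)) Filter.atTop ≤ 0 := by
        rw [← h]
        exact Filter.liminf_le_liminf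
          (Filter.Eventually.of_forall fun n => measure_mono (Set.preimage_mono hSB))
      exact hle.trans_lt hθ
    obtain ⟨n, hn1, hn⟩ := Filter.frequently_atTop.mp (Filter.frequently_lt_of_liminf_lt (by isBoundedDefault) hlim) 1
    exact ⟨n, hn1, hn⟩
  -- the invariant carried along the recursive construction
  set Inv : ℕ × Set X → Prop := fun s => MeasurableSet s.2 ∧ s.2 ⊆ B with hInvdef
  -- one step of the construction
  have hstep : ∀ (j : ℕ) (s : ℕ × Set X), Inv s → ∃ s' : ℕ × Set X, Inv s' ∧
      (s.1 + 1 ≤ s'.1 ∧ s'.2 ⊆ s.2 ∧ μ (s.2 \ s'.2) ≤ μ B * 2⁻¹ ^ (j + 2) ∧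
        ∀ e : ℕ, s'.1 - s.1 ≤ e → e ≤ s'.1 → s'.2 ∩ f^[e] ⁻¹' s.2 = ∅) := by
    rintro j ⟨T, W⟩ ⟨hWm, hWB⟩
    set η : ℝ≥0∞ := μ B * 2⁻¹ ^ (j + 2) * ((T : ℝ≥0∞) + 1)⁻¹ with hηdef
    have hT1_ne_zero : ((T : ℝ≥0∞) + 1) ≠ 0 :=
      (lt_of_lt_of_le zero_lt_one (le_add_self : (1 : ℝ≥0∞) ≤ (T : ℝ≥0∞) + 1)).ne'
    have hT1_ne_top : ((T : ℝ≥0∞) + 1) ≠ ⊤ := by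
      exact ENNReal.add_ne_top.mpr ⟨ENNReal.natCast_ne_top T, ENNReal.one_ne_top⟩
    have hη0 : 0 < η := by
      rw [hηdef]
      refine ENNReal.mul_pos (ENNReal.mul_pos hB0.ne' ?_).ne' ?_
      · exact (ENNReal.pow_pos (ENNReal.inv_pos.mpr ENNReal.ofNat_ne_top) _).ne'
      · exact (ENNReal.inv_pos.mpr hT1_ne_top).ne'
    have hθ0 : 0 < c ^ T * η := ENNReal.mul_pos (ENNReal.pow_ne_zero hc.ne' T) hη0.ne'
    obtain ⟨n, hn1, hn⟩ := exists_good W hWB (c ^ T * η) hθ0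
    -- each of the removed sets is small
    have hsmall : ∀ d : ℕ, d ≤ T → μ (f^[n + d] ⁻¹' W) < η := by
      intro d hd
      have h1 : c ^ d * μ (f^[n + d] ⁻¹' W) ≤ μ (f^[n] ⁻¹' W) := key W hWm n d
      have h3 : c ^ T ≤ c ^ d := by
        have : c ^ T = c ^ d * c ^ (T - d) := by
          rw [← pow_add, Nat.add_sub_cancel' hd]
        rw [this]
        calc c ^ d * c ^ (T - d) ≤ c ^ d * 1 :=
              mul_le_mul_right (pow_le_one' hc_le_one _) _
          _ = c ^ d := mul_one _
      have h4 : c ^ d * μ (f^[n + d] ⁻¹' W) < c ^ d * η :=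
        h1.trans_lt (hn.trans_le (mul_le_mul_left h3 η))
      exact (ENNReal.mul_lt_mul_iff_right (ENNReal.pow_ne_zero hc.ne' d)
        (ENNReal.pow_ne_top hc_ne_top)).mp h4
    refine ⟨(T + n, W \ ⋃ d ∈ Finset.range (T + 1), f^[n + d] ⁻¹' W), ⟨?_, ?_⟩, ?_, ?_, ?_, ?_⟩
    · exact hWm.diff (MeasurableSet.biUnion (Finset.range (T + 1)).countable_toSet
        (fun d _ => hpre_meas (n + d) W hWm))
    · exact Set.diff_subset.trans hWB
    · simpa using hn1
    · exact Set.diff_subset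
    · -- measure of the removed part
      have hsub : W \ (W \ ⋃ d ∈ Finset.range (T + 1), f^[n + d] ⁻¹' W) ⊆
          ⋃ d ∈ Finset.range (T + 1), f^[n + d] ⁻¹' W := by
        intro x hx
        by_contra hxU
        exact hx.2 ⟨hx.1, hxU⟩
      calc μ (W \ (W \ ⋃ d ∈ Finset.range (T + 1), f^[n + d] ⁻¹' W))
          ≤ μ (⋃ d ∈ Finset.range (T + 1), f^[n + d] ⁻¹' W) := measure_mono hsub
        _ ≤ ∑ d ∈ Finset.range (T + 1), μ (f^[n + d] ⁻¹' W) :=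
            measure_biUnion_finset_le _ _
        _ ≤ ∑ _d ∈ Finset.range (T + 1), η := by
            refine Finset.sum_le_sum fun d hd => ?_
            exact (hsmall d (Nat.lt_succ_iff.mp (Finset.mem_range.mp hd))).le
        _ = ((T : ℝ≥0∞) + 1) * η := by
            rw [Finset.sum_const, Finset.card_range, nsmul_eq_mul]
            push_cast
            ring
        _ = μ B * 2⁻¹ ^ (j + 2) * (((T : ℝ≥0∞) + 1) * ((T : ℝ≥0∞) + 1)⁻¹) := by
            rw [hηdef]; ring
        _ = μ B * 2⁻¹ ^ (j + 2) := by
            rw [ENNReal.mul_inv_cancel hT1_ne_zero hT1_ne_top, mul_one]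
    · -- the new set misses the preimages at exponents between `n` and `T + n`
      intro e he1 he2
      have hTn : (T + n) - T = n := by omega
      rw [hTn] at he1
      have hd : e - n ≤ T := by omega
      have he : n + (e - n) = e := by omega
      apply Set.eq_empty_iff_forall_notMem.mpr
      rintro x ⟨hx1, hx2⟩
      apply hx1.2
      refine Set.mem_biUnion (Finset.mem_range.mpr (Nat.lt_succ_iff.mpr hd)) ?_
      rw [he]
      exact hx2
  -- build the chain by recursion and choice
  choose F hF using hstep
  let chain : ℕ → {s : ℕ × Set X // Inv s} := fun k =>
    Nat.rec ⟨(0, B), ⟨hB, subset_rfl⟩⟩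
      (fun j ih => ⟨F j ih.1 ih.2, (hF j ih.1 ih.2).1⟩) k
  set TT : ℕ → ℕ := fun k => (chain k).1.1 with hTTdef
  set WW : ℕ → Set X := fun k => (chain k).1.2 with hWWdef
  have hchain0T : TT 0 = 0 := rfl
  have hchain0W : WW 0 = B := rfl
  have spec : ∀ j : ℕ, TT j + 1 ≤ TT (j + 1) ∧ WW (j + 1) ⊆ WW j ∧
      μ (WW j \ WW (j + 1)) ≤ μ B * 2⁻¹ ^ (j + 2) ∧
      ∀ e : ℕ, TT (j + 1) - TT j ≤ e → e ≤ TT (j + 1) → WW (j + 1) ∩ f^[e] ⁻¹' (WW j) = ∅ :=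
    fun j => (hF j (chain j).1 (chain j).2).2
  have hWWm : ∀ k, MeasurableSet (WW k) := fun k => (chain k).2.1
  have hWWB : ∀ k, WW k ⊆ B := fun k => (chain k).2.2
  have hTmono : StrictMono TT :=
    strictMono_nat_of_lt_succ fun j => Nat.lt_of_succ_le (spec j).1
  have hWanti : Antitone WW := antitone_nat_of_succ_le fun j => (spec j).2.1
  -- the final set
  set W : Set X := ⋂ k, WW k with hWdef
  have hWm : MeasurableSet W := MeasurableSet.iInter fun k => hWWm k
  have hWB : W ⊆ B := (Set.iInter_subset WW 0).trans (by rw [hchain0W])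
  -- measure bound on `B \ W`
  have hBWsub : B \ W ⊆ ⋃ j, (WW j \ WW (j + 1)) := by
    intro x hx
    have hex : ∃ j, x ∉ WW j := by
      by_contra hcon
      push_neg at hcon
      exact hx.2 (Set.mem_iInter.mpr hcon)
    set j0 := Nat.find hex with hj0def
    have hj0 : x ∉ WW j0 := Nat.find_spec hex
    have hj0ne : j0 ≠ 0 := by
      intro h0
      rw [h0, hchain0W] at hj0
      exact hj0 hx.1
    obtain ⟨m, hm⟩ := Nat.exists_eq_succ_of_ne_zero hj0ne
    have hxm : x ∈ WW m := by
      by_contra hxm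
      exact (Nat.find_min hex (by omega : m < j0)) hxm
    refine Set.mem_iUnion.mpr ⟨m, hxm, fun hcc => hj0 ?_⟩
    rw [hm]
    exact hcc
  have hBW : μ (B \ W) ≤ μ B * 2⁻¹ := by
    calc μ (B \ W) ≤ ∑' j : ℕ, μ (WW j \ WW (j + 1)) :=
          (measure_mono hBWsub).trans (measure_iUnion_le _)
      _ ≤ ∑' j : ℕ, μ B * 2⁻¹ ^ (j + 2) := ENNReal.tsum_le_tsum fun j => (spec j).2.2.1
      _ = μ B * 2⁻¹ ^ 2 * ∑' j : ℕ, 2⁻¹ ^ j := by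
          rw [← ENNReal.tsum_mul_left]
          congr 1
          ext j
          rw [show j + 2 = 2 + j from by omega, pow_add]
          ring
      _ = μ B * 2⁻¹ := by
          rw [ENNReal.tsum_geometric, ENNReal.one_sub_inv_two, inv_inv]
          have h2 : (2 : ℝ≥0∞)⁻¹ ^ 2 * 2 = 2⁻¹ := by
            rw [sq, mul_assoc, ENNReal.inv_mul_cancel two_ne_zero ENNReal.ofNat_ne_top, mul_one]
          rw [mul_assoc, h2]
  -- `W` has positive measure
  have hW0 : 0 < μ W := by
    rcases eq_or_ne (μ W) 0 with h0 | h0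
    · exfalso
      have hhalf : μ B * 2⁻¹ < μ B := by
        have := ENNReal.half_lt_self hB0.ne' hμB_ne_top
        rwa [div_eq_mul_inv] at this
      have : μ B ≤ μ B * 2⁻¹ := by
        calc μ B ≤ μ (W ∪ (B \ W)) := measure_mono (fun x hx => by
              by_cases hxW : x ∈ W
              · exact Or.inl hxW
              · exact Or.inr ⟨hx, hxW⟩)
          _ ≤ μ W + μ (B \ W) := measure_union_le _ _
          _ = μ (B \ W) := by rw [h0, zero_add]
          _ ≤ μ B * 2⁻¹ := hBW
      exact absurd this (not_le.mpr hhalf)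
    · exact pos_iff_ne_zero.mpr h0
  -- key disjointness of `W` from its own preimages at the difference times
  have hWdisj : ∀ i k : ℕ, i < k → W ∩ f^[TT k - TT i] ⁻¹' W = ∅ := by
    intro i k hik
    obtain ⟨m, hm⟩ := Nat.exists_eq_succ_of_ne_zero (by omega : k ≠ 0)
    subst hm
    have him' : i ≤ m := by omega
    have h1 : TT (m + 1) - TT m ≤ TT (m + 1) - TT i :=
      Nat.sub_le_sub_left (hTmono.monotone him') _
    have h2 : TT (m + 1) - TT i ≤ TT (m + 1) := Nat.sub_le _ _
    have h3 := (spec m).2.2.2 (TT (m + 1) - TT i) h1 h2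
    apply Set.eq_empty_iff_forall_notMem.mpr
    rintro x ⟨hx1, hx2⟩
    have : x ∈ WW (m + 1) ∩ f^[TT (m + 1) - TT i] ⁻¹' (WW m) :=
      ⟨Set.iInter_subset WW (m + 1) hx1,
        Set.preimage_mono (Set.iInter_subset WW m) hx2⟩
    rw [h3] at this
    exact this
  -- hence the images along the times `TT k` are pairwise disjoint
  have hdisjpair : ∀ i k : ℕ, i < k → Disjoint (f^[TT i] '' W) (f^[TT k] '' W) := by
    intro i k hik
    rw [Set.disjoint_left]
    rintro a ⟨x, hx, rfl⟩ ⟨y, hy, hxy⟩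
    have hle : TT i ≤ TT k := (hTmono hik).le
    have : f^[TT i] (f^[TT k - TT i] y) = f^[TT i] x := by
      rw [← Function.iterate_add_apply, Nat.add_sub_cancel' hle]
      exact hxy
    have hxeq : f^[TT k - TT i] y = x := (hinj.iterate (TT i)) this
    have : y ∈ W ∩ f^[TT k - TT i] ⁻¹' W := ⟨hy, by rw [Set.mem_preimage, hxeq]; exact hx⟩
    rw [hWdisj i k hik] at this
    exact this
  have hpairwise : Pairwise (Function.onFun Disjoint fun k => f^[TT k] '' W) := by
    intro i k hik
    rcases hik.lt_or_gt with hlt | hlt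
    · exact hdisjpair i k hlt
    · exact (hdisjpair k i hlt).symm
  -- summability forces the image measures along `TT` to tend to zero
  have hsum : ∑' k : ℕ, μ (f^[TT k] '' W) ≠ ⊤ := by
    rw [← measure_iUnion hpairwise (fun k => him (TT k) W hWm)]
    exact ((measure_mono (Set.subset_univ _)).trans_lt
      (lt_of_le_of_ne le_top hμuniv_ne_top)).ne
  have htend : Filter.Tendsto (fun k => μ (f^[TT k] '' W)) Filter.atTop (𝓝 0) :=
    ENNReal.tendsto_atTop_zero_of_tsum_ne_top hsum
  -- conclude the liminf is zero
  refine ⟨W, hWB, hWm, hW0, ?_⟩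
  have hfreq : ∀ ε : ℝ≥0∞, 0 < ε → ∃ᶠ n in Filter.atTop, μ (f^[n] '' W) < ε := by
    intro ε hε
    have hev : ∀ᶠ k in Filter.atTop, μ (f^[TT k] '' W) < ε :=
      htend.eventually_lt_const hε
    rw [Filter.frequently_atTop]
    intro N
    obtain ⟨K, hK⟩ := Filter.eventually_atTop.mp hev
    refine ⟨TT (max N K), ?_, hK (max N K) (le_max_right N K)⟩
    exact le_trans (le_max_left N K) (hTmono.le_apply)
  have hliminf_le : ∀ ε : ℝ≥0∞, 0 < ε →
      Filter.liminf (fun n : ℕ => μ (f^[n] '' W)) Filter.atTop ≤ ε := by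
    intro ε hε
    exact Filter.liminf_le_of_frequently_le ((hfreq ε hε).mono fun n hn => hn.le)
  by_contra hne
  have hpos : 0 < Filter.liminf (fun n : ℕ => μ (f^[n] '' W)) Filter.atTop :=
    pos_iff_ne_zero.mpr hne
  have h1 : Filter.liminf (fun n : ℕ => μ (f^[n] '' W)) Filter.atTop ≤ 1 :=
    hliminf_le 1 one_pos
  have hne_top : Filter.liminf (fun n : ℕ => μ (f^[n] '' W)) Filter.atTop ≠ ⊤ :=
    (h1.trans_lt ENNReal.one_lt_top).ne
  have hhalf := ENNReal.half_lt_self hne hne_top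
  have := hliminf_le _ (ENNReal.half_pos hne)
  exact absurd this (not_le.mpr hhalf)
end
end
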